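/- arXiv:2507.19866 — 7 statements merged into one kernel-verified Lean document; each statement's English description precedes it below -/
import Mathlib

section
/- Let N ≥ 2 be an integer, A := (N²/(N−1))^{N−1}, and let M > A. Suppose T ∈ (0,∞], and U : [0,1]×[0,T) → ℝ is continuous with U(·,t) ∈ C¹([0,1]) for every t, U is C^{2,1} on (0,1]×(0,T) (i.e. U, U_ξ, U_{ξξ}, U_t exist and are continuous there), U satisfies U_t = N² ξ^{2−2/N} U_{ξξ} + N ξ^{1−2/N} U^{1/(N−1)} U_ξ for all (ξ,t) ∈ (0,1)×(0,T), U(0,t) = 0 and U(1,t) = M for all t ∈ (0,T), and U(ξ,t) > 0, U_ξ(ξ,t) > 0 for all (ξ,t) ∈ (0,1]×(0,T). Then T ≤ T⋆ := (1/(2N))·((M/A)^{1/(N−1)} − 1)^{−1}. In particular, no such solution exists on [0,∞). -/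
open Set MeasureTheory intervalIntegral

lemma fubini_cont {f : ℝ → ℝ → ℝ} {a b c d : ℝ} (hab : a ≤ b) (hcd : c ≤ d)
    (hf : ContinuousOn (fun p : ℝ × ℝ => f p.1 p.2) (Icc a b ×ˢ Icc c d)) :
    (∫ x in a..b, ∫ y in c..d, f x y) = ∫ y in c..d, ∫ x in a..b, f x y := by
  have hint : Integrable (Function.uncurry f)
      ((volume.restrict (Ioc a b)).prod (volume.restrict (Ioc c d))) := by
    rw [Measure.prod_restrict, ← Measure.volume_eq_prod]
    exact ((hf.integrableOn_compact (isCompact_Icc.prod isCompact_Icc)).mono_set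
      (prod_mono Ioc_subset_Icc_self Ioc_subset_Icc_self))
  have := MeasureTheory.integral_integral_swap hint
  simp only [intervalIntegral.integral_of_le hab, intervalIntegral.integral_of_le hcd]
  exact this

lemma fubini_cont_integrable {f : ℝ → ℝ → ℝ} {a b c d : ℝ} (hab : a ≤ b) (hcd : c ≤ d)
    (hf : ContinuousOn (fun p : ℝ × ℝ => f p.1 p.2) (Icc a b ×ˢ Icc c d)) :
    IntervalIntegrable (fun x => ∫ y in c..d, f x y) volume a b := by
  have hint : Integrable (Function.uncurry f)
      ((volume.restrict (Ioc a b)).prod (volume.restrict (Ioc c d))) := by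
    rw [Measure.prod_restrict, ← Measure.volume_eq_prod]
    exact ((hf.integrableOn_compact (isCompact_Icc.prod isCompact_Icc)).mono_set
      (prod_mono Ioc_subset_Icc_self Ioc_subset_Icc_self))
  have h2 := hint.integral_prod_left
  rw [intervalIntegrable_iff_integrableOn_Ioc_of_le hab]
  have : (fun x => ∫ y in c..d, f x y)
      = fun x => ∫ y, Function.uncurry f (x, y) ∂(volume.restrict (Ioc c d)) := by
    funext x; rw [intervalIntegral.integral_of_le hcd]; rfl
  rw [this]
  exact h2

set_option maxHeartbeats 2000000 in
/-- **Finite-time blow-up for supercritical mass (scalar accumulated-density form).**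
Let `N ≥ 2`, `A = (N²/(N−1))^(N−1)`, `M > A`.  If `U` is a solution of the
degenerate parabolic problem `U_t = N² ξ^{2−2/N} U_{ξξ} + N ξ^{1−2/N} U^{1/(N−1)} U_ξ`
on `(0,1)×(0,T)` with `U(0,t)=0`, `U(1,t)=M`, `U, U_ξ > 0` on `(0,1]×(0,T)`, and the
stated regularity, then `T ≤ T⋆ = (1/(2N))((M/A)^{1/(N−1)} − 1)⁻¹`. -/
theorem finite_time_blowup_supercritical
    (N : ℕ) (hN : 2 ≤ N)
    (A : ℝ) (hA : A = ((N : ℝ) ^ 2 / ((N : ℝ) - 1)) ^ (N - 1))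
    (M : ℝ) (hM : A < M)
    (T : EReal) (hT : 0 < T)
    (U Uξ Uξξ Ut : ℝ → ℝ → ℝ)
    (hcont : ContinuousOn (fun p : ℝ × ℝ => U p.1 p.2)
      (Icc 0 1 ×ˢ {t : ℝ | 0 ≤ t ∧ (t : EReal) < T}))
    (hC1 : ∀ t : ℝ, 0 ≤ t → (t : EReal) < T →
      (∀ ξ ∈ Icc (0:ℝ) 1, HasDerivWithinAt (fun s => U s t) (Uξ ξ t) (Icc 0 1) ξ) ∧
      ContinuousOn (fun ξ => Uξ ξ t) (Icc 0 1))
    (hC21 : ∀ ξ ∈ Ioc (0:ℝ) 1, ∀ t : ℝ, 0 < t → (t : EReal) < T →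
      HasDerivWithinAt (fun s => Uξ s t) (Uξξ ξ t) (Ioc 0 1) ξ ∧
      HasDerivAt (fun τ => U ξ τ) (Ut ξ t) t)
    (hUξcont : ContinuousOn (fun p : ℝ × ℝ => Uξ p.1 p.2)
      (Ioc 0 1 ×ˢ {t : ℝ | 0 < t ∧ (t : EReal) < T}))
    (hUξξcont : ContinuousOn (fun p : ℝ × ℝ => Uξξ p.1 p.2)
      (Ioc 0 1 ×ˢ {t : ℝ | 0 < t ∧ (t : EReal) < T}))
    (hUtcont : ContinuousOn (fun p : ℝ × ℝ => Ut p.1 p.2)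
      (Ioc 0 1 ×ˢ {t : ℝ | 0 < t ∧ (t : EReal) < T}))
    (hPDE : ∀ ξ ∈ Ioo (0:ℝ) 1, ∀ t : ℝ, 0 < t → (t : EReal) < T →
      Ut ξ t = (N : ℝ) ^ 2 * ξ ^ ((2 : ℝ) - 2 / N) * Uξξ ξ t
        + (N : ℝ) * ξ ^ ((1 : ℝ) - 2 / N) * (U ξ t) ^ ((1 : ℝ) / ((N : ℝ) - 1)) * Uξ ξ t)
    (hbc0 : ∀ t : ℝ, 0 < t → (t : EReal) < T → U 0 t = 0)
    (hbc1 : ∀ t : ℝ, 0 < t → (t : EReal) < T → U 1 t = M)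
    (hpos : ∀ ξ ∈ Ioc (0:ℝ) 1, ∀ t : ℝ, 0 < t → (t : EReal) < T →
      0 < U ξ t ∧ 0 < Uξ ξ t) :
    T ≤ ((1 / (2 * (N : ℝ)) * ((M / A) ^ ((1 : ℝ) / ((N : ℝ) - 1)) - 1)⁻¹ : ℝ) : EReal) := by
  set Nr : ℝ := (N : ℝ) with hNrdef
  have hNr : (2:ℝ) ≤ Nr := by rw [hNrdef]; exact_mod_cast hN
  have hNr0 : 0 < Nr := by linarith
  have hN1 : 0 < Nr - 1 := by linarith
  have hB : 0 < Nr ^ 2 / (Nr - 1) := by positivity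
  have hA0 : 0 < A := by rw [hA]; positivity
  have hM0 : 0 < M := lt_trans hA0 hM
  set q : ℝ := 1 / (Nr - 1) with hqdef
  set p : ℝ := Nr / (Nr - 1) with hpdef
  have hq0 : 0 < q := by positivity
  have hp1 : 1 ≤ p := by rw [hpdef, le_div_iff₀ hN1]; linarith
  have hpq : p - 1 = q := by rw [hpdef, hqdef]; field_simp; ring
  have hcast : ((N - 1 : ℕ) : ℝ) = Nr - 1 := by
    rw [Nat.cast_sub (by omega : 1 ≤ N)]; simp [hNrdef]
  have hAq : A ^ q = Nr ^ 2 / (Nr - 1) := by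
    rw [hA, ← Real.rpow_natCast (Nr ^ 2 / (Nr - 1)) (N - 1), ← Real.rpow_mul hB.le, hcast,
      hqdef]
    rw [mul_one_div, div_self (by linarith : Nr - 1 ≠ 0), Real.rpow_one]
  have hMp : M ^ p = M * M ^ q := by
    have : p = 1 + q := by linarith
    rw [this, Real.rpow_add hM0, Real.rpow_one]
  set lam : ℝ := (M / A) ^ q - 1 with hlamdef
  have hMA1 : 1 < M / A := (one_lt_div hA0).2 hM
  have hlam : 0 < lam := by
    have : 1 < (M / A) ^ q := by
      rw [Real.one_lt_rpow_iff_of_pos (by positivity)]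
      exact Or.inl ⟨hMA1, hq0⟩
    simp [hlamdef]; linarith
  have hdivrpow : (M / A) ^ q = M ^ q / (A ^ q) := Real.div_rpow hM0.le hA0.le q
  set C₁ : ℝ := Nr ^ 2 * M * lam with hC₁def
  have hC₁ : 0 < C₁ := by positivity
  have hC₁eq : C₁ = (Nr - 1) * M ^ p - Nr ^ 2 * M := by
    rw [hC₁def, hlamdef, hdivrpow, hAq, hMp]; field_simp
  have hNp : (Nr - 1) * p = Nr := by
    rw [hpdef]; field_simp
  clear_value q p lam
  -- the weight and the flux function
  set w : ℝ → ℝ := fun ξ => ξ ^ (2 / Nr - 1) with hwdef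
  set G : ℝ → ℝ → ℝ :=
    fun ξ t => Nr ^ 2 * ξ * Uξ ξ t - Nr ^ 2 * U ξ t + (Nr - 1) * (U ξ t) ^ p with hGdef
  -- membership helpers
  set S : Set ℝ := {t : ℝ | 0 < t ∧ (t : EReal) < T} with hSdef
  have hSsub : ∀ t ∈ S, (0:ℝ) ≤ t ∧ (t : EReal) < T := fun t ht => ⟨ht.1.le, ht.2⟩
  -- bounds on U
  have hUbdd : ∀ t ∈ S, ∀ ξ ∈ Icc (0:ℝ) 1, 0 ≤ U ξ t ∧ U ξ t ≤ M := by
    intro t ht ξ hξ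
    obtain ⟨hd, hdc⟩ := hC1 t ht.1.le ht.2
    have hcontU : ContinuousOn (fun s => U s t) (Icc 0 1) :=
      fun x hx => (hd x hx).continuousWithinAt
    have hmono : MonotoneOn (fun s => U s t) (Icc 0 1) := by
      apply monotoneOn_of_deriv_nonneg (convex_Icc 0 1) hcontU
      · intro x hx
        rw [interior_Icc] at hx
        exact ((hd x (Ioo_subset_Icc_self hx)).hasDerivAt
          (Icc_mem_nhds hx.1 hx.2)).differentiableAt.differentiableWithinAt
      · intro x hx
        rw [interior_Icc] at hx
        have hda := (hd x (Ioo_subset_Icc_self hx)).hasDerivAt (Icc_mem_nhds hx.1 hx.2)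
        rw [hda.deriv]
        exact (hpos x ⟨hx.1, hx.2.le⟩ t ht.1 ht.2).2.le
    have h0 : U 0 t = 0 := hbc0 t ht.1 ht.2
    have h1 : U 1 t = M := hbc1 t ht.1 ht.2
    constructor
    · have := hmono (show (0:ℝ) ∈ Icc (0:ℝ) 1 by simp) hξ hξ.1
      simpa [h0] using this
    · have := hmono hξ (show (1:ℝ) ∈ Icc (0:ℝ) 1 by simp) hξ.2
      simpa [h1] using this
  -- derivative of G in ξ
  have hGderiv : ∀ t ∈ S, ∀ x ∈ Ioo (0:ℝ) 1,
      HasDerivAt (fun ξ => G ξ t) (w x * Ut x t) x := by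
    intro t ht x hx
    have hxI : x ∈ Icc (0:ℝ) 1 := ⟨hx.1.le, hx.2.le⟩
    have hxIoc : x ∈ Ioc (0:ℝ) 1 := ⟨hx.1, hx.2.le⟩
    obtain ⟨hd, _⟩ := hC1 t ht.1.le ht.2
    have hU' : HasDerivAt (fun s => U s t) (Uξ x t) x :=
      (hd x hxI).hasDerivAt (Icc_mem_nhds hx.1 hx.2)
    have hUξ' : HasDerivAt (fun s => Uξ s t) (Uξξ x t) x :=
      (hC21 x hxIoc t ht.1 ht.2).1.hasDerivAt
        (mem_nhds_iff.2 ⟨Ioo 0 1, Ioo_subset_Ioc_self, isOpen_Ioo, hx⟩)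
    have hrpow : HasDerivAt (fun s => (U s t) ^ p) (p * (U x t) ^ (p - 1) * Uξ x t) x :=
      (Real.hasDerivAt_rpow_const (p := p) (Or.inr hp1)).comp x hU'
    have h1 : HasDerivAt (fun s => s * Uξ s t) (1 * Uξ x t + x * Uξξ x t) x :=
      (hasDerivAt_id x).mul hUξ'
    have htot := ((h1.const_mul (Nr ^ 2)).sub (hU'.const_mul (Nr ^ 2))).add
      (hrpow.const_mul (Nr - 1))
    have hfun : (fun ξ => G ξ t)
        = fun s => Nr ^ 2 * (s * Uξ s t) - Nr ^ 2 * U s t + (Nr - 1) * (U s t) ^ p := by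
      funext s; simp only [hGdef]; ring
    have e1 : x ^ (2 / Nr - 1) * x ^ ((2:ℝ) - 2 / Nr) = x := by
      rw [← Real.rpow_add hx.1]
      have : 2 / Nr - 1 + (2 - 2 / Nr) = 1 := by ring
      rw [this, Real.rpow_one]
    have e2 : x ^ (2 / Nr - 1) * x ^ ((1:ℝ) - 2 / Nr) = 1 := by
      rw [← Real.rpow_add hx.1]
      have : 2 / Nr - 1 + (1 - 2 / Nr) = 0 := by ring
      rw [this, Real.rpow_zero]
    have hval : w x * Ut x t
        = Nr ^ 2 * (1 * Uξ x t + x * Uξξ x t) - Nr ^ 2 * Uξ x t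
          + (Nr - 1) * (p * (U x t) ^ (p - 1) * Uξ x t) := by
      rw [hwdef, hPDE x hx t ht.1 ht.2, hpq]
      have expand : x ^ (2 / Nr - 1) *
          (Nr ^ 2 * x ^ ((2:ℝ) - 2 / Nr) * Uξξ x t
            + Nr * x ^ ((1:ℝ) - 2 / Nr) * (U x t) ^ q * Uξ x t)
          = Nr ^ 2 * (x ^ (2 / Nr - 1) * x ^ ((2:ℝ) - 2 / Nr)) * Uξξ x t
            + Nr * (x ^ (2 / Nr - 1) * x ^ ((1:ℝ) - 2 / Nr)) * (U x t) ^ q * Uξ x t := by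
        ring
      rw [expand, e1, e2]
      linear_combination (-(U x t ^ q * Uξ x t)) * hNp
    rw [hfun, hval]
    exact htot
  -- joint continuity of G
  have hGcont : ContinuousOn (fun P : ℝ × ℝ => G P.1 P.2) (Ioc 0 1 ×ˢ S) := by
    have hsub1 : (Ioc (0:ℝ) 1 ×ˢ S) ⊆ (Icc 0 1 ×ˢ {t : ℝ | 0 ≤ t ∧ (t : EReal) < T}) :=
      prod_mono Ioc_subset_Icc_self (fun t ht => ⟨ht.1.le, ht.2⟩)
    have hUc : ContinuousOn (fun P : ℝ × ℝ => U P.1 P.2) (Ioc 0 1 ×ˢ S) := hcont.mono hsub1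
    have hfst : ContinuousOn (fun P : ℝ × ℝ => P.1) (Ioc 0 1 ×ˢ S) :=
      continuous_fst.continuousOn
    simp only [hGdef]
    exact (((continuousOn_const.mul hfst).mul hUξcont).sub
      (continuousOn_const.mul hUc)).add
      (continuousOn_const.mul
        (hUc.rpow_const (fun x hx => Or.inr (le_trans zero_le_one hp1))))
  -- main quantitative estimate
  have key : ∀ t₀ t₁ : ℝ, 0 < t₀ → t₀ < t₁ → (t₁ : EReal) < T →
      C₁ * (t₁ - t₀) ≤ M * Nr / 2 := by
    intro t₀ t₁ ht₀ ht01 ht₁T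
    have hmemS : ∀ t ∈ Icc t₀ t₁, t ∈ S := fun t ht =>
      ⟨lt_of_lt_of_le ht₀ ht.1, lt_of_le_of_lt (EReal.coe_le_coe_iff.2 ht.2) ht₁T⟩
    have huIcc : uIcc t₀ t₁ = Icc t₀ t₁ := uIcc_of_le ht01.le
    have hGline : ∀ c ∈ Ioc (0:ℝ) 1, ContinuousOn (fun t => G c t) (Icc t₀ t₁) := by
      intro c hc
      exact hGcont.comp ((continuous_const.prodMk continuous_id).continuousOn)
        (fun t ht => ⟨hc, hmemS t ht⟩)
    have hGint : ∀ c ∈ Ioc (0:ℝ) 1, IntervalIntegrable (fun t => G c t) volume t₀ t₁ := by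
      intro c hc
      apply ContinuousOn.intervalIntegrable
      rw [huIcc]; exact hGline c hc
    set g : ℝ → ℝ := fun ε => ∫ t in t₀..t₁, G ε t with hgdef
    have hUcurve : ∀ s ∈ S, ContinuousOn (fun ξ => U ξ s) (Icc 0 1) := by
      intro s hs
      exact hcont.comp ((continuous_id.prodMk continuous_const).continuousOn)
        (fun x hx => ⟨hx, hs.1.le, hs.2⟩)
    have ht₀S : t₀ ∈ S := hmemS t₀ (left_mem_Icc.2 ht01.le)
    have ht₁S : t₁ ∈ S := hmemS t₁ (right_mem_Icc.2 ht01.le)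
    -- Step A : for every 0 < ε < 1,  g 1 ≤ g ε + M * Nr / 2
    have stepA : ∀ ε : ℝ, 0 < ε → ε < 1 → g 1 ≤ g ε + M * Nr / 2 := by
      intro ε hε0 hε1
      have hwc : ContinuousOn w (Icc ε 1) := by
        simp only [hwdef]
        exact continuousOn_id.rpow_const
          (fun x hx => Or.inl (ne_of_gt (lt_of_lt_of_le hε0 hx.1)))
      have hwUtcont : ContinuousOn (fun P : ℝ × ℝ => w P.1 * Ut P.1 P.2)
          (Icc ε 1 ×ˢ Icc t₀ t₁) := by
        apply ContinuousOn.mul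
        · exact hwc.comp continuous_fst.continuousOn (fun P hP => hP.1)
        · exact hUtcont.mono (prod_mono (fun x hx => ⟨lt_of_lt_of_le hε0 hx.1, hx.2⟩)
            (fun t ht => hmemS t ht))
      have hFTCt : ∀ ξ ∈ Icc ε 1,
          (∫ t in t₀..t₁, w ξ * Ut ξ t) = w ξ * (U ξ t₁ - U ξ t₀) := by
        intro ξ hξ
        have hξIoc : ξ ∈ Ioc (0:ℝ) 1 := ⟨lt_of_lt_of_le hε0 hξ.1, hξ.2⟩
        have hUtc : ContinuousOn (fun t => Ut ξ t) (Icc t₀ t₁) :=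
          hUtcont.comp ((continuous_const.prodMk continuous_id).continuousOn)
            (fun t ht => ⟨hξIoc, hmemS t ht⟩)
        have hint : IntervalIntegrable (fun t => Ut ξ t) volume t₀ t₁ := by
          apply ContinuousOn.intervalIntegrable; rw [huIcc]; exact hUtc
        have hder : ∀ t ∈ uIcc t₀ t₁, HasDerivAt (fun τ => U ξ τ) (Ut ξ t) t := by
          intro t htt; rw [huIcc] at htt
          exact (hC21 ξ hξIoc t (hmemS t htt).1 (hmemS t htt).2).2
        rw [intervalIntegral.integral_const_mul,
          intervalIntegral.integral_eq_sub_of_hasDerivAt hder hint]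
      have hFTCξ : ∀ t ∈ Icc t₀ t₁, (∫ ξ in ε..1, w ξ * Ut ξ t) = G 1 t - G ε t := by
        intro t ht
        have htS : t ∈ S := hmemS t ht
        refine intervalIntegral.integral_eq_sub_of_hasDeriv_right_of_le
          (f := fun x => G x t) (f' := fun x => w x * Ut x t) hε1.le ?_ ?_ ?_
        · exact hGcont.comp ((continuous_id.prodMk continuous_const).continuousOn)
            (fun x hx => ⟨⟨lt_of_lt_of_le hε0 hx.1, hx.2⟩, htS⟩)
        · intro x hx
          exact ((hGderiv t htS x ⟨lt_trans hε0 hx.1, hx.2⟩)).hasDerivWithinAt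
        · apply ContinuousOn.intervalIntegrable
          rw [uIcc_of_le hε1.le]
          exact hwUtcont.comp ((continuous_id.prodMk continuous_const).continuousOn)
            (fun x hx => ⟨hx, ht⟩)
      have hswap := fubini_cont (f := fun ξ t => w ξ * Ut ξ t) hε1.le ht01.le hwUtcont
      have hchain : g 1 - g ε = ∫ ξ in ε..1, w ξ * (U ξ t₁ - U ξ t₀) := by
        have h1 : g 1 - g ε = ∫ t in t₀..t₁, (G 1 t - G ε t) := by
          simp only [hgdef]
          exact (intervalIntegral.integral_sub (hGint 1 ⟨one_pos, le_refl 1⟩)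
            (hGint ε ⟨hε0, hε1.le⟩)).symm
        rw [h1]
        have h2 : (∫ t in t₀..t₁, (G 1 t - G ε t))
            = ∫ t in t₀..t₁, ∫ ξ in ε..1, w ξ * Ut ξ t := by
          apply intervalIntegral.integral_congr
          intro t htt; rw [huIcc] at htt
          exact (hFTCξ t htt).symm
        rw [h2, ← hswap]
        apply intervalIntegral.integral_congr
        intro ξ hξ; rw [uIcc_of_le hε1.le] at hξ
        exact hFTCt ξ hξ
      have hb : (∫ ξ in ε..1, w ξ * (U ξ t₁ - U ξ t₀)) ≤ M * Nr / 2 := by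
        have hint1 : IntervalIntegrable (fun ξ => w ξ * (U ξ t₁ - U ξ t₀)) volume ε 1 := by
          apply ContinuousOn.intervalIntegrable
          rw [uIcc_of_le hε1.le]
          exact hwc.mul (((hUcurve t₁ ht₁S).mono
              (fun x hx => ⟨le_trans hε0.le hx.1, hx.2⟩)).sub
            ((hUcurve t₀ ht₀S).mono (fun x hx => ⟨le_trans hε0.le hx.1, hx.2⟩)))
        have hint2 : IntervalIntegrable (fun ξ => M * w ξ) volume ε 1 := by
          apply ContinuousOn.intervalIntegrable
          rw [uIcc_of_le hε1.le]
          exact continuousOn_const.mul hwc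
        have hptw : ∀ x ∈ Icc ε 1, w x * (U x t₁ - U x t₀) ≤ M * w x := by
          intro x hx
          have hxI : x ∈ Icc (0:ℝ) 1 := ⟨le_trans hε0.le hx.1, hx.2⟩
          have hw0 : 0 ≤ w x := by
            simp only [hwdef]; exact Real.rpow_nonneg hxI.1 _
          have hdle : U x t₁ - U x t₀ ≤ M := by
            have h1 := (hUbdd t₁ ht₁S x hxI).2
            have h2 := (hUbdd t₀ ht₀S x hxI).1
            linarith
          calc w x * (U x t₁ - U x t₀) ≤ w x * M := mul_le_mul_of_nonneg_left hdle hw0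
          _ = M * w x := mul_comm _ _
        have hmono := intervalIntegral.integral_mono_on hε1.le hint1 hint2 hptw
        have hcomp : (∫ ξ in ε..1, M * w ξ) ≤ M * Nr / 2 := by
          rw [intervalIntegral.integral_const_mul]
          have h2Nr : (0:ℝ) < 2/Nr := by positivity
          have hwint : (∫ ξ in ε..1, w ξ) = (1 - ε ^ (2/Nr)) / (2/Nr) := by
            simp only [hwdef]
            rw [integral_rpow (Or.inl (by linarith : (-1:ℝ) < 2/Nr - 1))]
            have he : 2/Nr - 1 + 1 = 2/Nr := by ring
            rw [he, Real.one_rpow]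
          rw [hwint]
          have hεp : 0 ≤ ε ^ (2/Nr) := Real.rpow_nonneg hε0.le _
          have hfrac : (1 - ε ^ (2/Nr)) / (2/Nr) ≤ Nr/2 := by
            rw [div_le_iff₀ h2Nr]
            have hh : Nr / 2 * (2/Nr) = 1 := by field_simp
            rw [hh]; linarith
          calc M * ((1 - ε ^ (2/Nr)) / (2/Nr)) ≤ M * (Nr/2) :=
                mul_le_mul_of_nonneg_left hfrac hM0.le
          _ = M * Nr / 2 := by ring
        exact le_trans hmono hcomp
      linarith [hchain ▸ hb]
    -- Step B : C₁ * (t₁ - t₀) ≤ g 1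
    have stepB : C₁ * (t₁ - t₀) ≤ g 1 := by
      have hpt : ∀ t ∈ Icc t₀ t₁, C₁ ≤ G 1 t := by
        intro t ht
        have htS := hmemS t ht
        have h1M : U 1 t = M := hbc1 t htS.1 htS.2
        have hUξpos : 0 < Uξ 1 t := (hpos 1 ⟨one_pos, le_refl 1⟩ t htS.1 htS.2).2
        simp only [hGdef]
        rw [h1M, hC₁eq]
        have h0 : 0 ≤ Nr^2 * Uξ 1 t := mul_nonneg (by positivity) hUξpos.le
        linarith
      have h1 : C₁ * (t₁ - t₀) = ∫ t in t₀..t₁, C₁ := by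
        rw [intervalIntegral.integral_const, smul_eq_mul]; ring
      rw [h1]
      exact intervalIntegral.integral_mono_on ht01.le intervalIntegrable_const
        (hGint 1 ⟨one_pos, le_refl 1⟩) hpt
    -- Step C : for every η > 0 there is ε ∈ (0,1) with g ε < η
    have stepC : ∀ η : ℝ, 0 < η → ∃ ε : ℝ, 0 < ε ∧ ε < 1 ∧ g ε < η := by
      intro η hη
      set σ : ℝ := min 1 (η / (2 * (2*Nr^2 + Nr) * (t₁ - t₀))) with hσdef
      have ht10 : 0 < t₁ - t₀ := by linarith
      have hden : 0 < 2 * (2*Nr^2 + Nr) * (t₁ - t₀) :=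
        mul_pos (by positivity) ht10
      have hσ0 : 0 < σ := lt_min one_pos (div_pos hη hden)
      have hσ1 : σ ≤ 1 := min_le_left _ _
      have h1' : σ * (2 * (2*Nr^2 + Nr) * (t₁ - t₀)) ≤ η := by
        have h1 : σ ≤ η / (2 * (2*Nr^2 + Nr) * (t₁ - t₀)) := min_le_right _ _
        rw [le_div_iff₀ hden] at h1
        exact h1
      clear_value σ
      have hσsmall : (t₁ - t₀) * ((2*Nr^2 + Nr) * σ) ≤ η / 2 := by linarith [h1']
      obtain ⟨δ₀, hδ₀, hUsmall⟩ : ∃ δ₀ > 0, ∀ ξ ∈ Icc (0:ℝ) 1, ξ < δ₀ →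
          ∀ t ∈ Icc t₀ t₁, U ξ t < σ := by
        have hK : IsCompact (Icc (0:ℝ) 1 ×ˢ Icc t₀ t₁) := isCompact_Icc.prod isCompact_Icc
        have hUK : ContinuousOn (fun P : ℝ × ℝ => U P.1 P.2) (Icc 0 1 ×ˢ Icc t₀ t₁) :=
          hcont.mono (prod_mono (subset_refl _) (fun t ht => ⟨(hmemS t ht).1.le, (hmemS t ht).2⟩))
        have hUC := hK.uniformContinuousOn_of_continuous hUK
        rw [Metric.uniformContinuousOn_iff] at hUC
        obtain ⟨δ₀, hδ₀, hd⟩ := hUC σ hσ0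
        refine ⟨δ₀, hδ₀, ?_⟩
        intro ξ hξ hξδ t ht
        have h1 : (ξ, t) ∈ Icc (0:ℝ) 1 ×ˢ Icc t₀ t₁ := ⟨hξ, ht⟩
        have h2 : ((0:ℝ), t) ∈ Icc (0:ℝ) 1 ×ˢ Icc t₀ t₁ := ⟨⟨le_refl 0, zero_le_one⟩, ht⟩
        have hdist : dist (ξ, t) ((0:ℝ), t) < δ₀ := by
          rw [Prod.dist_eq]
          simp only [dist_self]
          rw [Real.dist_eq, sub_zero, abs_of_nonneg hξ.1]
          exact lt_of_eq_of_lt (max_eq_left hξ.1) hξδ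
        have := hd _ h1 _ h2 hdist
        rw [hbc0 t (hmemS t ht).1 (hmemS t ht).2, Real.dist_eq, sub_zero] at this
        exact lt_of_le_of_lt (le_abs_self _) this
      set δ : ℝ := min (δ₀/3) (1/4) with hδdef
      have hδ0 : 0 < δ := lt_min (by positivity) (by norm_num)
      have hδle : δ ≤ 1/4 := min_le_right _ _
      have h2δ1 : 2*δ < 1 := by linarith
      have h2δδ₀ : 2*δ < δ₀ := by
        have := min_le_left (δ₀/3) (1/4)
        have : δ ≤ δ₀/3 := this
        linarith
      have hδδ : δ < 2*δ := by linarith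
      clear_value δ
      have hIccsub : ∀ x ∈ Icc δ (2*δ), x ∈ Ioc (0:ℝ) 1 :=
        fun x hx => ⟨lt_of_lt_of_le hδ0 hx.1, le_trans hx.2 h2δ1.le⟩
      -- per-t bound on the inner integral
      have hpert : ∀ t ∈ Icc t₀ t₁, (∫ x in δ..(2*δ), G x t) ≤ δ * ((2*Nr^2 + Nr) * σ) := by
        intro t ht
        have htS : t ∈ S := hmemS t ht
        obtain ⟨hd, hdc⟩ := hC1 t htS.1.le htS.2
        have hIccsub' : Icc δ (2*δ) ⊆ Icc (0:ℝ) 1 :=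
          fun x hx => ⟨le_trans hδ0.le hx.1, le_trans hx.2 h2δ1.le⟩
        have hUc : ContinuousOn (fun x => U x t) (Icc δ (2*δ)) :=
          (hUcurve t htS).mono hIccsub'
        have hUξc : ContinuousOn (fun x => Uξ x t) (Icc δ (2*δ)) := hdc.mono hIccsub'
        have hUsm : ∀ x ∈ Icc δ (2*δ), U x t < σ := by
          intro x hx
          exact hUsmall x (hIccsub' hx) (lt_of_le_of_lt hx.2 h2δδ₀) t ht
        have hU0 : ∀ x ∈ Icc δ (2*δ), 0 ≤ U x t :=
          fun x hx => (hUbdd t htS x (hIccsub' hx)).1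
        have hUξ0 : ∀ x ∈ Icc δ (2*δ), 0 ≤ Uξ x t :=
          fun x hx => (hpos x (hIccsub x hx) t htS.1 htS.2).2.le
        -- integrability pieces
        have hi1 : IntervalIntegrable (fun x => x * Uξ x t) volume δ (2*δ) := by
          apply ContinuousOn.intervalIntegrable
          rw [uIcc_of_le hδδ.le]
          exact continuousOn_id.mul hUξc
        have hi2 : IntervalIntegrable (fun x => U x t) volume δ (2*δ) := by
          apply ContinuousOn.intervalIntegrable; rw [uIcc_of_le hδδ.le]; exact hUc
        have hi3 : IntervalIntegrable (fun x => (U x t) ^ p) volume δ (2*δ) := by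
          apply ContinuousOn.intervalIntegrable
          rw [uIcc_of_le hδδ.le]
          exact hUc.rpow_const (fun x hx => Or.inr (le_trans zero_le_one hp1))
        have hsplit : (∫ x in δ..(2*δ), G x t)
            = Nr^2 * (∫ x in δ..(2*δ), x * Uξ x t) - Nr^2 * (∫ x in δ..(2*δ), U x t)
              + (Nr - 1) * (∫ x in δ..(2*δ), (U x t) ^ p) := by
          rw [← intervalIntegral.integral_const_mul, ← intervalIntegral.integral_const_mul,
            ← intervalIntegral.integral_const_mul, ← intervalIntegral.integral_sub
              (hi1.const_mul _) (hi2.const_mul _),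
            ← intervalIntegral.integral_add (((hi1.const_mul _).sub (hi2.const_mul _)))
              (hi3.const_mul _)]
          apply intervalIntegral.integral_congr
          intro x hx
          simp only [hGdef]; ring
        -- bound ∫ x * Uξ
        have hB1 : (∫ x in δ..(2*δ), x * Uξ x t) ≤ 2*δ*σ := by
          have hb1 : (∫ x in δ..(2*δ), x * Uξ x t) ≤ ∫ x in δ..(2*δ), (2*δ) * Uξ x t := by
            apply intervalIntegral.integral_mono_on hδδ.le hi1 (by
              apply ContinuousOn.intervalIntegrable
              rw [uIcc_of_le hδδ.le]
              exact continuousOn_const.mul hUξc)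
            intro x hx
            exact mul_le_mul_of_nonneg_right hx.2 (hUξ0 x hx)
          have hFTC : (∫ x in δ..(2*δ), Uξ x t) = U (2*δ) t - U δ t := by
            refine intervalIntegral.integral_eq_sub_of_hasDeriv_right_of_le
              (f := fun x => U x t) (f' := fun x => Uξ x t) hδδ.le hUc ?_ ?_
            · intro x hx
              have hxIoo : x ∈ Ioo (0:ℝ) 1 := ⟨lt_trans hδ0 hx.1, lt_trans hx.2 h2δ1⟩
              exact (((hd x ⟨hxIoo.1.le, hxIoo.2.le⟩).hasDerivAt
                (Icc_mem_nhds hxIoo.1 hxIoo.2))).hasDerivWithinAt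
            · apply ContinuousOn.intervalIntegrable; rw [uIcc_of_le hδδ.le]; exact hUξc
          have hend : U (2*δ) t - U δ t ≤ σ := by
            have h1 : U (2*δ) t < σ := hUsmall (2*δ) ⟨by linarith, h2δ1.le⟩ h2δδ₀ t ht
            have h2 : 0 ≤ U δ t := (hUbdd t htS δ ⟨hδ0.le, by linarith⟩).1
            linarith
          calc (∫ x in δ..(2*δ), x * Uξ x t) ≤ ∫ x in δ..(2*δ), (2*δ) * Uξ x t := hb1
          _ = (2*δ) * (U (2*δ) t - U δ t) := by
              rw [intervalIntegral.integral_const_mul, hFTC]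
          _ ≤ (2*δ) * σ := mul_le_mul_of_nonneg_left hend (by linarith)
          _ = 2*δ*σ := by ring
        have hB2 : 0 ≤ ∫ x in δ..(2*δ), U x t :=
          intervalIntegral.integral_nonneg hδδ.le hU0
        have hB3 : (∫ x in δ..(2*δ), (U x t) ^ p) ≤ δ * σ := by
          have hptw : ∀ x ∈ Icc δ (2*δ), (U x t) ^ p ≤ σ := by
            intro x hx
            have h1 : (U x t) ^ p ≤ σ ^ p :=
              Real.rpow_le_rpow (hU0 x hx) (hUsm x hx).le (by linarith)
            have h2 : σ ^ p ≤ σ ^ (1:ℝ) :=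
              Real.rpow_le_rpow_of_exponent_ge hσ0 hσ1 hp1
            rw [Real.rpow_one] at h2
            linarith
          have := intervalIntegral.integral_mono_on hδδ.le hi3
            intervalIntegrable_const hptw
          rw [intervalIntegral.integral_const, smul_eq_mul] at this
          calc (∫ x in δ..(2*δ), (U x t) ^ p) ≤ (2*δ - δ) * σ := this
          _ = δ * σ := by ring
        rw [hsplit]
        have e1 : Nr^2 * (∫ x in δ..(2*δ), x * Uξ x t) ≤ Nr^2 * (2*δ*σ) :=
          mul_le_mul_of_nonneg_left hB1 (by positivity)
        have e2 : 0 ≤ Nr^2 * (∫ x in δ..(2*δ), U x t) := mul_nonneg (by positivity) hB2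
        have e3 : (Nr - 1) * (∫ x in δ..(2*δ), (U x t) ^ p) ≤ (Nr - 1) * (δ*σ) :=
          mul_le_mul_of_nonneg_left hB3 (by linarith)
        have e4 : 0 ≤ δ * σ := mul_nonneg hδ0.le hσ0.le
        linarith [e1, e2, e3, e4]
      -- average over [δ, 2δ] via Fubini
      have hGcont2 : ContinuousOn (fun P : ℝ × ℝ => G P.1 P.2) (Icc δ (2*δ) ×ˢ Icc t₀ t₁) :=
        hGcont.mono (prod_mono (fun x hx => hIccsub x hx) (fun t ht => hmemS t ht))
      have hswap2 := fubini_cont (f := fun x t => G x t) hδδ.le ht01.le hGcont2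
      have hginteg : IntervalIntegrable g volume δ (2*δ) := by
        have := fubini_cont_integrable (f := fun x t => G x t) hδδ.le ht01.le hGcont2
        exact this
      have havg : (∫ x in δ..(2*δ), g x) ≤ (t₁ - t₀) * (δ * ((2*Nr^2 + Nr) * σ)) := by
        have h1 : (∫ x in δ..(2*δ), g x) = ∫ t in t₀..t₁, ∫ x in δ..(2*δ), G x t := by
          simp only [hgdef]
          exact hswap2
        rw [h1]
        have h2 := intervalIntegral.integral_mono_on ht01.le
          (fubini_cont_integrable (f := fun t x => G x t) ht01.le hδδ.le
            (by
              have : ContinuousOn (fun P : ℝ × ℝ => G P.2 P.1) (Icc t₀ t₁ ×ˢ Icc δ (2*δ)) := by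
                apply hGcont2.comp (continuous_swap.continuousOn)
                intro P hP
                exact ⟨hP.2, hP.1⟩
              exact this))
          intervalIntegrable_const hpert
        rw [intervalIntegral.integral_const, smul_eq_mul] at h2
        exact h2
      -- extract a good ε
      by_contra hcon
      push_neg at hcon
      have hlow : δ * η ≤ ∫ x in δ..(2*δ), g x := by
        have h1 : (∫ x in δ..(2*δ), (η:ℝ)) ≤ ∫ x in δ..(2*δ), g x := by
          apply intervalIntegral.integral_mono_on hδδ.le intervalIntegrable_const hginteg
          intro x hx
          exact hcon x (lt_of_lt_of_le hδ0 hx.1) (lt_of_le_of_lt hx.2 h2δ1)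
        rw [intervalIntegral.integral_const, smul_eq_mul] at h1
        calc δ * η = (2*δ - δ) * η := by ring
        _ ≤ ∫ x in δ..(2*δ), g x := h1
      have hch : δ * η ≤ (t₁ - t₀) * (δ * ((2*Nr^2 + Nr) * σ)) := le_trans hlow havg
      have h2 : (t₁ - t₀) * (δ * ((2*Nr^2 + Nr) * σ))
          = δ * ((t₁ - t₀) * ((2*Nr^2 + Nr) * σ)) := by ring
      have h3 : δ * ((t₁ - t₀) * ((2*Nr^2 + Nr) * σ)) ≤ δ * (η/2) :=
        mul_le_mul_of_nonneg_left hσsmall hδ0.le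
      have h5 : η ≤ η/2 := le_of_mul_le_mul_left (by linarith) hδ0
      linarith
    -- combine
    have hfinal : ∀ η : ℝ, 0 < η → C₁ * (t₁ - t₀) ≤ M * Nr / 2 + η := by
      intro η hη
      obtain ⟨ε, hε0, hε1, hgε⟩ := stepC η hη
      have := stepA ε hε0 hε1
      linarith [stepB]
    exact le_of_forall_pos_le_add hfinal
  -- conclusion
  have hTs0 : 0 < 1 / (2 * Nr) * lam⁻¹ := by positivity
  have hC₁Ts : C₁ * (1 / (2 * Nr) * lam⁻¹) = M * Nr / 2 := by
    rw [hC₁def]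
    field_simp
  by_contra hcontra
  push_neg at hcontra
  obtain ⟨r, hr1, hr2⟩ := EReal.exists_between_coe_real hcontra
  have hrr : 1 / (2 * Nr) * lam⁻¹ < r := EReal.coe_lt_coe_iff.1 hr1
  set Ts : ℝ := 1 / (2 * Nr) * lam⁻¹ with hTsdef
  have hr0 : 0 < r := lt_trans hTs0 hrr
  have ht₀0 : 0 < (r - Ts)/2 := by simp only [hTsdef]; linarith
  have ht01 : (r - Ts)/2 < r := by simp only [hTsdef]; linarith
  have hkey := key ((r - Ts)/2) r ht₀0 ht01 hr2
  have hdiff : Ts < r - (r - Ts)/2 := by simp only [hTsdef]; linarith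
  have : C₁ * (r - (r - Ts)/2) ≤ C₁ * Ts := by rw [hTsdef, hC₁Ts]; exact hkey
  have := le_of_mul_le_mul_left (by linarith [this] : C₁ * (r - (r - Ts)/2) ≤ C₁ * Ts) hC₁
  linarith
end

section
/- Let N ≥ 2 be an integer, A := (N²/(N−1))^{N−1}, M > 0 and T ∈ (0,∞]. Suppose U : [0,1]×[0,T) → ℝ is continuous, nonnegative, with U(·,t) ∈ C¹([0,1]) for every t, C^{2,1} on (0,1]×(0,T), nondecreasing in ξ, satisfying U_t = N² ξ^{2−2/N} U_{ξξ} + N ξ^{1−2/N} U^{1/(N−1)} U_ξ on (0,1)×(0,T), with U(0,t) = 0 and U(1,t) = M for all t ∈ (0,T). Then the moment function ψ(t) := ∫₀¹ U(ξ,t) ξ^{2/N−1} dξ satisfies ψ(t) − ψ(0) ≥ N² M ((M/A)^{1/(N−1)} − 1)·t for all t ∈ (0,T). -/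
open Set MeasureTheory intervalIntegral

private lemma slope_nonneg_aux {f : ℝ → ℝ} {d x : ℝ} (hx0 : 0 < x) (hx1 : x ≤ 1)
    (hf : HasDerivWithinAt f d (Icc 0 1) x) (hm : MonotoneOn f (Icc 0 1)) : 0 ≤ d := by
  rw [hasDerivWithinAt_iff_tendsto_slope] at hf
  have hsub : Ioo 0 x ⊆ Icc (0:ℝ) 1 \ {x} := fun y hy =>
    ⟨⟨hy.1.le, hy.2.le.trans hx1⟩, ne_of_lt hy.2⟩
  have hne : (nhdsWithin x (Ioo (0:ℝ) x)).NeBot := by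
    apply mem_closure_iff_nhdsWithin_neBot.mp
    rw [closure_Ioo (ne_of_lt hx0)]
    exact ⟨hx0.le, le_refl x⟩
  have h2 : Filter.Tendsto (slope f x) (nhdsWithin x (Ioo (0:ℝ) x)) (nhds d) :=
    hf.mono_left (nhdsWithin_mono _ hsub)
  refine ge_of_tendsto h2 ?_
  filter_upwards [self_mem_nhdsWithin] with y hy
  have h1 : f y ≤ f x := hm ⟨hy.1.le, hy.2.le.trans hx1⟩ ⟨hx0.le, hx1⟩ hy.2.le
  have h3 : y - x < 0 := by linarith [hy.2]
  rw [slope_def_field]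
  exact div_nonneg_of_nonpos (by linarith) h3.le

private lemma fubini_aux {a b c d : ℝ} (hab : a ≤ b) (hcd : c ≤ d) {f : ℝ → ℝ → ℝ}
    (hf : ContinuousOn (fun p : ℝ × ℝ => f p.1 p.2) (Icc a b ×ˢ Icc c d)) :
    (∫ x in a..b, ∫ y in c..d, f x y) = (∫ y in c..d, ∫ x in a..b, f x y) ∧
    IntervalIntegrable (fun x => ∫ y in c..d, f x y) volume a b ∧
    IntervalIntegrable (fun y => ∫ x in a..b, f x y) volume c d := by
  have hcompact : IsCompact (Icc a b ×ˢ Icc c d) := isCompact_Icc.prod isCompact_Icc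
  have hint : IntegrableOn (fun p : ℝ × ℝ => f p.1 p.2) (Icc a b ×ˢ Icc c d) volume :=
    hf.integrableOn_compact hcompact
  rw [MeasureTheory.Measure.volume_eq_prod] at hint
  have hsub : (Ioc a b ×ˢ Ioc c d : Set (ℝ × ℝ)) ⊆ Icc a b ×ˢ Icc c d :=
    prod_mono Ioc_subset_Icc_self Ioc_subset_Icc_self
  have hI : Integrable (Function.uncurry f)
      ((volume.restrict (Ioc a b)).prod (volume.restrict (Ioc c d))) := by
    rw [Measure.prod_restrict]
    exact (hint.mono_set hsub)
  refine ⟨?_, ?_, ?_⟩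
  · simp only [intervalIntegral.integral_of_le hab, intervalIntegral.integral_of_le hcd]
    exact MeasureTheory.integral_integral_swap hI
  · rw [intervalIntegrable_iff_integrableOn_Ioc_of_le hab]
    have := hI.integral_prod_left
    simp only [intervalIntegral.integral_of_le hcd]
    exact this
  · rw [intervalIntegrable_iff_integrableOn_Ioc_of_le hcd]
    have := hI.integral_prod_right
    simp only [intervalIntegral.integral_of_le hab]
    exact this

set_option maxHeartbeats 2000000 in
/-- **Moment inequality.** For a nonnegative solution `U`, nondecreasing in `ξ`, of the
accumulated-density equation with `U(0,t)=0`, `U(1,t)=M`, the moment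
`ψ(t) = ∫₀¹ U(ξ,t) ξ^{2/N−1} dξ` satisfies
`ψ(t) − ψ(0) ≥ N² M ((M/A)^{1/(N−1)} − 1) t` for `t ∈ (0,T)`. -/
theorem moment_inequality
    (N : ℕ) (hN : 2 ≤ N)
    (A : ℝ) (hA : A = ((N : ℝ) ^ 2 / ((N : ℝ) - 1)) ^ (N - 1))
    (M : ℝ) (hM : 0 < M)
    (T : EReal) (hT : 0 < T)
    (U Uξ Uξξ Ut : ℝ → ℝ → ℝ)
    (hcont : ContinuousOn (fun p : ℝ × ℝ => U p.1 p.2)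
      (Icc 0 1 ×ˢ {t : ℝ | 0 ≤ t ∧ (t : EReal) < T}))
    (hnonneg : ∀ ξ ∈ Icc (0:ℝ) 1, ∀ t : ℝ, 0 ≤ t → (t : EReal) < T → 0 ≤ U ξ t)
    (hC1 : ∀ t : ℝ, 0 ≤ t → (t : EReal) < T →
      (∀ ξ ∈ Icc (0:ℝ) 1, HasDerivWithinAt (fun s => U s t) (Uξ ξ t) (Icc 0 1) ξ) ∧
      ContinuousOn (fun ξ => Uξ ξ t) (Icc 0 1))
    (hC21 : ∀ ξ ∈ Ioc (0:ℝ) 1, ∀ t : ℝ, 0 < t → (t : EReal) < T →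
      HasDerivWithinAt (fun s => Uξ s t) (Uξξ ξ t) (Ioc 0 1) ξ ∧
      HasDerivAt (fun τ => U ξ τ) (Ut ξ t) t)
    (hUξcont : ContinuousOn (fun p : ℝ × ℝ => Uξ p.1 p.2)
      (Ioc 0 1 ×ˢ {t : ℝ | 0 < t ∧ (t : EReal) < T}))
    (hUξξcont : ContinuousOn (fun p : ℝ × ℝ => Uξξ p.1 p.2)
      (Ioc 0 1 ×ˢ {t : ℝ | 0 < t ∧ (t : EReal) < T}))
    (hUtcont : ContinuousOn (fun p : ℝ × ℝ => Ut p.1 p.2)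
      (Ioc 0 1 ×ˢ {t : ℝ | 0 < t ∧ (t : EReal) < T}))
    (hmono : ∀ t : ℝ, 0 ≤ t → (t : EReal) < T → MonotoneOn (fun ξ => U ξ t) (Icc 0 1))
    (hPDE : ∀ ξ ∈ Ioo (0:ℝ) 1, ∀ t : ℝ, 0 < t → (t : EReal) < T →
      Ut ξ t = (N : ℝ) ^ 2 * ξ ^ ((2 : ℝ) - 2 / N) * Uξξ ξ t
        + (N : ℝ) * ξ ^ ((1 : ℝ) - 2 / N) * (U ξ t) ^ ((1 : ℝ) / ((N : ℝ) - 1)) * Uξ ξ t)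
    (hbc0 : ∀ t : ℝ, 0 < t → (t : EReal) < T → U 0 t = 0)
    (hbc1 : ∀ t : ℝ, 0 < t → (t : EReal) < T → U 1 t = M)
    (ψ : ℝ → ℝ)
    (hψ : ∀ t : ℝ, 0 ≤ t → (t : EReal) < T →
      ψ t = ∫ ξ in (0:ℝ)..1, U ξ t * ξ ^ ((2 : ℝ) / N - 1)) :
    ∀ t : ℝ, 0 < t → (t : EReal) < T →
      ψ t - ψ 0 ≥ (N : ℝ) ^ 2 * M * ((M / A) ^ ((1 : ℝ) / ((N : ℝ) - 1)) - 1) * t := by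
  intro t ht0 htT
  have hn2 : (2:ℝ) ≤ (N:ℝ) := by exact_mod_cast hN
  set n : ℝ := (N : ℝ) with hn
  have hn1 : (0:ℝ) < n - 1 := by linarith
  have hnpos : (0:ℝ) < n := by linarith
  set q : ℝ := (1:ℝ) / (n - 1) with hqdef
  have hq0 : 0 < q := by positivity
  set p : ℝ := 1 + q with hpdef
  have hp1 : (1:ℝ) ≤ p := by simp [hpdef]; positivity
  set r : ℝ := (2:ℝ) / n - 1 with hrdef
  have hrneg1 : (-1:ℝ) < r := by
    have : 0 < 2 / n := by positivity
    simp only [hrdef]; linarith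
  have hApos : 0 < A := by
    rw [hA]; positivity
  -- membership helpers
  have hcoe : ∀ τ : ℝ, τ ≤ t → (τ : EReal) < T := by
    intro τ hτ
    exact lt_of_le_of_lt (EReal.coe_le_coe_iff.mpr hτ) htT
  -- the constant identity
  have hckey : (n - 1) * M ^ p = n ^ 2 * M * (M / A) ^ q := by
    have hbase : (0:ℝ) < n ^ 2 / (n - 1) := by positivity
    have hcast : ((N - 1 : ℕ) : ℝ) = n - 1 := by
      rw [Nat.cast_sub (le_trans one_le_two hN)]; simp [hn]
    have hAq : A ^ q = n ^ 2 / (n - 1) := by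
      rw [hA, ← Real.rpow_natCast (n ^ 2 / (n - 1)) (N - 1), ← Real.rpow_mul hbase.le]
      have h1 : ((N - 1 : ℕ) : ℝ) * q = 1 := by
        rw [hcast, hqdef]; field_simp
      rw [h1, Real.rpow_one]
    have hMAq : (M / A) ^ q = M ^ q / (n ^ 2 / (n - 1)) := by
      rw [Real.div_rpow hM.le hApos.le, hAq]
    have hMp : M ^ p = M * M ^ q := by
      rw [hpdef, Real.rpow_add hM, Real.rpow_one]
    rw [hMp, hMAq]
    have hn2ne : n ^ 2 ≠ 0 := by positivity
    field_simp
  -- U ≤ M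
  have hUM : ∀ ξ ∈ Icc (0:ℝ) 1, ∀ τ : ℝ, 0 < τ → τ ≤ t → U ξ τ ≤ M := by
    intro ξ hξ τ hτ0 hτt
    have h1 : U ξ τ ≤ U 1 τ := hmono τ hτ0.le (hcoe τ hτt) hξ (right_mem_Icc.mpr (by norm_num)) hξ.2
    rwa [hbc1 τ hτ0 (hcoe τ hτt)] at h1
  -- U ≥ 0 restated
  have hU0 : ∀ ξ ∈ Icc (0:ℝ) 1, ∀ τ : ℝ, 0 ≤ τ → τ ≤ t → 0 ≤ U ξ τ :=
    fun ξ hξ τ h0 h1 => hnonneg ξ hξ τ h0 (hcoe τ h1)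
  -- Uξ ≥ 0 on (0,1]
  have hUξ0 : ∀ ξ ∈ Ioc (0:ℝ) 1, ∀ τ : ℝ, 0 ≤ τ → τ ≤ t → 0 ≤ Uξ ξ τ := by
    intro ξ hξ τ h0 h1
    exact slope_nonneg_aux hξ.1 hξ.2
      ((hC1 τ h0 (hcoe τ h1)).1 ξ ⟨hξ.1.le, hξ.2⟩) (hmono τ h0 (hcoe τ h1))
  -- section continuity helpers
  have hsecξ : ∀ (V : ℝ → ℝ → ℝ), ContinuousOn (fun p : ℝ × ℝ => V p.1 p.2)
      (Ioc 0 1 ×ˢ {τ : ℝ | 0 < τ ∧ (τ:EReal) < T}) → ∀ τ : ℝ, 0 < τ → τ ≤ t →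
      ContinuousOn (fun ξ => V ξ τ) (Ioc 0 1) := by
    intro V hV τ h0 h1
    exact hV.comp ((continuous_id.prodMk continuous_const).continuousOn)
      (fun ξ hξ => ⟨hξ, h0, hcoe τ h1⟩)
  have hsect : ∀ (V : ℝ → ℝ → ℝ), ContinuousOn (fun p : ℝ × ℝ => V p.1 p.2)
      (Ioc 0 1 ×ˢ {τ : ℝ | 0 < τ ∧ (τ:EReal) < T}) → ∀ ξ ∈ Ioc (0:ℝ) 1, ∀ s₀ : ℝ, 0 < s₀ →
      ContinuousOn (fun τ => V ξ τ) (Icc s₀ t) := by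
    intro V hV ξ hξ s₀ hs₀
    exact hV.comp ((continuous_const.prodMk continuous_id).continuousOn)
      (fun τ hτ => ⟨hξ, lt_of_lt_of_le hs₀ hτ.1, hcoe τ hτ.2⟩)
  -- continuity of U in ξ for fixed time
  have hUcξ : ∀ τ : ℝ, 0 ≤ τ → τ ≤ t → ContinuousOn (fun ξ => U ξ τ) (Icc 0 1) := by
    intro τ h0 h1 x hx
    exact ((hC1 τ h0 (hcoe τ h1)).1 x hx).continuousWithinAt
  -- F and its ξ-derivative
  set F : ℝ → ℝ → ℝ :=
    fun ξ τ => n^2 * ξ * Uξ ξ τ - n^2 * U ξ τ + (n-1) * (U ξ τ) ^ p with hFdef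
  have hFderiv : ∀ τ : ℝ, 0 < τ → τ ≤ t → ∀ ξ ∈ Ioo (0:ℝ) 1,
      HasDerivAt (fun x => F x τ) (ξ ^ r * Ut ξ τ) ξ := by
    intro τ hτ0 hτt ξ hξ
    have hx0 : (0:ℝ) < ξ := hξ.1
    have hTτ := hcoe τ hτt
    have hmemIoc : Ioc (0:ℝ) 1 ∈ nhds ξ :=
      mem_nhds_iff.mpr ⟨Ioo 0 1, Ioo_subset_Ioc_self, isOpen_Ioo, hξ⟩
    have hmemIcc : Icc (0:ℝ) 1 ∈ nhds ξ :=
      mem_nhds_iff.mpr ⟨Ioo 0 1, Ioo_subset_Icc_self, isOpen_Ioo, hξ⟩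
    have hU' : HasDerivAt (fun x => U x τ) (Uξ ξ τ) ξ :=
      ((hC1 τ hτ0.le hTτ).1 ξ ⟨hξ.1.le, hξ.2.le⟩).hasDerivAt hmemIcc
    have hUξ' : HasDerivAt (fun x => Uξ x τ) (Uξξ ξ τ) ξ :=
      ((hC21 ξ ⟨hξ.1, hξ.2.le⟩ τ hτ0 hTτ).1).hasDerivAt hmemIoc
    have hpow0 : HasDerivAt (fun y : ℝ => y ^ p) (p * (U ξ τ) ^ (p - 1)) (U ξ τ) :=
      Real.hasDerivAt_rpow_const (Or.inr hp1)
    have hpow : HasDerivAt (fun x => (U x τ) ^ p)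
        ((p * (U ξ τ) ^ (p - 1)) * Uξ ξ τ) ξ := HasDerivAt.comp (h := fun x => U x τ) ξ hpow0 hU'
    have hxu : HasDerivAt (fun x => x * Uξ x τ) (1 * Uξ ξ τ + ξ * Uξξ ξ τ) ξ :=
      (hasDerivAt_id ξ).mul hUξ'
    have hFeq : (fun x => F x τ) =
        (fun x => n ^ 2 * (x * Uξ x τ) - n ^ 2 * U x τ + (n - 1) * (U x τ) ^ p) := by
      funext x; simp only [hFdef]; ring
    have hcomb : HasDerivAt (fun x => F x τ)
        (n ^ 2 * (1 * Uξ ξ τ + ξ * Uξξ ξ τ) - n ^ 2 * Uξ ξ τ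
          + (n - 1) * ((p * (U ξ τ) ^ (p - 1)) * Uξ ξ τ)) ξ := by
      rw [hFeq]
      exact ((hxu.const_mul (n ^ 2)).sub (hU'.const_mul (n ^ 2))).add (hpow.const_mul (n - 1))
    convert hcomb using 1
    rw [hPDE ξ hξ τ hτ0 hTτ]
    have e1 : ξ ^ r * ξ ^ ((2:ℝ) - 2 / n) = ξ := by
      rw [← Real.rpow_add hx0, show r + ((2:ℝ) - 2 / n) = 1 by rw [hrdef]; ring,
        Real.rpow_one]
    have e2 : ξ ^ r * ξ ^ ((1:ℝ) - 2 / n) = 1 := by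
      rw [← Real.rpow_add hx0, show r + ((1:ℝ) - 2 / n) = 0 by rw [hrdef]; ring,
        Real.rpow_zero]
    have hpq : p - 1 = q := by rw [hpdef]; ring
    have hnp : (n - 1) * p = n := by rw [hpdef, hqdef]; field_simp; ring
    rw [hpq]
    calc ξ ^ r * (n ^ 2 * ξ ^ ((2:ℝ) - 2 / n) * Uξξ ξ τ
          + n * ξ ^ ((1:ℝ) - 2 / n) * U ξ τ ^ q * Uξ ξ τ)
        = n ^ 2 * (ξ ^ r * ξ ^ ((2:ℝ) - 2 / n)) * Uξξ ξ τ
          + n * (ξ ^ r * ξ ^ ((1:ℝ) - 2 / n)) * U ξ τ ^ q * Uξ ξ τ := by ring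
      _ = n ^ 2 * ξ * Uξξ ξ τ + n * U ξ τ ^ q * Uξ ξ τ := by rw [e1, e2]; ring
      _ = n ^ 2 * (1 * Uξ ξ τ + ξ * Uξξ ξ τ) - n ^ 2 * Uξ ξ τ
          + (n - 1) * (p * U ξ τ ^ q * Uξ ξ τ) := by
            linear_combination (U ξ τ ^ q * Uξ ξ τ) * hnp.symm
      _ = _ := by ring
  -- FTC in ξ
  have hFTCxi : ∀ τ : ℝ, 0 < τ → τ ≤ t → ∀ α ∈ Ioo (0:ℝ) 1,
      (∫ ξ in α..1, ξ ^ r * Ut ξ τ) = F 1 τ - F α τ := by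
    intro τ hτ0 hτt α hα
    have hTτ := hcoe τ hτt
    have hsub1 : Icc α 1 ⊆ Icc (0:ℝ) 1 := Icc_subset_Icc hα.1.le (le_refl 1)
    have hsub2 : Icc α 1 ⊆ Ioc (0:ℝ) 1 := fun x hx => ⟨lt_of_lt_of_le hα.1 hx.1, hx.2⟩
    have hFc : ContinuousOn (fun x => F x τ) (Icc α 1) := by
      apply ContinuousOn.add
      · apply ContinuousOn.sub
        · exact (continuousOn_const.mul continuousOn_id).mul
            (((hC1 τ hτ0.le hTτ).2).mono hsub1)
        · exact continuousOn_const.mul ((hUcξ τ hτ0.le hτt).mono hsub1)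
      · apply continuousOn_const.mul
        apply ContinuousOn.rpow_const ((hUcξ τ hτ0.le hτt).mono hsub1)
        intro x hx
        exact Or.inr (by positivity)
    have hderiv : ∀ x ∈ Ioo α 1, HasDerivWithinAt (fun x => F x τ)
        (x ^ r * Ut x τ) (Ioi x) x := fun x hx =>
      (hFderiv τ hτ0 hτt x ⟨lt_trans hα.1 hx.1, hx.2⟩).hasDerivWithinAt
    have hic : IntervalIntegrable (fun x => x ^ r * Ut x τ) volume α 1 := by
      apply ContinuousOn.intervalIntegrable
      rw [uIcc_of_le hα.2.le]
      apply ContinuousOn.mul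
      · exact continuousOn_id.rpow_const
          (fun x hx => Or.inl (ne_of_gt (lt_of_lt_of_le hα.1 hx.1)))
      · exact (hsecξ Ut hUtcont τ hτ0 hτt).mono hsub2
    exact intervalIntegral.integral_eq_sub_of_hasDeriv_right_of_le hα.2.le hFc hderiv hic

  -- FTC in time
  have hFTCt : ∀ s' : ℝ, 0 < s' → s' ≤ t → ∀ ξ ∈ Ioc (0:ℝ) 1,
      U ξ t - U ξ s' = ∫ τ in s'..t, Ut ξ τ := by
    intro s' hs'0 hs't ξ hξ
    rw [eq_comm]
    apply intervalIntegral.integral_eq_sub_of_hasDerivAt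
    · intro τ hτ
      rw [uIcc_of_le hs't] at hτ
      exact (hC21 ξ hξ τ (lt_of_lt_of_le hs'0 hτ.1) (hcoe τ hτ.2)).2
    · apply ContinuousOn.intervalIntegrable
      rw [uIcc_of_le hs't]
      exact hsect Ut hUtcont ξ hξ s' hs'0
  -- time sections of U on [0,t]
  have hsecU : ∀ ξ ∈ Icc (0:ℝ) 1, ContinuousOn (fun τ => U ξ τ) (Icc 0 t) := by
    intro ξ hξ
    exact hcont.comp ((continuous_const.prodMk continuous_id).continuousOn)
      (fun τ hτ => ⟨hξ, hτ.1, hcoe τ hτ.2⟩)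
  have hK0 : IsCompact (Icc (0:ℝ) 1 ×ˢ Icc (0:ℝ) t) := isCompact_Icc.prod isCompact_Icc
  have hcont0 : ContinuousOn (fun p : ℝ × ℝ => U p.1 p.2) (Icc (0:ℝ) 1 ×ˢ Icc (0:ℝ) t) :=
    hcont.mono (fun p hp => ⟨hp.1, hp.2.1, hcoe p.2 hp.2.2⟩)
  obtain ⟨C0, hC0⟩ := hK0.exists_bound_of_continuousOn hcont0
  have hC0' : ∀ ξ ∈ Icc (0:ℝ) 1, ∀ τ ∈ Icc (0:ℝ) t, |U ξ τ| ≤ C0 := by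
    intro ξ hξ τ hτ
    have := hC0 (ξ, τ) ⟨hξ, hτ⟩
    rwa [Real.norm_eq_abs] at this
  have hUCuc := hK0.uniformContinuousOn_of_continuous hcont0
  rw [Metric.uniformContinuousOn_iff] at hUCuc
  -- smallness of U near ξ = 0, uniformly in time
  have hUsmall : ∀ ε > (0:ℝ), ∃ δ > (0:ℝ), ∀ ξ : ℝ, 0 ≤ ξ → ξ < δ → ξ ≤ 1 →
      ∀ τ : ℝ, 0 ≤ τ → τ ≤ t → |U ξ τ - U 0 τ| < ε := by
    intro ε hε
    obtain ⟨δ, hδ0, hδ⟩ := hUCuc ε hε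
    refine ⟨δ, hδ0, fun ξ h0 h1 h2 τ hτ0 hτt => ?_⟩
    have hd : dist ((ξ, τ) : ℝ × ℝ) ((0, τ) : ℝ × ℝ) < δ := by
      rw [Prod.dist_eq, dist_self, Real.dist_eq, sub_zero, abs_of_nonneg h0]
      exact max_lt h1 hδ0
    have := hδ (ξ, τ) ⟨⟨h0, h2⟩, hτ0, hτt⟩ (0, τ) ⟨⟨le_refl 0, zero_le_one⟩, hτ0, hτt⟩ hd
    rwa [Real.dist_eq] at this
  -- smallness of U ξ τ - U ξ 0 for small τ, uniformly in ξ
  have hUsmallt : ∀ ε > (0:ℝ), ∃ δ > (0:ℝ), ∀ τ : ℝ, 0 ≤ τ → τ < δ → τ ≤ t →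
      ∀ ξ : ℝ, 0 ≤ ξ → ξ ≤ 1 → |U ξ τ - U ξ 0| < ε := by
    intro ε hε
    obtain ⟨δ, hδ0, hδ⟩ := hUCuc ε hε
    refine ⟨δ, hδ0, fun τ h0 h1 h2 ξ hξ0 hξ1 => ?_⟩
    have hd : dist ((ξ, τ) : ℝ × ℝ) ((ξ, 0) : ℝ × ℝ) < δ := by
      rw [Prod.dist_eq, dist_self, Real.dist_eq, sub_zero, abs_of_nonneg h0]
      exact max_lt hδ0 h1
    have := hδ (ξ, τ) ⟨⟨hξ0, hξ1⟩, h0, h2⟩ (ξ, 0) ⟨⟨hξ0, hξ1⟩, le_refl 0, ht0.le⟩ hd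
    rwa [Real.dist_eq] at this
  -- basic integrability facts
  have hIntrpow : IntervalIntegrable (fun x : ℝ => x ^ r) volume 0 1 :=
    intervalIntegral.intervalIntegrable_rpow' hrneg1
  have hrpos : (0:ℝ) < r + 1 := by linarith
  have hint_rpow : ∀ α : ℝ, (∫ x in (0:ℝ)..α, x ^ r) = α ^ (r + 1) / (r + 1) := by
    intro α
    rw [integral_rpow (Or.inl hrneg1), Real.zero_rpow (ne_of_gt hrpos), sub_zero]
  have hIntbd : ∀ (f : ℝ → ℝ) (B : ℝ), ContinuousOn f (Ioc 0 1) →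
      (∀ x ∈ Ioc (0:ℝ) 1, |f x| ≤ B) →
      IntervalIntegrable (fun x => f x * x ^ r) volume 0 1 := by
    intro f B hfc hfb
    have huIoc : uIoc (0:ℝ) 1 = Ioc (0:ℝ) 1 := uIoc_of_le zero_le_one
    apply IntervalIntegrable.mono_fun (hIntrpow.const_mul B)
    · rw [huIoc]
      exact (hfc.mul (continuousOn_id.rpow_const
        (fun x hx => Or.inl (ne_of_gt hx.1)))).aestronglyMeasurable measurableSet_Ioc
    · rw [huIoc]
      rw [Filter.EventuallyLE]
      filter_upwards [MeasureTheory.self_mem_ae_restrict measurableSet_Ioc] with x hx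
      have hxr : 0 ≤ x ^ r := Real.rpow_nonneg hx.1.le r
      have h1 : |f x| ≤ B := hfb x hx
      have hB : 0 ≤ B := le_trans (abs_nonneg _) h1
      simp only [Real.norm_eq_abs, abs_mul]
      rw [abs_of_nonneg hxr, abs_of_nonneg hB]
      exact mul_le_mul_of_nonneg_right h1 hxr
  -- integrability of the moment integrand for each time in [0,t]
  have hIntU : ∀ τ : ℝ, 0 ≤ τ → τ ≤ t →
      IntervalIntegrable (fun ξ => U ξ τ * ξ ^ r) volume 0 1 := by
    intro τ h0 h1
    apply hIntbd _ C0 ((hUcξ τ h0 h1).mono Ioc_subset_Icc_self)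
    intro x hx
    exact hC0' x (Ioc_subset_Icc_self hx) τ ⟨h0, h1⟩
  have hFsecξ : ∀ τ : ℝ, 0 < τ → τ ≤ t → ContinuousOn (fun x => F x τ) (Ioc 0 1) := by
    intro τ h0 h1
    simp only [hFdef]
    apply ContinuousOn.add
    · apply ContinuousOn.sub
      · exact (continuousOn_const.mul continuousOn_id).mul (hsecξ Uξ hUξcont τ h0 h1)
      · exact continuousOn_const.mul ((hUcξ τ h0.le h1).mono Ioc_subset_Icc_self)
    · exact continuousOn_const.mul (((hUcξ τ h0.le h1).mono Ioc_subset_Icc_self).rpow_const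
        (fun x hx => Or.inr (by positivity)))
  have hr1' : r + 1 = 2 / n := by rw [hrdef]; ring
  set c0 : ℝ := n ^ 2 * M * ((M / A) ^ q - 1) with hc0def
  -- ########## THE CORE ESTIMATE ##########
  have hcore : ∀ s' : ℝ, 0 < s' → s' < t → c0 * (t - s') ≤ ψ t - ψ s' := by
    intro s' hs'0 hs't
    have hs'T := hcoe s' hs't.le
    refine le_of_forall_pos_le_add ?_
    intro e' he'
    -- boundary flux bound at ξ = 1
    have hF1c : ∀ τ ∈ Icc s' t, c0 ≤ F 1 τ := by
      intro τ hτ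
      have hτ0 : 0 < τ := lt_of_lt_of_le hs'0 hτ.1
      have h1 : F 1 τ = n ^ 2 * Uξ 1 τ - n ^ 2 * M + (n - 1) * M ^ p := by
        simp only [hFdef]
        rw [hbc1 τ hτ0 (hcoe τ hτ.2)]; ring
      have h2 : 0 ≤ Uξ 1 τ := hUξ0 1 ⟨zero_lt_one, le_refl 1⟩ τ hτ0.le hτ.2
      have h3 : 0 ≤ n ^ 2 * Uξ 1 τ := mul_nonneg (by positivity) h2
      rw [h1, hc0def]
      linarith [hckey]
    have hFint : ∀ ξ ∈ Ioc (0:ℝ) 1, IntervalIntegrable (fun τ => F ξ τ) volume s' t := by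
      intro ξ hξ
      apply ContinuousOn.intervalIntegrable
      rw [uIcc_of_le hs't.le]
      simp only [hFdef]
      apply ContinuousOn.add
      · apply ContinuousOn.sub
        · exact continuousOn_const.mul (hsect Uξ hUξcont ξ hξ s' hs'0)
        · exact continuousOn_const.mul ((hsecU ξ (Ioc_subset_Icc_self hξ)).mono
            (Icc_subset_Icc hs'0.le (le_refl t)))
      · exact continuousOn_const.mul (((hsecU ξ (Ioc_subset_Icc_self hξ)).mono
          (Icc_subset_Icc hs'0.le (le_refl t))).rpow_const (fun τ _ => Or.inr (by positivity)))
    set K : ℝ := ∫ τ in s'..t, F 1 τ with hKdef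
    have hKge : c0 * (t - s') ≤ K := by
      have h1 : (∫ τ in s'..t, (c0:ℝ)) ≤ K :=
        intervalIntegral.integral_mono_on hs't.le intervalIntegrable_const
          (hFint 1 ⟨zero_lt_one, le_refl 1⟩) hF1c
      rwa [intervalIntegral.integral_const, smul_eq_mul, mul_comm] at h1
    -- choice of ε
    have hCγ : (0:ℝ) < t * (2 * n ^ 2 + n) := by positivity
    set ε : ℝ := min 1 (e' / (2 * (t * (2 * n ^ 2 + n)))) with hεdef
    have hε0 : 0 < ε := lt_min one_pos (by positivity)
    have hε1 : ε ≤ 1 := min_le_left _ _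
    have hγ : (t - s') * (2 * n ^ 2 * ε + (n - 1) * ε ^ p) ≤ e' / 2 := by
      have hεp : ε ^ p ≤ ε := by
        calc ε ^ p ≤ ε ^ (1:ℝ) := Real.rpow_le_rpow_of_exponent_ge hε0 hε1 hp1
          _ = ε := Real.rpow_one ε
      have hεpn : 0 ≤ ε ^ p := Real.rpow_nonneg hε0.le p
      have h2 : 2 * n ^ 2 * ε + (n - 1) * ε ^ p ≤ (2 * n ^ 2 + n) * ε := by
        have h2a := mul_le_mul_of_nonneg_left hεp (show (0:ℝ) ≤ n - 1 by linarith)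
        have h2b : (n - 1) * ε ≤ n * ε := mul_le_mul_of_nonneg_right (by linarith) hε0.le
        ring_nf
        ring_nf at h2a h2b
        linarith
      have h3 : ε ≤ e' / (2 * (t * (2 * n ^ 2 + n))) := min_le_right _ _
      have hX0 : 0 ≤ 2 * n ^ 2 * ε + (n - 1) * ε ^ p := by
        have h6 := mul_nonneg (show (0:ℝ) ≤ n - 1 by linarith) hεpn
        have h7 : 0 ≤ 2 * n ^ 2 * ε :=
          mul_nonneg (mul_nonneg (by norm_num) (sq_nonneg n)) hε0.le
        linarith
      have hY0 : 0 ≤ (2 * n ^ 2 + n) * ε :=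
        mul_nonneg (by nlinarith [sq_nonneg n]) hε0.le
      have h4 : (t - s') * (2 * n ^ 2 * ε + (n - 1) * ε ^ p) ≤ t * ((2 * n ^ 2 + n) * ε) :=
        le_trans (mul_le_mul_of_nonneg_left h2 (by linarith))
          (mul_le_mul_of_nonneg_right (by linarith) hY0)
      have h5 := mul_le_mul_of_nonneg_left h3 hCγ.le
      have heq : t * (2 * n ^ 2 + n) * (e' / (2 * (t * (2 * n ^ 2 + n)))) = e' / 2 := by
        field_simp
      ring_nf
      ring_nf at h4 h5 heq
      linarith
    -- choice of the small scale b (with a = b/2)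
    obtain ⟨δ, hδ0, hδ⟩ := hUsmall ε hε0
    set δ' : ℝ := min δ (1/2) with hδ'def
    have hδ'0 : 0 < δ' := lt_min hδ0 (by norm_num)
    set Eb : ℝ := e' / (M * n) with hEbdef
    have hEb0 : 0 < Eb := by positivity
    set b : ℝ := min (δ' / 2) (Eb ^ (n / 2)) with hbdef
    have hb0 : 0 < b := lt_min (by positivity) (by positivity)
    set a : ℝ := b / 2 with hadef
    have ha0 : 0 < a := by positivity
    have hab' : a ≤ b := by rw [hadef]; linarith
    have hble : b ≤ δ' / 2 := min_le_left _ _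
    have hδ'δ : δ' ≤ δ := min_le_left _ _
    have hδ'half : δ' ≤ 1/2 := min_le_right _ _
    have hb1 : b < 1 := by linarith
    have hbδ : b < δ := by linarith
    have hbE : b ^ (r + 1) ≤ Eb := by
      calc b ^ (r + 1) ≤ (Eb ^ (n / 2)) ^ (r + 1) :=
            Real.rpow_le_rpow hb0.le (min_le_right _ _) (by linarith)
        _ = Eb := by
            rw [← Real.rpow_mul hEb0.le, hr1',
              show n / 2 * (2 / n) = 1 by field_simp, Real.rpow_one]
    have hbM : M * (n / 2) * b ^ (r + 1) ≤ e' / 2 := by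
      have h6 := mul_le_mul_of_nonneg_left hbE (show (0:ℝ) ≤ M * (n / 2) by positivity)
      have heq2 : M * (n / 2) * Eb = e' / 2 := by
        rw [hEbdef]; field_simp
      linarith
    have hUe : ∀ α : ℝ, 0 ≤ α → α ≤ b → ∀ τ ∈ Icc s' t, U α τ ≤ ε := by
      intro α h0 h1 τ hτ
      have hτ0 : 0 < τ := lt_of_lt_of_le hs'0 hτ.1
      have h2' := hδ α h0 (lt_of_le_of_lt h1 hbδ) (by linarith) τ hτ0.le hτ.2
      rw [hbc0 τ hτ0 (hcoe τ hτ.2), sub_zero] at h2'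
      exact le_of_lt (lt_of_le_of_lt (le_abs_self _) h2')
    have hident : ∀ α ∈ Icc a b, (∫ ξ in α..1, ξ ^ r * (U ξ t - U ξ s')) =
        K - ∫ τ in s'..t, F α τ := by
      intro α hα
      have hα01 : α ∈ Ioo (0:ℝ) 1 := ⟨lt_of_lt_of_le ha0 hα.1, lt_of_le_of_lt hα.2 hb1⟩
      have hfc : ContinuousOn (fun pp : ℝ × ℝ => pp.1 ^ r * Ut pp.1 pp.2)
          (Icc α 1 ×ˢ Icc s' t) := by
        apply ContinuousOn.mul
        · apply ContinuousOn.rpow_const (continuous_fst.continuousOn)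
          intro x hx
          exact Or.inl (ne_of_gt (lt_of_lt_of_le hα01.1 hx.1.1))
        · exact hUtcont.mono (fun pp hp => ⟨⟨lt_of_lt_of_le hα01.1 hp.1.1, hp.1.2⟩,
            lt_of_lt_of_le hs'0 hp.2.1, hcoe pp.2 hp.2.2⟩)
      obtain ⟨hsw, hm1, hm2⟩ := fubini_aux (f := fun ξ τ => ξ ^ r * Ut ξ τ) hα01.2.le hs't.le hfc
      have hL : (∫ ξ in α..1, ξ ^ r * (U ξ t - U ξ s')) =
          ∫ ξ in α..1, (∫ τ in s'..t, ξ ^ r * Ut ξ τ) := by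
        apply intervalIntegral.integral_congr
        intro ξ hξ
        rw [uIcc_of_le hα01.2.le] at hξ
        have hξIoc : ξ ∈ Ioc (0:ℝ) 1 := ⟨lt_of_lt_of_le hα01.1 hξ.1, hξ.2⟩
        dsimp only
        rw [hFTCt s' hs'0 hs't.le ξ hξIoc, intervalIntegral.integral_const_mul]
      calc (∫ ξ in α..1, ξ ^ r * (U ξ t - U ξ s'))
          = ∫ ξ in α..1, (∫ τ in s'..t, ξ ^ r * Ut ξ τ) := hL
        _ = ∫ τ in s'..t, (∫ ξ in α..1, ξ ^ r * Ut ξ τ) := hsw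
        _ = ∫ τ in s'..t, (F 1 τ - F α τ) := by
            apply intervalIntegral.integral_congr
            intro τ hτ
            rw [uIcc_of_le hs't.le] at hτ
            exact hFTCxi τ (lt_of_lt_of_le hs'0 hτ.1) hτ.2 α hα01
        _ = K - ∫ τ in s'..t, F α τ := by
            rw [intervalIntegral.integral_sub (hFint 1 ⟨zero_lt_one, le_refl 1⟩)
              (hFint α ⟨hα01.1, hα01.2.le⟩), hKdef]
    have hIntD : IntervalIntegrable (fun ξ => ξ ^ r * (U ξ t - U ξ s')) volume 0 1 := by
      have h1 := hIntbd (fun ξ => U ξ t - U ξ s') (2 * C0)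
          (((hUcξ t ht0.le (le_refl t)).mono Ioc_subset_Icc_self).sub
            ((hUcξ s' hs'0.le hs't.le).mono Ioc_subset_Icc_self))
          (fun x hx => by
            have h2' := hC0' x (Ioc_subset_Icc_self hx) t ⟨ht0.le, le_refl t⟩
            have h3' := hC0' x (Ioc_subset_Icc_self hx) s' ⟨hs'0.le, hs't.le⟩
            have h4' : |U x t - U x s'| ≤ |U x t| + |U x s'| := by
              rw [sub_eq_add_neg]
              refine le_trans (abs_add_le _ _) ?_
              rw [abs_neg]
            linarith)
      have h2 : (fun ξ : ℝ => ξ ^ r * (U ξ t - U ξ s')) =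
          (fun ξ : ℝ => (U ξ t - U ξ s') * ξ ^ r) := by funext ξ; ring
      rwa [h2]
    have hD0 : (∫ ξ in (0:ℝ)..1, ξ ^ r * (U ξ t - U ξ s')) = ψ t - ψ s' := by
      rw [hψ t ht0.le htT, hψ s' hs'0.le hs'T,
        ← intervalIntegral.integral_sub (hIntU t ht0.le (le_refl t))
          (hIntU s' hs'0.le hs't.le)]
      apply intervalIntegral.integral_congr
      intro ξ _
      ring
    have hDα : ∀ α ∈ Icc a b, (∫ ξ in α..1, ξ ^ r * (U ξ t - U ξ s'))
        ≤ (ψ t - ψ s') + e' / 2 := by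
      intro α hα
      have hα0 : 0 < α := lt_of_lt_of_le ha0 hα.1
      have hα1 : α < 1 := lt_of_le_of_lt hα.2 hb1
      have hI1 : IntervalIntegrable (fun ξ => ξ ^ r * (U ξ t - U ξ s')) volume 0 α :=
        hIntD.mono_set (by
          rw [uIcc_of_le hα0.le, uIcc_of_le zero_le_one]
          exact Icc_subset_Icc (le_refl 0) hα1.le)
      have hI2 : IntervalIntegrable (fun ξ => ξ ^ r * (U ξ t - U ξ s')) volume α 1 :=
        hIntD.mono_set (by
          rw [uIcc_of_le hα1.le, uIcc_of_le zero_le_one]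
          exact Icc_subset_Icc hα0.le (le_refl 1))
      have hsplit := intervalIntegral.integral_add_adjacent_intervals hI1 hI2
      have hlow : -(M * (n / 2) * b ^ (r + 1)) ≤
          ∫ ξ in (0:ℝ)..α, ξ ^ r * (U ξ t - U ξ s') := by
        have hc : IntervalIntegrable (fun x : ℝ => -M * x ^ r) volume 0 α :=
          (intervalIntegral.intervalIntegrable_rpow' hrneg1).const_mul (-M)
        have hmono' : ∀ x ∈ Icc (0:ℝ) α, -M * x ^ r ≤ x ^ r * (U x t - U x s') := by
          intro x hx
          have hx01 : x ∈ Icc (0:ℝ) 1 := ⟨hx.1, le_trans hx.2 (le_trans hα.2 hb1.le)⟩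
          have h1' : U x s' ≤ M := hUM x hx01 s' hs'0 hs't.le
          have h2' : 0 ≤ U x t := hU0 x hx01 t ht0.le (le_refl t)
          have h3' : 0 ≤ x ^ r := Real.rpow_nonneg hx.1 r
          calc -M * x ^ r = x ^ r * (-M) := by ring
            _ ≤ x ^ r * (U x t - U x s') :=
              mul_le_mul_of_nonneg_left (by linarith) h3'
        have h5' := intervalIntegral.integral_mono_on hα0.le hc hI1 hmono'
        have h6' : (∫ x in (0:ℝ)..α, -M * x ^ r) = -M * (α ^ (r+1) / (r+1)) := by
          rw [intervalIntegral.integral_const_mul, hint_rpow α]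
        have h7' : α ^ (r+1) ≤ b ^ (r+1) :=
          Real.rpow_le_rpow hα0.le hα.2 (by linarith)
        have h8' : -(M * (n/2) * b ^ (r+1)) ≤ -M * (α ^ (r+1) / (r+1)) := by
          have h9 := mul_le_mul_of_nonneg_left h7' (show (0:ℝ) ≤ M * (n/2) by positivity)
          have h10 : α ^ (r+1) / (r+1) = n/2 * α ^ (r+1) := by
            rw [hr1']
            field_simp
          rw [h10]
          ring_nf
          ring_nf at h9
          linarith
        rw [h6'] at h5'
        linarith
      linarith [hsplit, hlow, hbM, hD0]
    have hglow : ∀ α ∈ Icc a b, K - (ψ t - ψ s') - e'/2 ≤ ∫ τ in s'..t, F α τ := by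
      intro α hα
      have h1 := hident α hα
      have h2 := hDα α hα
      linarith
    have hsubp2 : (Icc a b ×ˢ Icc s' t : Set (ℝ × ℝ)) ⊆
        Icc (0:ℝ) 1 ×ˢ {τ : ℝ | 0 ≤ τ ∧ (τ:EReal) < T} := by
      intro pp hp
      exact ⟨⟨le_trans ha0.le hp.1.1, le_trans hp.1.2 hb1.le⟩,
        le_trans hs'0.le hp.2.1, hcoe pp.2 hp.2.2⟩
    have hsubp : (Icc a b ×ˢ Icc s' t : Set (ℝ × ℝ)) ⊆
        Ioc (0:ℝ) 1 ×ˢ {τ : ℝ | 0 < τ ∧ (τ:EReal) < T} := by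
      intro pp hp
      exact ⟨⟨lt_of_lt_of_le ha0 hp.1.1, le_trans hp.1.2 hb1.le⟩,
        lt_of_lt_of_le hs'0 hp.2.1, hcoe pp.2 hp.2.2⟩
    have hFcont2 : ContinuousOn (fun pp : ℝ × ℝ => F pp.1 pp.2) (Icc a b ×ˢ Icc s' t) := by
      simp only [hFdef]
      apply ContinuousOn.add
      · apply ContinuousOn.sub
        · exact (continuousOn_const.mul continuous_fst.continuousOn).mul (hUξcont.mono hsubp)
        · exact continuousOn_const.mul (hcont.mono hsubp2)
      · exact continuousOn_const.mul ((hcont.mono hsubp2).rpow_const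
          (fun _ _ => Or.inr (by positivity)))
    obtain ⟨hswF, hmF1, hmF2⟩ := fubini_aux (f := F) hab' hs't.le hFcont2
    have h4' : (b - a) * (K - (ψ t - ψ s') - e'/2) ≤
        ∫ α in a..b, (∫ τ in s'..t, F α τ) := by
      have h1 := intervalIntegral.integral_mono_on hab' intervalIntegrable_const hmF1 hglow
      rwa [intervalIntegral.integral_const, smul_eq_mul] at h1
    have h6' : ∀ τ ∈ Icc s' t, (∫ α in a..b, F α τ)
        ≤ (b - a) * (2*n^2*ε + (n-1)*ε^p) := by
      intro τ hτ
      have hτ0 : 0 < τ := lt_of_lt_of_le hs'0 hτ.1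
      have hτT := hcoe τ hτ.2
      have hsubab : Icc a b ⊆ Icc (0:ℝ) 1 := Icc_subset_Icc ha0.le hb1.le
      have hsubab' : Icc a b ⊆ Ioc (0:ℝ) 1 :=
        fun x hx => ⟨lt_of_lt_of_le ha0 hx.1, le_trans hx.2 hb1.le⟩
      have hUab : (∫ α in a..b, Uξ α τ) = U b τ - U a τ := by
        apply intervalIntegral.integral_eq_sub_of_hasDeriv_right_of_le
          (f := fun x => U x τ) (f' := fun x => Uξ x τ) hab'
        · exact (hUcξ τ hτ0.le hτ.2).mono hsubab
        · intro x hx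
          have hx01 : x ∈ Ioo (0:ℝ) 1 := ⟨lt_trans ha0 hx.1, lt_trans hx.2 hb1⟩
          exact (((hC1 τ hτ0.le hτT).1 x ⟨hx01.1.le, hx01.2.le⟩).hasDerivAt
            (mem_nhds_iff.mpr ⟨Ioo 0 1, Ioo_subset_Icc_self, isOpen_Ioo, hx01⟩)).hasDerivWithinAt
        · apply ContinuousOn.intervalIntegrable
          rw [uIcc_of_le hab']
          exact (hC1 τ hτ0.le hτT).2.mono hsubab
      have hUbe : U b τ - U a τ ≤ ε := by
        have h1 := hUe b hb0.le (le_refl b) τ hτ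
        have h2 := hU0 a ⟨ha0.le, by linarith⟩ τ (le_trans hs'0.le hτ.1) hτ.2
        linarith
      have hFb : ∀ x ∈ Icc a b, F x τ ≤ n^2 * b * Uξ x τ + (n-1) * ε ^ p := by
        intro x hx
        have hx01 : x ∈ Icc (0:ℝ) 1 := hsubab hx
        have hxIoc : x ∈ Ioc (0:ℝ) 1 := hsubab' hx
        have h1 : 0 ≤ Uξ x τ := hUξ0 x hxIoc τ (le_trans hs'0.le hτ.1) hτ.2
        have h2 : 0 ≤ U x τ := hU0 x hx01 τ (le_trans hs'0.le hτ.1) hτ.2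
        have h3 : U x τ ≤ ε := hUe x hx01.1 hx.2 τ hτ
        have h4 : U x τ ^ p ≤ ε ^ p := Real.rpow_le_rpow h2 h3 (by linarith)
        have h5 : n^2 * x * Uξ x τ ≤ n^2 * b * Uξ x τ :=
          mul_le_mul_of_nonneg_right
            (mul_le_mul_of_nonneg_left hx.2 (sq_nonneg n)) h1
        have h6 : 0 ≤ n^2 * U x τ := by positivity
        have h7 : (n-1) * U x τ ^ p ≤ (n-1) * ε ^ p :=
          mul_le_mul_of_nonneg_left h4 (by linarith)
        simp only [hFdef]
        linarith
      have hFxint : IntervalIntegrable (fun x => F x τ) volume a b := by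
        apply ContinuousOn.intervalIntegrable
        rw [uIcc_of_le hab']
        exact (hFsecξ τ hτ0 hτ.2).mono hsubab'
      have hUξint : IntervalIntegrable (fun x => Uξ x τ) volume a b := by
        apply ContinuousOn.intervalIntegrable
        rw [uIcc_of_le hab']
        exact (hsecξ Uξ hUξcont τ hτ0 hτ.2).mono hsubab'
      calc (∫ α in a..b, F α τ)
          ≤ ∫ x in a..b, (n^2 * b * Uξ x τ + (n-1) * ε^p) :=
            intervalIntegral.integral_mono_on hab' hFxint
              ((hUξint.const_mul _).add intervalIntegrable_const) hFb
        _ = n^2 * b * (U b τ - U a τ) + (b - a) * ((n-1) * ε^p) := by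
            rw [intervalIntegral.integral_add (hUξint.const_mul _) intervalIntegrable_const,
              intervalIntegral.integral_const_mul, hUab, intervalIntegral.integral_const,
              smul_eq_mul]
        _ ≤ (b - a) * (2*n^2*ε + (n-1)*ε^p) := by
            have hb2a : b = 2*a := by rw [hadef]; ring
            have h9 := mul_le_mul_of_nonneg_left hUbe (show (0:ℝ) ≤ n^2*b by positivity)
            have h10 : (b - a) * (2*n^2*ε + (n-1)*ε^p) =
                n^2*b*ε + (b-a)*((n-1)*ε^p) := by rw [hb2a]; ring
            linarith [h9, h10]
    have h7' : (∫ τ in s'..t, ∫ α in a..b, F α τ)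
        ≤ (t - s') * ((b-a) * (2*n^2*ε + (n-1)*ε^p)) := by
      have h1 := intervalIntegral.integral_mono_on hs't.le hmF2 intervalIntegrable_const h6'
      rwa [intervalIntegral.integral_const, smul_eq_mul] at h1
    have hba0 : 0 < b - a := by rw [hadef]; linarith
    have h11 := le_trans h4' (le_trans (le_of_eq hswF) h7')
    have h12 : K - (ψ t - ψ s') - e'/2 ≤ (t - s') * (2*n^2*ε + (n-1)*ε^p) := by
      have h13 : (t - s') * ((b-a) * (2*n^2*ε + (n-1)*ε^p)) =
          (b - a) * ((t - s') * (2*n^2*ε + (n-1)*ε^p)) := by ring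
      rw [h13] at h11
      exact le_of_mul_le_mul_left h11 hba0
    linarith [hKge, hγ, h12]
  -- ########## FINAL ASSEMBLY ##########
  rw [ge_iff_le]
  refine le_of_forall_pos_le_add ?_
  intro e he
  set m : ℝ := e / (2 * (|c0| + 1)) with hmdef
  have hm0 : 0 < m := by positivity
  have hn2' : (0:ℝ) < n/2 + 1 := by positivity
  obtain ⟨δ, hδ0, hδ⟩ := hUsmallt (e/2 / (n/2 + 1)) (by positivity)
  set s' : ℝ := min (min (δ/2) (t/2)) m with hs'def
  have hs'0 : 0 < s' := lt_min (lt_min (by positivity) (by positivity)) hm0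
  have hs't : s' < t :=
    lt_of_le_of_lt (le_trans (min_le_left _ _) (min_le_right _ _)) (by linarith)
  have hs'm : s' ≤ m := min_le_right _ _
  have hs'δ : s' < δ :=
    lt_of_le_of_lt (le_trans (min_le_left _ _) (min_le_left _ _)) (by linarith)
  have hψd : |ψ s' - ψ 0| ≤ e/2 := by
    have hsm : ∀ ξ ∈ Icc (0:ℝ) 1, |U ξ s' - U ξ 0| ≤ e/2 / (n/2+1) :=
      fun ξ hξ => (hδ s' hs'0.le hs'δ hs't.le ξ hξ.1 hξ.2).le
    have hintdiff := intervalIntegral.integral_sub (hIntU s' hs'0.le hs't.le)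
        (hIntU 0 (le_refl 0) ht0.le)
    rw [hψ s' hs'0.le (hcoe s' hs't.le), hψ 0 (le_refl 0) (hcoe 0 ht0.le), ← hintdiff]
    have hb1' := intervalIntegral.norm_integral_le_abs_of_norm_le
        (f := fun ξ => U ξ s' * ξ^r - U ξ 0 * ξ^r)
        (g := fun ξ => (e/2/(n/2+1)) * ξ ^ r) ?_ (hIntrpow.const_mul _)
    · have hval : (∫ ξ in (0:ℝ)..1, (e/2/(n/2+1)) * ξ ^ r) = (e/2/(n/2+1)) * (n/2) := by
        rw [intervalIntegral.integral_const_mul, hint_rpow 1, Real.one_rpow, hr1']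
        congr 1
        rw [one_div_div]
      rw [Real.norm_eq_abs] at hb1'
      have hval' : |∫ ξ in (0:ℝ)..1, (e/2/(n/2+1)) * ξ ^ r| = (e/2/(n/2+1)) * (n/2) := by
        rw [hval, abs_of_nonneg (by positivity)]
      rw [hval'] at hb1'
      refine le_trans hb1' ?_
      have h1 : (e/2/(n/2+1)) * (n/2) ≤ (e/2/(n/2+1)) * (n/2+1) :=
        mul_le_mul_of_nonneg_left (by linarith) (by positivity)
      rw [div_mul_cancel₀ _ (ne_of_gt hn2')] at h1
      exact h1
    · have huIoc : uIoc (0:ℝ) 1 = Ioc (0:ℝ) 1 := uIoc_of_le zero_le_one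
      rw [huIoc]
      filter_upwards [MeasureTheory.self_mem_ae_restrict measurableSet_Ioc] with x hx
      have hfac : U x s' * x^r - U x 0 * x^r = (U x s' - U x 0) * x^r := by ring
      rw [Real.norm_eq_abs, hfac, abs_mul, abs_of_nonneg (Real.rpow_nonneg hx.1.le r)]
      exact mul_le_mul_of_nonneg_right (hsm x (Ioc_subset_Icc_self hx))
        (Real.rpow_nonneg hx.1.le r)
  have h1 := hcore s' hs'0 hs't
  have habs := abs_le.mp hψd
  have h2 : c0 * s' ≤ |c0| * s' := mul_le_mul_of_nonneg_right (le_abs_self c0) hs'0.le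
  have h3 : |c0| * s' ≤ e/2 := by
    have h4 := mul_le_mul_of_nonneg_left hs'm (abs_nonneg c0)
    have h5 : |c0| * m ≤ e/2 := by
      have h6 : |c0| * (e / (2 * (|c0| + 1))) ≤ (|c0|+1) * (e / (2 * (|c0| + 1))) :=
        mul_le_mul_of_nonneg_right (by linarith [abs_nonneg c0]) (by positivity)
      have h7 : (|c0|+1) * (e / (2 * (|c0| + 1))) = e/2 := by
        field_simp
      rw [hmdef]
      linarith
    linarith
  linarith
end

section
/- Let N ≥ 2 be an integer, A := (N²/(N−1))^{N−1}, and λ > 0. Define W_λ(ξ) := A λ^N ξ (1 + (λ^N ξ)^{1/(N−1)})^{1−N} for ξ ≥ 0. Then W_λ is continuous on [0,∞) and twice continuously differentiable on (0,∞), W_λ(0) = 0, its derivative satisfies W_λ′(ξ) = A λ^N (1 + (λ^N ξ)^{1/(N−1)})^{−N} > 0 for all ξ > 0, it solves the ordinary differential equation N ξ W_λ″(ξ) + W_λ(ξ)^{1/(N−1)} W_λ′(ξ) = 0 for all ξ > 0, it is strictly increasing and concave on [0,∞), 0 ≤ W_λ < A, and W_λ(ξ) → A as ξ → ∞. -/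
open Set Filter

/-- **Properties of the explicit stationary profiles `W_λ`.**
For `N ≥ 2`, `A = (N²/(N−1))^(N−1)` and `λ > 0`, the function
`W_λ(ξ) = A λ^N ξ (1+(λ^N ξ)^{1/(N−1)})^{1−N}` is continuous on `[0,∞)`, `C²` on `(0,∞)`,
vanishes at `0`, has derivative `A λ^N (1+(λ^N ξ)^{1/(N−1)})^{−N} > 0`, solves
`N ξ W″ + W^{1/(N−1)} W′ = 0` on `(0,∞)`, is strictly increasing and concave on `[0,∞)`,
satisfies `0 ≤ W_λ < A`, and tends to `A` at infinity. -/
theorem stationary_profile_properties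
    (N : ℕ) (hN : 2 ≤ N)
    (A : ℝ) (hA : A = ((N : ℝ) ^ 2 / ((N : ℝ) - 1)) ^ (N - 1))
    (lam : ℝ) (hlam : 0 < lam)
    (W : ℝ → ℝ)
    (hW : ∀ ξ : ℝ, W ξ =
      A * lam ^ N * ξ * (1 + (lam ^ N * ξ) ^ ((1 : ℝ) / ((N : ℝ) - 1))) ^ ((1 : ℝ) - N)) :
    ContinuousOn W (Ici 0) ∧
    ContDiffOn ℝ 2 W (Ioi 0) ∧
    W 0 = 0 ∧
    (∀ ξ : ℝ, 0 < ξ →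
      HasDerivAt W (A * lam ^ N * (1 + (lam ^ N * ξ) ^ ((1 : ℝ) / ((N : ℝ) - 1))) ^ (-(N : ℝ))) ξ ∧
      0 < A * lam ^ N * (1 + (lam ^ N * ξ) ^ ((1 : ℝ) / ((N : ℝ) - 1))) ^ (-(N : ℝ))) ∧
    (∀ ξ : ℝ, 0 < ξ →
      (N : ℝ) * ξ * deriv (deriv W) ξ + (W ξ) ^ ((1 : ℝ) / ((N : ℝ) - 1)) * deriv W ξ = 0) ∧
    StrictMonoOn W (Ici 0) ∧
    ConcaveOn ℝ (Ici 0) W ∧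
    (∀ ξ : ℝ, 0 ≤ ξ → 0 ≤ W ξ ∧ W ξ < A) ∧
    Tendsto W atTop (nhds A) := by
  have hN2 : (2:ℝ) ≤ (N:ℝ) := by exact_mod_cast hN
  have hN0 : (0:ℝ) < (N:ℝ) - 1 := by linarith
  obtain ⟨p, hp_def⟩ : ∃ p : ℝ, p = (1:ℝ) / ((N:ℝ) - 1) := ⟨_, rfl⟩
  rw [show ((1:ℝ) / ((N:ℝ) - 1)) = p from hp_def.symm] at hW ⊢
  have hp : 0 < p := by rw [hp_def]; positivity
  have hpN : p * ((N:ℝ) - 1) = 1 := by rw [hp_def]; field_simp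
  set c : ℝ := lam ^ N with hc_def
  have hc : 0 < c := pow_pos hlam N
  have hA0 : 0 < A := by rw [hA]; positivity
  have hcast : ((N - 1 : ℕ) : ℝ) = (N:ℝ) - 1 := by
    rw [Nat.cast_sub (by omega : 1 ≤ N), Nat.cast_one]
  have hWfun : W = fun x : ℝ => A * c * x * (1 + (c*x)^p) ^ ((1:ℝ) - (N:ℝ)) :=
    funext fun x => hW x
  -- derivative
  have hderiv : ∀ ξ : ℝ, 0 < ξ →
      HasDerivAt W (A * c * (1 + (c*ξ)^p) ^ (-(N:ℝ))) ξ := by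
    intro ξ hξ
    have hcξ : 0 < c * ξ := mul_pos hc hξ
    have hu : 0 < (c*ξ)^p := Real.rpow_pos_of_pos hcξ _
    have h1u : (0:ℝ) < 1 + (c*ξ)^p := by linarith
    have h2 : HasDerivAt (fun x : ℝ => (c*x)^p) (p * (c*ξ)^(p-1) * c) ξ := by
      have h0 : HasDerivAt (fun x : ℝ => c * x) c ξ := by
        simpa using (hasDerivAt_id ξ).const_mul c
      simpa [Function.comp_def] using (Real.hasDerivAt_rpow_const (p := p) (Or.inl hcξ.ne')).comp ξ h0
    have h3 : HasDerivAt (fun x : ℝ => 1 + (c*x)^p) (p * (c*ξ)^(p-1) * c) ξ :=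
      h2.const_add 1
    have h4 : HasDerivAt (fun x : ℝ => (1 + (c*x)^p) ^ ((1:ℝ) - (N:ℝ)))
        (((1:ℝ) - (N:ℝ)) * (1 + (c*ξ)^p) ^ ((1:ℝ) - (N:ℝ) - 1) * (p * (c*ξ)^(p-1) * c)) ξ := by
      simpa [mul_assoc, Function.comp_def] using
        (Real.hasDerivAt_rpow_const (p := (1:ℝ) - (N:ℝ)) (Or.inl h1u.ne')).comp ξ h3
    have h5 : HasDerivAt (fun x : ℝ => A * c * x) (A * c) ξ := by
      simpa using (hasDerivAt_id ξ).const_mul (A*c)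
    have h6 := h5.mul h4
    rw [hWfun]
    refine h6.congr_deriv ?_
    symm
    have e2 : (1 + (c*ξ)^p) ^ ((1:ℝ) - (N:ℝ) - 1) = (1 + (c*ξ)^p) ^ (-(N:ℝ)) := by
      norm_num
    have e1 : (1 + (c*ξ)^p) ^ ((1:ℝ) - (N:ℝ))
        = (1 + (c*ξ)^p) * (1 + (c*ξ)^p) ^ (-(N:ℝ)) := by
      rw [show (1:ℝ) - (N:ℝ) = 1 + -(N:ℝ) by ring, Real.rpow_add h1u, Real.rpow_one]
    have e3 : (c*ξ) * (c*ξ)^(p-1) = (c*ξ)^p := by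
      rw [Real.rpow_sub hcξ, Real.rpow_one, mul_div_cancel₀ _ hcξ.ne']
    have e4 : p * ((1:ℝ) - (N:ℝ)) = -1 := by linear_combination -hpN
    rw [e2, e1]
    linear_combination (-(A * c * (1 + (c*ξ)^p) ^ (-(N:ℝ)) * ((c*ξ)^p))) * e4
      + (-(A * c * (1 + (c*ξ)^p) ^ (-(N:ℝ)) * (p * ((1:ℝ) - (N:ℝ))))) * e3
  have hderiv_eq : ∀ ξ : ℝ, 0 < ξ → deriv W ξ = A * c * (1 + (c*ξ)^p) ^ (-(N:ℝ)) :=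
    fun ξ hξ => (hderiv ξ hξ).deriv
  have hpos : ∀ ξ : ℝ, 0 < ξ → 0 < A * c * (1 + (c*ξ)^p) ^ (-(N:ℝ)) := by
    intro ξ hξ
    have hcξ : 0 < c * ξ := mul_pos hc hξ
    have hu : 0 < (c*ξ)^p := Real.rpow_pos_of_pos hcξ _
    exact mul_pos (mul_pos hA0 hc) (Real.rpow_pos_of_pos (by linarith) _)
  -- second derivative
  have hderiv2 : ∀ ξ : ℝ, 0 < ξ → HasDerivAt (deriv W)
      (A * c * (-(N:ℝ) * (1 + (c*ξ)^p) ^ (-(N:ℝ) - 1) * (p * (c*ξ)^(p-1) * c))) ξ := by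
    intro ξ hξ
    have hcξ : 0 < c * ξ := mul_pos hc hξ
    have hu : 0 < (c*ξ)^p := Real.rpow_pos_of_pos hcξ _
    have h1u : (0:ℝ) < 1 + (c*ξ)^p := by linarith
    have h2 : HasDerivAt (fun x : ℝ => (c*x)^p) (p * (c*ξ)^(p-1) * c) ξ := by
      have h0 : HasDerivAt (fun x : ℝ => c * x) c ξ := by
        simpa using (hasDerivAt_id ξ).const_mul c
      simpa [Function.comp_def] using (Real.hasDerivAt_rpow_const (p := p) (Or.inl hcξ.ne')).comp ξ h0
    have h3 : HasDerivAt (fun x : ℝ => 1 + (c*x)^p) (p * (c*ξ)^(p-1) * c) ξ :=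
      h2.const_add 1
    have h4 : HasDerivAt (fun x : ℝ => (1 + (c*x)^p) ^ (-(N:ℝ)))
        (-(N:ℝ) * (1 + (c*ξ)^p) ^ (-(N:ℝ) - 1) * (p * (c*ξ)^(p-1) * c)) ξ := by
      simpa [mul_assoc, Function.comp_def] using
        (Real.hasDerivAt_rpow_const (p := -(N:ℝ)) (Or.inl h1u.ne')).comp ξ h3
    have h5 : HasDerivAt (fun x : ℝ => A * c * (1 + (c*x)^p) ^ (-(N:ℝ)))
        (A * c * (-(N:ℝ) * (1 + (c*ξ)^p) ^ (-(N:ℝ) - 1) * (p * (c*ξ)^(p-1) * c))) ξ :=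
      h4.const_mul (A*c)
    refine h5.congr_of_eventuallyEq ?_
    filter_upwards [Ioi_mem_nhds hξ] with x hx
    exact hderiv_eq x hx
  -- continuity on [0, ∞)
  have hcont : ContinuousOn W (Ici 0) := by
    intro ξ hξ
    have hu : 0 ≤ (c*ξ)^p := Real.rpow_nonneg (mul_nonneg hc.le hξ) _
    have hbase : (0:ℝ) < 1 + (c*ξ)^p := by linarith
    have ci : ContinuousAt (fun x : ℝ => (c*x)^p) ξ :=
      (continuousAt_const.mul continuousAt_id).rpow_const (Or.inr hp.le)
    have cm : ContinuousAt (fun x : ℝ => 1 + (c*x)^p) ξ := continuousAt_const.add ci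
    have co : ContinuousAt (fun x : ℝ => (1 + (c*x)^p) ^ ((1:ℝ) - (N:ℝ))) ξ :=
      cm.rpow_const (Or.inl hbase.ne')
    have : ContinuousAt W ξ := by
      rw [hWfun]
      exact (continuousAt_const.mul continuousAt_id).mul co
    exact this.continuousWithinAt
  -- C² on (0, ∞)
  have hCD : ContDiffOn ℝ 2 W (Ioi 0) := by
    intro ξ hξ
    have hcξ : 0 < c * ξ := mul_pos hc hξ
    have hu : 0 < (c*ξ)^p := Real.rpow_pos_of_pos hcξ _
    have h1u : (0:ℝ) < 1 + (c*ξ)^p := by linarith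
    have c0 : ContDiffAt ℝ 2 (fun x : ℝ => c * x) ξ := (contDiff_const.mul contDiff_id).contDiffAt
    have c1 : ContDiffAt ℝ 2 (fun x : ℝ => (c*x)^p) ξ :=
      (Real.contDiffAt_rpow_const_of_ne hcξ.ne').comp ξ c0
    have c2 : ContDiffAt ℝ 2 (fun x : ℝ => (1 + (c*x)^p) ^ ((1:ℝ) - (N:ℝ))) ξ :=
      ContDiffAt.comp (g := fun y : ℝ => y ^ ((1:ℝ) - (N:ℝ))) (f := fun x : ℝ => 1 + (c*x)^p) ξ
        (Real.contDiffAt_rpow_const_of_ne h1u.ne') (contDiffAt_const.add c1)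
    have : ContDiffAt ℝ 2 W ξ := by
      rw [hWfun]
      exact (contDiffAt_const.mul contDiffAt_id).mul c2
    exact this.contDiffWithinAt
  -- value at 0
  have hW0 : W 0 = 0 := by rw [hW 0]; ring
  -- the ODE
  have hODE : ∀ ξ : ℝ, 0 < ξ →
      (N : ℝ) * ξ * deriv (deriv W) ξ + (W ξ) ^ p * deriv W ξ = 0 := by
    intro ξ hξ
    have hcξ : 0 < c * ξ := mul_pos hc hξ
    have hu : 0 < (c*ξ)^p := Real.rpow_pos_of_pos hcξ _
    have h1u : (0:ℝ) < 1 + (c*ξ)^p := by linarith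
    have hd2 : deriv (deriv W) ξ
        = A * c * (-(N:ℝ) * (1 + (c*ξ)^p) ^ (-(N:ℝ) - 1) * (p * (c*ξ)^(p-1) * c)) :=
      (hderiv2 ξ hξ).deriv
    have hAp : A ^ p = (N:ℝ)^2 / ((N:ℝ) - 1) := by
      have hB : (0:ℝ) < (N:ℝ)^2 / ((N:ℝ)-1) := by positivity
      rw [hA, ← Real.rpow_natCast ((N:ℝ)^2 / ((N:ℝ)-1)) (N-1), ← Real.rpow_mul hB.le,
        hcast, show ((N:ℝ)-1) * p = 1 by linear_combination hpN, Real.rpow_one]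
    have hQ : ((1 + (c*ξ)^p) ^ ((1:ℝ) - (N:ℝ))) ^ p = (1 + (c*ξ)^p) ^ (-(1:ℝ)) := by
      rw [← Real.rpow_mul h1u.le, show ((1:ℝ) - (N:ℝ)) * p = -(1:ℝ) by linear_combination -hpN]
    have hWp : (W ξ) ^ p = ((N:ℝ)^2 / ((N:ℝ)-1)) * ((c*ξ)^p * (1 + (c*ξ)^p) ^ (-(1:ℝ))) := by
      calc (W ξ) ^ p = (A * c * ξ)^p * ((1 + (c*ξ)^p) ^ ((1:ℝ) - (N:ℝ)))^p := by
            rw [hW ξ, Real.mul_rpow (by positivity) (Real.rpow_nonneg h1u.le _)]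
        _ = (A^p * (c^p * ξ^p)) * (1 + (c*ξ)^p) ^ (-(1:ℝ)) := by
            rw [hQ, Real.mul_rpow (by positivity) hξ.le, Real.mul_rpow hA0.le hc.le]; ring
        _ = ((N:ℝ)^2 / ((N:ℝ)-1)) * ((c*ξ)^p * (1 + (c*ξ)^p) ^ (-(1:ℝ))) := by
            rw [← Real.mul_rpow hc.le hξ.le, hAp]; ring
    rw [hd2, hderiv_eq ξ hξ, hWp]
    have f1 : (1 + (c*ξ)^p) ^ (-(1:ℝ)) * (1 + (c*ξ)^p) ^ (-(N:ℝ))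
        = (1 + (c*ξ)^p) ^ (-(N:ℝ) - 1) := by
      rw [← Real.rpow_add h1u]; ring_nf
    have f2 : (c*ξ) * (c*ξ)^(p-1) = (c*ξ)^p := by
      rw [Real.rpow_sub hcξ, Real.rpow_one, mul_div_cancel₀ _ hcξ.ne']
    rw [show (N:ℝ)^2 / ((N:ℝ)-1) = (N:ℝ)^2 * p by rw [hp_def]; ring]
    linear_combination
      (-(N:ℝ)^2 * A * c * (1 + (c*ξ)^p) ^ (-(N:ℝ) - 1) * p) * f2
      + ((N:ℝ)^2 * p * A * c * (c*ξ)^p) * f1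
  -- strict monotonicity
  have hmono : StrictMonoOn W (Ici 0) := by
    refine strictMonoOn_of_deriv_pos (convex_Ici 0) hcont ?_
    intro x hx
    rw [interior_Ici] at hx
    rw [hderiv_eq x hx]
    exact hpos x hx
  -- concavity
  have hconc : ConcaveOn ℝ (Ici 0) W := by
    refine concaveOn_of_deriv2_nonpos (convex_Ici 0) hcont ?_ ?_ ?_
    · intro x hx
      rw [interior_Ici] at hx
      exact (hderiv x hx).differentiableAt.differentiableWithinAt
    · intro x hx
      rw [interior_Ici] at hx
      exact (hderiv2 x hx).differentiableAt.differentiableWithinAt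
    · intro x hx
      rw [interior_Ici] at hx
      have hcx : 0 < c * x := mul_pos hc hx
      have hu : 0 < (c*x)^p := Real.rpow_pos_of_pos hcx _
      have h1u : (0:ℝ) < 1 + (c*x)^p := by linarith
      have hi2 : deriv^[2] W x
          = A * c * (-(N:ℝ) * (1 + (c*x)^p) ^ (-(N:ℝ) - 1) * (p * (c*x)^(p-1) * c)) := by
        simp only [Function.iterate_succ, Function.iterate_zero, Function.comp_apply, id_eq]
        exact (hderiv2 x hx).deriv
      rw [hi2]
      have h1 : 0 < (1 + (c*x)^p) ^ (-(N:ℝ) - 1) := Real.rpow_pos_of_pos h1u _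
      have h2 : 0 < (c*x)^(p-1) := Real.rpow_pos_of_pos hcx _
      have hNpos : (0:ℝ) < (N:ℝ) := by linarith
      nlinarith [mul_pos (mul_pos hA0 hc)
        (mul_pos (mul_pos hNpos h1) (mul_pos (mul_pos hp h2) hc))]
  -- representation W ξ = A (u/(1+u))^(N-1)
  have hrep : ∀ ξ : ℝ, 0 < ξ → W ξ = A * ((c*ξ)^p / (1 + (c*ξ)^p))^(N-1) := by
    intro ξ hξ
    have hcξ : 0 < c * ξ := mul_pos hc hξ
    have hu : 0 < (c*ξ)^p := Real.rpow_pos_of_pos hcξ _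
    have h1u : (0:ℝ) < 1 + (c*ξ)^p := by linarith
    have e1 : ((c*ξ)^p)^(N-1) = c*ξ := by
      rw [← Real.rpow_natCast ((c*ξ)^p) (N-1), hcast, ← Real.rpow_mul hcξ.le,
        hpN, Real.rpow_one]
    have e2 : (1 + (c*ξ)^p) ^ ((1:ℝ) - (N:ℝ)) = ((1 + (c*ξ)^p)^(N-1))⁻¹ := by
      rw [show (1:ℝ) - (N:ℝ) = -(((N:ℝ)-1)) by ring, Real.rpow_neg h1u.le,
        ← hcast, Real.rpow_natCast]
    rw [hW ξ, e2, div_pow, e1]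
    ring
  -- bounds
  have hbounds : ∀ ξ : ℝ, 0 ≤ ξ → 0 ≤ W ξ ∧ W ξ < A := by
    intro ξ hξ
    rcases eq_or_lt_of_le hξ with h | h
    · rw [← h, hW0]; exact ⟨le_refl 0, hA0⟩
    · have hcξ : 0 < c * ξ := mul_pos hc h
      have hu : 0 < (c*ξ)^p := Real.rpow_pos_of_pos hcξ _
      have h1u : (0:ℝ) < 1 + (c*ξ)^p := by linarith
      rw [hrep ξ h]
      constructor
      · exact mul_nonneg hA0.le (pow_nonneg (div_nonneg hu.le h1u.le) _)
      · have hlt : (c*ξ)^p / (1 + (c*ξ)^p) < 1 := (div_lt_one h1u).2 (by linarith)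
        have hnn : 0 ≤ (c*ξ)^p / (1 + (c*ξ)^p) := div_nonneg hu.le h1u.le
        have hp1 := pow_lt_one₀ hnn hlt (by omega : N - 1 ≠ 0)
        calc A * ((c*ξ)^p / (1 + (c*ξ)^p))^(N-1) < A * 1 := (mul_lt_mul_iff_right₀ hA0).2 hp1
          _ = A := mul_one A
  -- limit at infinity
  have hlim : Tendsto W atTop (nhds A) := by
    have hu_t : Tendsto (fun ξ : ℝ => (c*ξ)^p) atTop atTop :=
      (tendsto_rpow_atTop hp).comp (tendsto_id.const_mul_atTop hc)
    have h1u_t : Tendsto (fun ξ : ℝ => 1 + (c*ξ)^p) atTop atTop :=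
      tendsto_atTop_add_const_left _ 1 hu_t
    have hinv : Tendsto (fun ξ : ℝ => (1 + (c*ξ)^p)⁻¹) atTop (nhds 0) :=
      h1u_t.inv_tendsto_atTop
    have hfrac : Tendsto (fun ξ : ℝ => (c*ξ)^p / (1 + (c*ξ)^p)) atTop (nhds 1) := by
      have hev : ∀ᶠ ξ : ℝ in atTop,
          1 - (1 + (c*ξ)^p)⁻¹ = (c*ξ)^p / (1 + (c*ξ)^p) := by
        filter_upwards [eventually_gt_atTop 0] with ξ hξ
        have hcξ : 0 < c * ξ := mul_pos hc hξ
        have hu : 0 < (c*ξ)^p := Real.rpow_pos_of_pos hcξ _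
        have h1u : (0:ℝ) < 1 + (c*ξ)^p := by linarith
        field_simp
        ring
      refine Tendsto.congr' hev ?_
      simpa using tendsto_const_nhds.sub hinv
    have hmain : Tendsto (fun ξ : ℝ => A * ((c*ξ)^p / (1 + (c*ξ)^p))^(N-1)) atTop
        (nhds (A * 1^(N-1))) := tendsto_const_nhds.mul (hfrac.pow _)
    rw [show A = A * 1^(N-1) by simp]
    refine Tendsto.congr' ?_ hmain
    filter_upwards [eventually_gt_atTop 0] with ξ hξ
    exact (hrep ξ hξ).symm
  exact ⟨hcont, hCD, hW0, fun ξ hξ => ⟨hderiv ξ hξ, hpos ξ hξ⟩, hODE, hmono, hconc, hbounds, hlim⟩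
end

section
/- Let N ≥ 2 be an integer and A := (N²/(N−1))^{N−1}. Suppose W : [0,∞) → ℝ is nonnegative, continuous on [0,∞), twice continuously differentiable on (0,∞), satisfies N ξ W″(ξ) + W(ξ)^{1/(N−1)} W′(ξ) = 0 for all ξ > 0, W(0) = 0, and W is not identically zero. Then there exists λ > 0 such that W(ξ) = A λ^N ξ (1 + (λ^N ξ)^{1/(N−1)})^{1−N} for all ξ ∈ [0,∞). -/
open Set

private lemma const_of_hasDerivAt_zero' {f : ℝ → ℝ}
    (hf : ∀ x ∈ Set.Ioi (0:ℝ), HasDerivAt f 0 x) :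
    ∀ a, 0 < a → ∀ b, 0 < b → f a = f b := by
  have key : ∀ a b : ℝ, 0 < a → a ≤ b → f b = f a := by
    intro a b ha hab
    have hcont : ContinuousOn f (Set.Icc a b) := fun x hx =>
      (hf x (lt_of_lt_of_le ha hx.1)).continuousAt.continuousWithinAt
    exact constant_of_has_deriv_right_zero hcont
      (fun x hx => (hf x (lt_of_lt_of_le ha hx.1)).hasDerivWithinAt) b (Set.right_mem_Icc.2 hab)
  intro a ha b hb
  rcases le_total a b with h | h
  · exact (key a b ha h).symm
  · exact key b a hb h

set_option maxHeartbeats 1000000 in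
/-- **Uniqueness up to dilation of stationary profiles.**
If `W : [0,∞) → ℝ` is nonnegative, continuous on `[0,∞)`, `C²` on `(0,∞)`, solves
`N ξ W″ + W^{1/(N−1)} W′ = 0` on `(0,∞)`, vanishes at `0` and is not identically zero,
then `W = W_λ` for some `λ > 0`, where
`W_λ(ξ) = A λ^N ξ (1+(λ^N ξ)^{1/(N−1)})^{1−N}` and `A = (N²/(N−1))^(N−1)`. -/
theorem stationary_profile_uniqueness
    (N : ℕ) (hN : 2 ≤ N)
    (A : ℝ) (hA : A = ((N : ℝ) ^ 2 / ((N : ℝ) - 1)) ^ (N - 1))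
    (W : ℝ → ℝ)
    (hnonneg : ∀ ξ : ℝ, 0 ≤ ξ → 0 ≤ W ξ)
    (hcont : ContinuousOn W (Ici 0))
    (hC2 : ContDiffOn ℝ 2 W (Ioi 0))
    (hODE : ∀ ξ : ℝ, 0 < ξ →
      (N : ℝ) * ξ * deriv (deriv W) ξ + (W ξ) ^ ((1 : ℝ) / ((N : ℝ) - 1)) * deriv W ξ = 0)
    (hW0 : W 0 = 0)
    (hne : ∃ ξ : ℝ, 0 ≤ ξ ∧ W ξ ≠ 0) :
    ∃ lam : ℝ, 0 < lam ∧ ∀ ξ : ℝ, 0 ≤ ξ →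
      W ξ = A * lam ^ N * ξ *
        (1 + (lam ^ N * ξ) ^ ((1 : ℝ) / ((N : ℝ) - 1))) ^ ((1 : ℝ) - N) := by
  have hn1 : (1:ℝ) < (N:ℝ) := by exact_mod_cast lt_of_lt_of_le one_lt_two hN
  have hn0 : (0:ℝ) < (N:ℝ) := by linarith
  have hd1 : (0:ℝ) < (N:ℝ) - 1 := by linarith
  obtain ⟨q, hq⟩ : ∃ q : ℝ, q = (1 : ℝ) / ((N : ℝ) - 1) := ⟨_, rfl⟩
  rw [← hq] at hODE ⊢
  have hq0 : 0 < q := by rw [hq]; positivity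
  obtain ⟨c, hc⟩ : ∃ c : ℝ, c = ((N:ℝ) - 1) / (N:ℝ)^2 := ⟨_, rfl⟩
  have hc0 : 0 < c := by rw [hc]; positivity
  -- differentiability
  have hW1 : ∀ ξ ∈ Ioi (0:ℝ), HasDerivAt W (deriv W ξ) ξ := by
    intro ξ hξ
    exact ((hC2.differentiableOn (by norm_num)).differentiableAt
      (isOpen_Ioi.mem_nhds hξ)).hasDerivAt
  have hW2 : ∀ ξ ∈ Ioi (0:ℝ), HasDerivAt (deriv W) (deriv (deriv W) ξ) ξ := by
    have h1 : ContDiffOn ℝ 1 (deriv W) (Ioi 0) :=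
      hC2.deriv_of_isOpen isOpen_Ioi (by norm_num)
    intro ξ hξ
    exact ((h1.differentiableOn (by norm_num)).differentiableAt
      (isOpen_Ioi.mem_nhds hξ)).hasDerivAt
  -- the conserved energy
  set E : ℝ → ℝ := fun ξ => ξ * deriv W ξ - W ξ + c * (W ξ) ^ (1 + q) with hE
  have hp1 : (1:ℝ) ≤ 1 + q := by linarith
  have hE' : ∀ ξ ∈ Ioi (0:ℝ), HasDerivAt E 0 ξ := by
    intro ξ hξ
    have h1 : HasDerivAt (fun x : ℝ => x * deriv W x)
        (1 * deriv W ξ + ξ * deriv (deriv W) ξ) ξ := (hasDerivAt_id ξ).mul (hW2 ξ hξ)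
    have h3 : HasDerivAt (fun x : ℝ => c * (W x) ^ (1 + q))
        (c * (deriv W ξ * (1 + q) * (W ξ) ^ (1 + q - 1))) ξ :=
      ((hW1 ξ hξ).rpow_const (Or.inr hp1)).const_mul c
    have h := (h1.sub (hW1 ξ hξ)).add h3
    have hexp : 1 + q - 1 = q := by ring
    rw [hexp] at h
    refine h.congr_deriv ?_
    have hODEξ := hODE ξ hξ
    have hNne : (N:ℝ) ≠ 0 := ne_of_gt hn0
    have hcp : c * (1 + q) * (N:ℝ) = 1 := by
      rw [hc, hq]; field_simp; ring
    have hg : (N:ℝ) * (1 * deriv W ξ + ξ * deriv (deriv W) ξ - deriv W ξ +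
        c * (deriv W ξ * (1 + q) * (W ξ) ^ q)) = 0 := by
      linear_combination hODEξ + (deriv W ξ * (W ξ) ^ q) * hcp
    exact (((mul_eq_zero.mp hg).resolve_left hNne))
  have hEconst : ∀ a, 0 < a → ∀ b, 0 < b → E a = E b := const_of_hasDerivAt_zero' hE'
  -- W tends to 0 at 0+
  have hWt : Filter.Tendsto W (nhdsWithin 0 (Ioi 0)) (nhds 0) := by
    have h := (hcont 0 (self_mem_Ici)).tendsto
    rw [hW0] at h
    exact h.mono_left (nhdsWithin_mono 0 Ioi_subset_Ici_self)
  -- the constant of motion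
  obtain ⟨C, hCdef⟩ : ∃ C : ℝ, ∀ ξ, 0 < ξ →
      ξ * deriv W ξ - W ξ + c * (W ξ) ^ (1+q) = C :=
    ⟨E 1, fun ξ hξ => hEconst ξ hξ 1 one_pos⟩
  have hxW' : ∀ ξ : ℝ, 0 < ξ → ξ * deriv W ξ = C + W ξ - c * (W ξ) ^ (1+q) := by
    intro ξ hξ; have := hCdef ξ hξ; linarith
  have htend : Filter.Tendsto (fun ξ => ξ * deriv W ξ) (nhdsWithin 0 (Ioi 0)) (nhds C) := by
    have hrp : Filter.Tendsto (fun x : ℝ => x ^ (1+q)) (nhds 0) (nhds ((0:ℝ) ^ (1+q))) :=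
      (Real.continuousAt_rpow_const 0 (1+q) (Or.inr (by positivity))).tendsto
    have h1 : Filter.Tendsto (fun ξ => C + W ξ - c * (W ξ) ^ (1+q)) (nhdsWithin 0 (Ioi 0))
        (nhds (C + 0 - c * ((0:ℝ) ^ (1+q)))) :=
      (tendsto_const_nhds.add hWt).sub ((hrp.comp hWt).const_mul c)
    have h2 : C + 0 - c * ((0:ℝ) ^ (1+q)) = C := by
      rw [Real.zero_rpow (by positivity : (1:ℝ)+q ≠ 0)]; ring
    rw [h2] at h1
    exact h1.congr' (by
      filter_upwards [self_mem_nhdsWithin] with ξ hξ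
      exact (hxW' ξ hξ).symm)
  have hC0 : C = 0 := by
    rcases lt_trichotomy C 0 with hCneg | hCzero | hCpos
    · exfalso
      have hev : ∀ᶠ ξ in nhdsWithin 0 (Ioi 0),
          (ξ * deriv W ξ < C/2 ∧ W ξ < 1) ∧ ξ ∈ Ioi (0:ℝ) :=
        ((htend.eventually (eventually_lt_nhds (by linarith : C < C/2))).and
          (hWt.eventually (eventually_lt_nhds one_pos))).and self_mem_nhdsWithin
      obtain ⟨δ, hδmem, hδ⟩ := mem_nhdsGT_iff_exists_Ioo_subset.mp hev
      have hδ0 : (0:ℝ) < δ := hδmem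
      have hgd : ∀ ξ : ℝ, 0 < ξ → HasDerivAt (fun x => W x - C/2 * Real.log x)
          (deriv W ξ - C/2 * ξ⁻¹) ξ := fun ξ hξ =>
        (hW1 ξ hξ).sub ((Real.hasDerivAt_log (ne_of_gt hξ)).const_mul (C/2))
      have hganti : AntitoneOn (fun x => W x - C/2 * Real.log x) (Ioo 0 δ) := by
        apply antitoneOn_of_deriv_nonpos (convex_Ioo 0 δ)
        · intro x hx; exact (hgd x hx.1).continuousAt.continuousWithinAt
        · rw [interior_Ioo]; intro x hx; exact (hgd x hx.1).differentiableAt.differentiableWithinAt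
        · rw [interior_Ioo]; intro x hx
          rw [(hgd x hx.1).deriv]
          have h := (hδ hx).1.1
          have h2 : deriv W x < C/2 * x⁻¹ := by
            rw [← div_eq_mul_inv, lt_div_iff₀ hx.1]; linarith
          linarith
      have hx0mem : δ/2 ∈ Ioo (0:ℝ) δ := ⟨by linarith, by linarith⟩
      obtain ⟨ε, hεpos, hεle, hεlog⟩ : ∃ ε : ℝ, 0 < ε ∧ ε ≤ δ/2 ∧
          |(W (δ/2) - C/2 * Real.log (δ/2))| + 2 ≤ C/2 * Real.log ε := by
        refine ⟨min (δ/2) (Real.exp ((|(W (δ/2) - C/2 * Real.log (δ/2))| + 2) / (C/2))),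
          by positivity, min_le_left _ _, ?_⟩
        have hC2 : C/2 < 0 := by linarith
        have hlog : Real.log (min (δ/2) (Real.exp ((|(W (δ/2) - C/2 * Real.log (δ/2))| + 2) / (C/2))))
            ≤ (|(W (δ/2) - C/2 * Real.log (δ/2))| + 2) / (C/2) := by
          calc Real.log (min (δ/2) (Real.exp ((|(W (δ/2) - C/2 * Real.log (δ/2))| + 2) / (C/2))))
              ≤ Real.log (Real.exp ((|(W (δ/2) - C/2 * Real.log (δ/2))| + 2) / (C/2))) :=
                Real.log_le_log (by positivity) (min_le_right _ _)
            _ = _ := Real.log_exp _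
        have h3 := mul_le_mul_of_nonpos_left hlog (le_of_lt hC2)
        rw [mul_comm (C/2), div_mul_cancel₀ _ (ne_of_lt hC2)] at h3
        linarith
      have hεmem : ε ∈ Ioo (0:ℝ) δ := ⟨hεpos, by linarith⟩
      have hle := hganti hεmem hx0mem hεle
      simp only at hle
      have hWεlt : W ε < 1 := (hδ hεmem).1.2
      have habs : -|(W (δ/2) - C/2 * Real.log (δ/2))| ≤ W (δ/2) - C/2 * Real.log (δ/2) :=
        neg_abs_le _
      linarith
    · exact hCzero
    · exfalso
      have hev : ∀ᶠ ξ in nhdsWithin 0 (Ioi 0),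
          C/2 < ξ * deriv W ξ ∧ ξ ∈ Ioi (0:ℝ) :=
        (htend.eventually (eventually_gt_nhds (by linarith : C/2 < C))).and self_mem_nhdsWithin
      obtain ⟨δ, hδmem, hδ⟩ := mem_nhdsGT_iff_exists_Ioo_subset.mp hev
      have hδ0 : (0:ℝ) < δ := hδmem
      have hgd : ∀ ξ : ℝ, 0 < ξ → HasDerivAt (fun x => W x - C/2 * Real.log x)
          (deriv W ξ - C/2 * ξ⁻¹) ξ := fun ξ hξ =>
        (hW1 ξ hξ).sub ((Real.hasDerivAt_log (ne_of_gt hξ)).const_mul (C/2))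
      have hgmono : MonotoneOn (fun x => W x - C/2 * Real.log x) (Ioo 0 δ) := by
        apply monotoneOn_of_deriv_nonneg (convex_Ioo 0 δ)
        · intro x hx; exact (hgd x hx.1).continuousAt.continuousWithinAt
        · rw [interior_Ioo]; intro x hx; exact (hgd x hx.1).differentiableAt.differentiableWithinAt
        · rw [interior_Ioo]; intro x hx
          rw [(hgd x hx.1).deriv]
          have h := (hδ hx).1
          have h2 : C/2 * x⁻¹ < deriv W x := by
            rw [← div_eq_mul_inv, div_lt_iff₀ hx.1]; linarith
          linarith
      have hx0mem : δ/2 ∈ Ioo (0:ℝ) δ := ⟨by linarith, by linarith⟩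
      obtain ⟨ε, hεpos, hεle, hεlog⟩ : ∃ ε : ℝ, 0 < ε ∧ ε ≤ δ/2 ∧
          C/2 * Real.log ε ≤ -(|(W (δ/2) - C/2 * Real.log (δ/2))| + 1) := by
        refine ⟨min (δ/2) (Real.exp ((-(|(W (δ/2) - C/2 * Real.log (δ/2))| + 1)) / (C/2))),
          by positivity, min_le_left _ _, ?_⟩
        have hC2 : 0 < C/2 := by linarith
        have hlog : Real.log (min (δ/2) (Real.exp ((-(|(W (δ/2) - C/2 * Real.log (δ/2))| + 1)) / (C/2))))
            ≤ (-(|(W (δ/2) - C/2 * Real.log (δ/2))| + 1)) / (C/2) := by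
          calc Real.log (min (δ/2) (Real.exp ((-(|(W (δ/2) - C/2 * Real.log (δ/2))| + 1)) / (C/2))))
              ≤ Real.log (Real.exp ((-(|(W (δ/2) - C/2 * Real.log (δ/2))| + 1)) / (C/2))) :=
                Real.log_le_log (by positivity) (min_le_right _ _)
            _ = _ := Real.log_exp _
        have h3 := mul_le_mul_of_nonneg_left hlog (le_of_lt hC2)
        rw [mul_comm (C/2) ((-(|(W (δ/2) - C/2 * Real.log (δ/2))| + 1)) / (C/2)),
          div_mul_cancel₀ _ (ne_of_gt hC2)] at h3
        linarith
      have hεmem : ε ∈ Ioo (0:ℝ) δ := ⟨hεpos, by linarith⟩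
      have hle := hgmono hεmem hx0mem hεle
      simp only at hle
      have habs : W (δ/2) - C/2 * Real.log (δ/2) ≤ |(W (δ/2) - C/2 * Real.log (δ/2))| :=
        le_abs_self _
      have hWε : 0 ≤ W ε := hnonneg ε (le_of_lt hεpos)
      linarith
  -- first order ODE
  have hfo : ∀ ξ : ℝ, 0 < ξ → ξ * deriv W ξ = W ξ - c * (W ξ) ^ (1+q) := by
    intro ξ hξ
    have := hxW' ξ hξ
    rw [hC0] at this
    linarith
  -- W ξ / ξ is antitone
  have hanti : ∀ a b : ℝ, 0 < a → a ≤ b → W b / b ≤ W a / a := by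
    have hA : AntitoneOn (fun ξ => W ξ / ξ) (Ioi 0) := by
      apply antitoneOn_of_deriv_nonpos (convex_Ioi 0)
      · intro x hx
        exact ((hW1 x hx).div (hasDerivAt_id' x) (ne_of_gt hx)).continuousAt.continuousWithinAt
      · rw [interior_Ioi]; intro x hx
        exact ((hW1 x hx).div (hasDerivAt_id' x) (ne_of_gt hx)).differentiableAt.differentiableWithinAt
      · rw [interior_Ioi]; intro x hx
        rw [show deriv (fun ξ => W ξ / ξ) x = _ from ((hW1 x hx).div (hasDerivAt_id' x) (ne_of_gt hx)).deriv]
        have hfoξ := hfo x hx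
        have hWnn : 0 ≤ (W x) ^ (1+q) :=
          Real.rpow_nonneg (hnonneg x (le_of_lt hx)) _
        have hnum : deriv W x * x - W x * 1 = -(c * (W x) ^ (1+q)) := by
          linarith [hfoξ, mul_comm (deriv W x) x]
        rw [hnum]
        apply div_nonpos_of_nonpos_of_nonneg
        · nlinarith
        · positivity
    intro a b ha hab
    exact hA (mem_Ioi.2 ha) (mem_Ioi.2 (lt_of_lt_of_le ha hab)) hab
  obtain ⟨ξs, hξs0, hξsne⟩ := hne
  have hξs : 0 < ξs := hξs0.lt_of_ne (by rintro rfl; exact hξsne hW0)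
  have hWξs : 0 < W ξs := (hnonneg ξs hξs0).lt_of_ne (Ne.symm hξsne)
  -- positivity of W on (0, ∞)
  have hpos : ∀ ξ : ℝ, 0 < ξ → 0 < W ξ := by
    intro ξ0 hξ0
    rcases le_total ξ0 ξs with hle | hge
    · have h := hanti ξ0 ξs hξ0 hle
      have h2 : 0 < W ξ0 / ξ0 := lt_of_lt_of_le (div_pos hWξs hξs) h
      have h3 := mul_pos h2 hξ0
      rwa [div_mul_cancel₀ _ (ne_of_gt hξ0)] at h3
    · obtain ⟨M, hM⟩ : ∃ M : ℝ, M = W ξs / ξs * ξ0 := ⟨_, rfl⟩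
      have hM0 : 0 < M := by rw [hM]; exact mul_pos (div_pos hWξs hξs) hξ0
      obtain ⟨B, hB⟩ : ∃ B : ℝ, B = c * M ^ q / ξs := ⟨_, rfl⟩
      have hB0 : 0 ≤ B := by rw [hB]; positivity
      have hBξs : B * ξs = c * M ^ q := by rw [hB]; field_simp
      have hder : ∀ ξ : ℝ, 0 < ξ → HasDerivAt (fun x => W x * Real.exp (B * x))
          (deriv W ξ * Real.exp (B * ξ) + W ξ * (Real.exp (B * ξ) * B)) ξ := by
        intro ξ hξp
        have h1 : HasDerivAt (fun x : ℝ => B * x) B ξ := by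
          simpa using (hasDerivAt_id ξ).const_mul B
        have he : HasDerivAt (fun x : ℝ => Real.exp (B * x)) (Real.exp (B * ξ) * B) ξ :=
          (Real.hasDerivAt_exp (B*ξ)).comp ξ h1
        exact (hW1 ξ hξp).mul he
      have hmono : MonotoneOn (fun x => W x * Real.exp (B * x)) (Icc ξs ξ0) := by
        apply monotoneOn_of_deriv_nonneg (convex_Icc _ _)
        · exact (hcont.mono (fun x hx => le_trans (le_of_lt hξs) hx.1)).mul
            (Real.continuous_exp.comp (continuous_const.mul continuous_id)).continuousOn
        · rw [interior_Icc]; intro x hx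
          exact (hder x (lt_trans hξs hx.1)).differentiableAt.differentiableWithinAt
        · rw [interior_Icc]; intro x hx
          have hxp : 0 < x := lt_trans hξs hx.1
          rw [(hder x hxp).deriv]
          have hfoξ := hfo x hxp
          have hWnn : 0 ≤ W x := hnonneg x (le_of_lt hxp)
          have hWle : W x ≤ M := by
            have h := hanti ξs x hξs (le_of_lt hx.1)
            have h2 : W x / x * x ≤ W ξs / ξs * x := mul_le_mul_of_nonneg_right h (le_of_lt hxp)
            rw [div_mul_cancel₀ _ (ne_of_gt hxp)] at h2
            have h3 : W ξs / ξs * x ≤ W ξs / ξs * ξ0 :=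
              mul_le_mul_of_nonneg_left (le_of_lt hx.2) (by positivity)
            rw [hM]; linarith
          have hWqle : (W x) ^ q ≤ M ^ q := Real.rpow_le_rpow hWnn hWle (le_of_lt hq0)
          have hWq_split : (W x) ^ (1+q) = W x * (W x) ^ q := by
            rcases eq_or_lt_of_le hWnn with h0 | h0
            · rw [← h0, Real.zero_rpow (by positivity : (1:ℝ)+q ≠ 0),
                Real.zero_rpow (ne_of_gt hq0), mul_zero]
            · rw [Real.rpow_add h0, Real.rpow_one]
          have hBW : B * ξs * W x = c * M ^ q * W x := by rw [hBξs]
          have t1 : 0 ≤ B * W x * (x - ξs) :=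
            mul_nonneg (mul_nonneg hB0 hWnn) (sub_nonneg.2 (le_of_lt hx.1))
          have t2 : 0 ≤ c * W x * (M ^ q - (W x) ^ q) :=
            mul_nonneg (mul_nonneg (le_of_lt hc0) hWnn) (sub_nonneg.2 hWqle)
          have e : x * deriv W x + B * W x * x
              = W x + B * W x * (x - ξs) + c * W x * (M ^ q - (W x) ^ q) := by
            linear_combination hfoξ + hBW - c * hWq_split
          have h1 : 0 ≤ x * deriv W x + B * W x * x := by
            rw [e]; exact add_nonneg (add_nonneg hWnn t1) t2
          have h1' : 0 ≤ x * (deriv W x + W x * B) := by linarith [h1]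
          have h2 : 0 ≤ deriv W x + W x * B := by
            by_contra hcon
            push_neg at hcon
            have hp2 := mul_pos hxp (neg_pos.mpr hcon)
            nlinarith [hp2, h1']
          have hexp : 0 < Real.exp (B * x) := Real.exp_pos _
          have h3 := mul_nonneg (le_of_lt hexp) h2
          linarith [h3]
      have hfx := hmono (left_mem_Icc.2 hge) (right_mem_Icc.2 hge) hge
      simp only at hfx
      have hl : 0 < W ξs * Real.exp (B * ξs) := mul_pos hWξs (Real.exp_pos _)
      have h3 : 0 < W ξ0 * Real.exp (B * ξ0) := lt_of_lt_of_le hl hfx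
      by_contra hcon
      push_neg at hcon
      have := mul_nonpos_of_nonpos_of_nonneg hcon (le_of_lt (Real.exp_pos (B * ξ0)))
      linarith
  -- the conserved quantity of the first-order ODE
  have hFder : ∀ ξ ∈ Ioi (0:ℝ), HasDerivAt (fun x => ((W x) ^ (-q) - c) * x ^ q) 0 ξ := by
    intro ξ hξ
    have hξ0 : (0:ℝ) < ξ := hξ
    have hw : 0 < W ξ := hpos ξ hξ0
    have h1 : HasDerivAt (fun x => (W x) ^ (-q) - c)
        (deriv W ξ * (-q) * (W ξ) ^ (-q - 1)) ξ :=
      ((hW1 ξ hξ).rpow_const (Or.inl (ne_of_gt hw))).sub_const c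
    have h2 : HasDerivAt (fun x : ℝ => x ^ q) (q * ξ ^ (q - 1)) ξ :=
      Real.hasDerivAt_rpow_const (Or.inl (ne_of_gt hξ0))
    have h := h1.mul h2
    refine h.congr_deriv ?_
    have hd := hfo ξ hξ0
    have e1 : W ξ * (W ξ) ^ (-q-1) = (W ξ) ^ (-q) := by
      nth_rewrite 1 [← Real.rpow_one (W ξ)]
      rw [← Real.rpow_add hw]; congr 1; ring
    have e2 : (W ξ) ^ (1+q) * (W ξ) ^ (-q-1) = 1 := by
      rw [← Real.rpow_add hw, show (1+q) + (-q-1) = (0:ℝ) by ring, Real.rpow_zero]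
    have e3 : ξ ^ (q-1) * ξ = ξ ^ q := by
      nth_rewrite 2 [← Real.rpow_one ξ]
      rw [← Real.rpow_add hξ0]; congr 1; ring
    have key : deriv W ξ * (W ξ) ^ (-q-1) * ξ = (W ξ) ^ (-q) - c := by
      linear_combination (W ξ) ^ (-q-1) * hd + e1 - c * e2
    have h0 : (deriv W ξ * (-q) * (W ξ) ^ (-q - 1) * ξ ^ q
        + ((W ξ) ^ (-q) - c) * (q * ξ ^ (q - 1))) * ξ = 0 := by
      linear_combination (-q * ξ ^ q) * key + (q * ((W ξ) ^ (-q) - c)) * e3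
    exact ((mul_eq_zero.mp h0).resolve_right (ne_of_gt hξ0))
  have hFconst := const_of_hasDerivAt_zero' hFder
  -- find a point where u > c, to get K > 0
  have hεdef : (0:ℝ) < (c+1) ^ (-((N:ℝ)-1)) := Real.rpow_pos_of_pos (by linarith) _
  obtain ⟨ξ1, hξ1W, hξ1pos⟩ : ∃ ξ1 : ℝ, W ξ1 < (c+1) ^ (-((N:ℝ)-1)) ∧ ξ1 ∈ Ioi (0:ℝ) :=
    ((hWt.eventually (eventually_lt_nhds hεdef)).and self_mem_nhdsWithin).exists
  have hξ1pos' : (0:ℝ) < ξ1 := hξ1pos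
  have hu1 : c < (W ξ1) ^ (-q) := by
    have hw1 : 0 < W ξ1 := hpos ξ1 hξ1pos'
    have h := Real.rpow_lt_rpow_of_neg hw1 hξ1W (neg_lt_zero.mpr hq0)
    have h2 : ((c+1) ^ (-((N:ℝ)-1))) ^ (-q) = c + 1 := by
      rw [← Real.rpow_mul (by linarith : (0:ℝ) ≤ c+1),
        show (-((N:ℝ)-1)) * (-q) = 1 by rw [hq]; field_simp, Real.rpow_one]
    rw [h2] at h
    linarith
  obtain ⟨K, hKdef⟩ : ∃ K : ℝ, K = ((W ξ1) ^ (-q) - c) * ξ1 ^ q := ⟨_, rfl⟩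
  have hK0 : 0 < K := by
    rw [hKdef]
    exact mul_pos (by linarith) (Real.rpow_pos_of_pos hξ1pos' q)
  have hKeq : ∀ ξ : ℝ, 0 < ξ → (W ξ) ^ (-q) = c + K * ξ ^ (-q) := by
    intro ξ hξ
    have h := hFconst ξ hξ ξ1 hξ1pos'
    rw [← hKdef] at h
    have hxq : (0:ℝ) < ξ ^ q := Real.rpow_pos_of_pos hξ q
    rw [Real.rpow_neg (le_of_lt hξ), ← h]
    field_simp
    ring
  -- define lam and conclude
  obtain ⟨lam, hlam⟩ : ∃ lam : ℝ, lam = (c/K) ^ (((N:ℝ)-1)/(N:ℝ)) := ⟨_, rfl⟩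
  have hcK : (0:ℝ) < c / K := div_pos hc0 hK0
  have hlam0 : 0 < lam := by rw [hlam]; exact Real.rpow_pos_of_pos hcK _
  have hlamN : lam ^ N = (c/K) ^ ((N:ℝ)-1) := by
    rw [hlam, ← Real.rpow_natCast ((c/K) ^ (((N:ℝ)-1)/(N:ℝ))) N,
      ← Real.rpow_mul (le_of_lt hcK)]
    congr 1
    field_simp
  have hA' : A = c ^ (-((N:ℝ)-1)) := by
    have hone : (1:ℕ) ≤ N := by omega
    have hcast : ((N - 1 : ℕ) : ℝ) = (N:ℝ) - 1 := by
      rw [Nat.cast_sub hone, Nat.cast_one]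
    rw [hA, ← Real.rpow_natCast ((N:ℝ)^2/((N:ℝ)-1)) (N-1), hcast,
      show (N:ℝ)^2/((N:ℝ)-1) = c⁻¹ by rw [hc, inv_div],
      Real.inv_rpow (le_of_lt hc0), ← Real.rpow_neg (le_of_lt hc0)]
  refine ⟨lam, hlam0, ?_⟩
  intro ξ hξ
  rcases hξ.eq_or_lt with h0 | h0
  · rw [← h0, hW0]; simp
  · have hw : 0 < W ξ := hpos ξ h0
    have hlamNξ : 0 < lam ^ N * ξ := by positivity
    obtain ⟨y, hy⟩ : ∃ y : ℝ, y = (lam ^ N * ξ) ^ q := ⟨_, rfl⟩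
    rw [← hy]
    have hy0 : 0 < y := by rw [hy]; exact Real.rpow_pos_of_pos hlamNξ q
    have hyval : y = (c/K) * ξ ^ q := by
      rw [hy, Real.mul_rpow (le_of_lt (pow_pos hlam0 N)) (le_of_lt h0), hlamN,
        ← Real.rpow_mul (le_of_lt hcK),
        show ((N:ℝ)-1) * q = 1 by rw [hq]; field_simp, Real.rpow_one]
    have hyN : y ^ ((N:ℝ)-1) = lam ^ N * ξ := by
      rw [hy, ← Real.rpow_mul (le_of_lt hlamNξ),
        show q * ((N:ℝ)-1) = 1 by rw [hq]; field_simp, Real.rpow_one]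
    have hu : (W ξ) ^ (-q) = c + K * ξ ^ (-q) := hKeq ξ h0
    have hW : W ξ = ((W ξ) ^ (-q)) ^ (-((N:ℝ)-1)) := by
      rw [← Real.rpow_mul (le_of_lt hw),
        show (-q) * (-((N:ℝ)-1)) = 1 by rw [hq]; field_simp, Real.rpow_one]
    have hueq : c + K * ξ ^ (-q) = c * (1+y) / y := by
      rw [hyval, Real.rpow_neg (le_of_lt h0)]
      have hxq : (0:ℝ) < ξ ^ q := Real.rpow_pos_of_pos h0 q
      field_simp
      ring
    rw [show W ξ = ((W ξ) ^ (-q)) ^ (-((N:ℝ)-1)) from hW, hu, hueq, hA',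
      show ((1:ℝ) - (N:ℝ)) = -((N:ℝ)-1) by ring,
      mul_assoc (c ^ (-((N:ℝ)-1))) (lam ^ N) ξ, ← hyN,
      Real.div_rpow (by positivity) (le_of_lt hy0),
      Real.mul_rpow (le_of_lt hc0) (by positivity : (0:ℝ) ≤ 1+y),
      Real.rpow_neg (le_of_lt hy0) ((N:ℝ)-1), div_inv_eq_mul]
    ring
end

section
/- Let N ≥ 2 be an integer. Suppose W : [0,∞) → ℝ is nonnegative, continuous on [0,∞), twice continuously differentiable on (0,∞), satisfies N ξ W″(ξ) + W(ξ)^{1/(N−1)} W′(ξ) = 0 for all ξ > 0, and W(0) = 0. Then W satisfies the first-order equation ξ W′(ξ) = W(ξ) − ((N−1)/N²) W(ξ)^{N/(N−1)} for all ξ > 0. -/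
set_option maxHeartbeats 1000000


open Set

/-- **Reduction to a first-order ODE.**
If `W : [0,∞) → ℝ` is nonnegative, continuous on `[0,∞)`, `C²` on `(0,∞)`, solves
`N ξ W″ + W^{1/(N−1)} W′ = 0` on `(0,∞)` and `W(0) = 0`, then
`ξ W′(ξ) = W(ξ) − ((N−1)/N²) W(ξ)^{N/(N−1)}` for all `ξ > 0`. -/
theorem second_order_to_first_order
    (N : ℕ) (hN : 2 ≤ N)
    (W : ℝ → ℝ)
    (hnonneg : ∀ ξ : ℝ, 0 ≤ ξ → 0 ≤ W ξ)
    (hcont : ContinuousOn W (Ici 0))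
    (hC2 : ContDiffOn ℝ 2 W (Ioi 0))
    (hODE : ∀ ξ : ℝ, 0 < ξ →
      (N : ℝ) * ξ * deriv (deriv W) ξ + (W ξ) ^ ((1 : ℝ) / ((N : ℝ) - 1)) * deriv W ξ = 0)
    (hW0 : W 0 = 0) :
    ∀ ξ : ℝ, 0 < ξ →
      ξ * deriv W ξ
        = W ξ - (((N : ℝ) - 1) / (N : ℝ) ^ 2) * (W ξ) ^ ((N : ℝ) / ((N : ℝ) - 1)) := by
  have hN2 : (2 : ℝ) ≤ (N : ℝ) := by exact_mod_cast hN
  have hNpos : (0 : ℝ) < (N : ℝ) := by linarith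
  have hN1pos : (0 : ℝ) < (N : ℝ) - 1 := by linarith
  set p : ℝ := (N : ℝ) / ((N : ℝ) - 1) with hp_def
  have hp1 : (1 : ℝ) ≤ p := by
    rw [hp_def, le_div_iff₀ hN1pos]; linarith
  have hppos : 0 < p := lt_of_lt_of_le one_pos hp1
  have hpα : p - 1 = 1 / ((N : ℝ) - 1) := by
    rw [hp_def]; field_simp; ring
  -- differentiability facts
  have hdW : ∀ ξ : ℝ, 0 < ξ → HasDerivAt W (deriv W ξ) ξ := by
    intro ξ hξ
    exact ((hC2.differentiableOn (by norm_num)).differentiableAt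
      (Ioi_mem_nhds hξ)).hasDerivAt
  have hC1d : ContDiffOn ℝ 1 (deriv W) (Ioi 0) :=
    hC2.deriv_of_isOpen isOpen_Ioi (by norm_num)
  have hddW : ∀ ξ : ℝ, 0 < ξ → HasDerivAt (deriv W) (deriv (deriv W) ξ) ξ := by
    intro ξ hξ
    exact ((hC1d.differentiableOn (by norm_num)).differentiableAt
      (Ioi_mem_nhds hξ)).hasDerivAt
  -- the conserved quantity
  set F : ℝ → ℝ := fun x =>
    (N : ℝ) * (x * deriv W x) - (N : ℝ) * W x + (((N : ℝ) - 1) / (N : ℝ)) * (W x) ^ p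
    with hF_def
  have hF : ∀ ξ : ℝ, 0 < ξ → HasDerivAt F 0 ξ := by
    intro ξ hξ
    have h1 : HasDerivAt (fun x : ℝ => (N : ℝ) * (x * deriv W x))
        ((N : ℝ) * (1 * deriv W ξ + ξ * deriv (deriv W) ξ)) ξ :=
      ((hasDerivAt_id ξ).mul (hddW ξ hξ)).const_mul _
    have h2 : HasDerivAt (fun x : ℝ => (N : ℝ) * W x) ((N : ℝ) * deriv W ξ) ξ :=
      (hdW ξ hξ).const_mul _
    have h3 : HasDerivAt (fun x : ℝ => (W x) ^ p)
        (p * (W ξ) ^ ((1 : ℝ) / ((N : ℝ) - 1)) * deriv W ξ) ξ := by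
      have := (Real.hasDerivAt_rpow_const (x := W ξ) (p := p) (Or.inr hp1)).comp
        ξ (hdW ξ hξ)
      rw [hpα] at this
      simpa [Function.comp_def, mul_assoc] using this
    have h4 : (((N : ℝ) - 1) / (N : ℝ)) * p = 1 := by
      rw [hp_def]; field_simp
    have hD : (N : ℝ) * (1 * deriv W ξ + ξ * deriv (deriv W) ξ) - (N : ℝ) * deriv W ξ
        + (((N : ℝ) - 1) / (N : ℝ)) * (p * (W ξ) ^ ((1 : ℝ) / ((N : ℝ) - 1)) * deriv W ξ)
        = 0 := by
      linear_combination hODE ξ hξ + ((W ξ) ^ ((1 : ℝ) / ((N : ℝ) - 1)) * deriv W ξ) * h4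
    have := (h1.sub h2).add (h3.const_mul (((N : ℝ) - 1) / (N : ℝ)))
    rw [hD] at this
    exact this
  -- F is constant on (0, ∞)
  have hconst : ∀ x : ℝ, 0 < x → F x = F 1 := by
    intro x hx
    refine (convex_Ioi (0 : ℝ)).is_const_of_fderivWithin_eq_zero
      (𝕜 := ℝ) (fun z hz => (hF z hz).differentiableAt.differentiableWithinAt)
      (fun z hz => ?_) hx (by norm_num : (1:ℝ) ∈ Ioi (0:ℝ))
    rw [fderivWithin_of_isOpen isOpen_Ioi hz, (hF z hz).hasFDerivAt.fderiv]
    ext t; simp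
  set K : ℝ := F 1 with hK_def
  have hKeq : ∀ ξ : ℝ, 0 < ξ →
      (N : ℝ) * (ξ * deriv W ξ) = K + (N : ℝ) * W ξ
        - (((N : ℝ) - 1) / (N : ℝ)) * (W ξ) ^ p := by
    intro ξ hξ
    have := hconst ξ hξ
    rw [hF_def] at this
    simp only at this
    linarith [this]
  -- K = 0
  have hK0 : K = 0 := by
    by_contra hK
    set ε : ℝ := min 1 (|K| / (2 * ((N : ℝ) + 1))) with hε_def
    have hεpos : 0 < ε := by
      apply lt_min one_pos
      apply div_pos (abs_pos.mpr hK) (by linarith)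
    have hε1 : ε ≤ 1 := min_le_left _ _
    have hεK : ((N : ℝ) + 1) * ε ≤ |K| / 2 := by
      have h := min_le_right 1 (|K| / (2 * ((N : ℝ) + 1)))
      calc ((N : ℝ) + 1) * ε ≤ ((N : ℝ) + 1) * (|K| / (2 * ((N : ℝ) + 1))) := by
            apply mul_le_mul_of_nonneg_left (h.trans_eq rfl) (by linarith)
        _ = |K| / 2 := by field_simp
    -- continuity at 0 gives smallness of W near 0
    have hc0 : ContinuousWithinAt W (Ici 0) 0 := hcont 0 (by simp)
    rw [ContinuousWithinAt, hW0] at hc0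
    obtain ⟨δ, hδpos, hδ⟩ := Metric.tendsto_nhdsWithin_nhds.mp hc0 ε hεpos
    set b : ℝ := δ / 2 with hb_def
    have hbpos : 0 < b := by positivity
    have hWsmall : ∀ x : ℝ, 0 < x → x ≤ b → W x < ε := by
      intro x hx hxb
      have hd : dist x 0 < δ := by
        rw [Real.dist_eq, sub_zero, abs_of_pos hx]
        linarith
      have := hδ (mem_Ici.mpr hx.le) hd
      rwa [Real.dist_eq, sub_zero, abs_of_nonneg (hnonneg x hx.le)] at this
    -- the key bound near 0
    have hbound : ∀ x : ℝ, 0 < x → x ≤ b →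
        |(N : ℝ) * (x * deriv W x) - K| ≤ |K| / 2 := by
      intro x hx hxb
      have hWx0 : 0 ≤ W x := hnonneg x hx.le
      have hWxε : W x < ε := hWsmall x hx hxb
      have hWp_nonneg : 0 ≤ (W x) ^ p := Real.rpow_nonneg hWx0 p
      have hWp_le : (W x) ^ p ≤ W x := by
        rcases eq_or_lt_of_le hWx0 with h0 | h0
        · rw [← h0, Real.zero_rpow hppos.ne']
        · calc (W x) ^ p ≤ (W x) ^ (1 : ℝ) :=
                Real.rpow_le_rpow_of_exponent_ge h0 (by linarith) hp1
            _ = W x := Real.rpow_one _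
      have hc1 : 0 ≤ ((N : ℝ) - 1) / (N : ℝ) := by positivity
      have hc2 : ((N : ℝ) - 1) / (N : ℝ) ≤ 1 := by
        rw [div_le_one hNpos]; linarith
      have heq := hKeq x hx
      rw [abs_le]
      constructor
      · nlinarith [mul_le_mul_of_nonneg_left hWp_le hc1]
      · nlinarith [mul_le_mul_of_nonneg_left hWp_le hc1,
          mul_nonneg hc1 hWp_nonneg]
    rcases (lt_or_gt_of_ne hK) with hKneg | hKpos
    · -- K < 0 : W' ≤ c / x with c < 0 near 0
      set c : ℝ := K / (2 * (N : ℝ)) with hc_def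
      have hcneg : c < 0 := div_neg_of_neg_of_pos hKneg (by linarith)
      have hderiv_le : ∀ x : ℝ, 0 < x → x ≤ b → deriv W x ≤ c / x := by
        intro x hx hxb
        have h := hbound x hx hxb
        rw [abs_le] at h
        have habsK : |K| = -K := abs_of_neg hKneg
        have : (N : ℝ) * (x * deriv W x) ≤ K / 2 := by
          rw [habsK] at h; linarith [h.2]
        rw [le_div_iff₀ hx, hc_def]
        calc deriv W x * x = ((N : ℝ) * (x * deriv W x)) / (N : ℝ) := by
              field_simp
          _ ≤ (K / 2) / (N : ℝ) := by gcongr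
          _ = K / (2 * (N : ℝ)) := by ring
      set a : ℝ := b * Real.exp (2 / c) with ha_def
      have hapos : 0 < a := mul_pos hbpos (Real.exp_pos _)
      have hab : a < b := by
        rw [ha_def]
        exact mul_lt_of_lt_one_right hbpos
          (Real.exp_lt_one_iff.mpr (div_neg_of_pos_of_neg two_pos hcneg))
      have hIcc_sub : Icc a b ⊆ Ioi 0 := fun z hz => lt_of_lt_of_le hapos hz.1
      have hanti : AntitoneOn (fun x => W x - c * Real.log x) (Icc a b) := by
        apply antitoneOn_of_deriv_nonpos (convex_Icc a b)
        · apply ContinuousOn.sub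
          · exact hcont.mono (fun z hz => mem_Ici.mpr (le_of_lt (mem_Ioi.mp (hIcc_sub hz))))
          · exact continuousOn_const.mul (Real.continuousOn_log.mono
              (fun z hz => (ne_of_gt (hIcc_sub hz)) ∘ fun h => h))
        · rw [interior_Icc]
          intro z hz
          have hz0 : 0 < z := lt_trans hapos hz.1
          exact ((hdW z hz0).sub
            ((Real.hasDerivAt_log hz0.ne').const_mul c)).differentiableAt.differentiableWithinAt
        · rw [interior_Icc]
          intro z hz
          have hz0 : 0 < z := lt_trans hapos hz.1
          have hder : deriv (fun x => W x - c * Real.log x) z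
              = deriv W z - c * z⁻¹ :=
            ((hdW z hz0).sub ((Real.hasDerivAt_log hz0.ne').const_mul c)).deriv
          rw [hder]
          have := hderiv_le z hz0 (le_of_lt hz.2)
          have : deriv W z ≤ c * z⁻¹ := by
            rwa [div_eq_mul_inv] at this
          linarith
      have hle := hanti (left_mem_Icc.mpr hab.le) (right_mem_Icc.mpr hab.le) hab.le
      simp only at hle
      have hloga : Real.log a = Real.log b + 2 / c := by
        rw [ha_def, Real.log_mul hbpos.ne' (Real.exp_pos _).ne', Real.log_exp]
      rw [hloga] at hle
      have hc2 : c * (2 / c) = 2 := by field_simp [hcneg.ne]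
      have hWa : 2 ≤ W a := by nlinarith [hnonneg b hbpos.le]
      have : W a < ε := hWsmall a hapos hab.le
      linarith
    · -- K > 0 : W' ≥ c / x with c > 0 near 0
      set c : ℝ := K / (2 * (N : ℝ)) with hc_def
      have hcpos : 0 < c := div_pos hKpos (by linarith)
      have hderiv_ge : ∀ x : ℝ, 0 < x → x ≤ b → c / x ≤ deriv W x := by
        intro x hx hxb
        have h := hbound x hx hxb
        rw [abs_le] at h
        have habsK : |K| = K := abs_of_pos hKpos
        have hKd : K / 2 ≤ (N : ℝ) * (x * deriv W x) := by
          rw [habsK] at h; linarith [h.1]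
        rw [div_le_iff₀ hx, hc_def]
        calc K / (2 * (N : ℝ)) = (K / 2) / (N : ℝ) := by ring
          _ ≤ ((N : ℝ) * (x * deriv W x)) / (N : ℝ) := by gcongr
          _ = deriv W x * x := by field_simp
      set a : ℝ := b * Real.exp (-(W b + 1) / c) with ha_def
      have hapos : 0 < a := mul_pos hbpos (Real.exp_pos _)
      have hab : a < b := by
        rw [ha_def]
        refine mul_lt_of_lt_one_right hbpos (Real.exp_lt_one_iff.mpr ?_)
        apply div_neg_of_neg_of_pos _ hcpos
        have := hnonneg b hbpos.le
        linarith
      have hIcc_sub : Icc a b ⊆ Ioi 0 := fun z hz => lt_of_lt_of_le hapos hz.1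
      have hmono : MonotoneOn (fun x => W x - c * Real.log x) (Icc a b) := by
        apply monotoneOn_of_deriv_nonneg (convex_Icc a b)
        · apply ContinuousOn.sub
          · exact hcont.mono (fun z hz => mem_Ici.mpr (le_of_lt (mem_Ioi.mp (hIcc_sub hz))))
          · exact continuousOn_const.mul (Real.continuousOn_log.mono
              (fun z hz => (ne_of_gt (hIcc_sub hz)) ∘ fun h => h))
        · rw [interior_Icc]
          intro z hz
          have hz0 : 0 < z := lt_trans hapos hz.1
          exact ((hdW z hz0).sub
            ((Real.hasDerivAt_log hz0.ne').const_mul c)).differentiableAt.differentiableWithinAt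
        · rw [interior_Icc]
          intro z hz
          have hz0 : 0 < z := lt_trans hapos hz.1
          have hder : deriv (fun x => W x - c * Real.log x) z
              = deriv W z - c * z⁻¹ :=
            ((hdW z hz0).sub ((Real.hasDerivAt_log hz0.ne').const_mul c)).deriv
          rw [hder]
          have := hderiv_ge z hz0 (le_of_lt hz.2)
          have : c * z⁻¹ ≤ deriv W z := by
            rwa [div_eq_mul_inv] at this
          linarith
      have hle := hmono (left_mem_Icc.mpr hab.le) (right_mem_Icc.mpr hab.le) hab.le
      simp only at hle
      have hloga : Real.log a = Real.log b + -(W b + 1) / c := by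
        rw [ha_def, Real.log_mul hbpos.ne' (Real.exp_pos _).ne', Real.log_exp]
      rw [hloga] at hle
      have hc2 : c * (-(W b + 1) / c) = -(W b + 1) := by field_simp [hcpos.ne']
      have : W a ≤ -1 := by nlinarith
      have := hnonneg a hapos.le
      linarith
  -- conclude
  intro ξ hξ
  have h := hKeq ξ hξ
  rw [hK0] at h
  have hNne : (N : ℝ) ≠ 0 := hNpos.ne'
  rw [hp_def] at h
  field_simp at h ⊢
  linarith [h]
end

section
/- Let N ≥ 2 be an integer. Suppose f : [0,∞) → ℝ is nonnegative, continuous on [0,∞), continuously differentiable on (0,∞), not identically zero, f(0) = 0, and satisfies (N−1) ξ f′(ξ) = f(ξ)·(1 − ((N−1)/N²) f(ξ)) for all ξ > 0. Then there exists λ > 0 such that f(ξ) = (N²/(N−1)) · (λ^N ξ)^{1/(N−1)} / (1 + (λ^N ξ)^{1/(N−1)}) for all ξ ≥ 0; in particular 0 < f(ξ) < N²/(N−1) for all ξ > 0. -/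
open Set Real

/-- If `f` solves `f' = f(1-c f)/(d ξ)` on `(0,∞)` and equals an equilibrium value `r`
at some `ξ₀ > 0`, then `f = r` on all of `(0,∞)`. -/
lemma equilibrium_propagation (c d : ℝ) (hd : 0 < d) (f : ℝ → ℝ)
    (hderiv : ∀ ξ : ℝ, 0 < ξ → HasDerivAt f (f ξ * (1 - c * f ξ) / (d * ξ)) ξ)
    (r : ℝ) (hr : r * (1 - c * r) = 0)
    (ξ₀ : ℝ) (h₀ : 0 < ξ₀) (hfr : f ξ₀ = r) :
    ∀ ξ : ℝ, 0 < ξ → f ξ = r := by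
  intro ξ hξ
  set a : ℝ := min ξ ξ₀ / 2 with ha_def
  have ha : 0 < a := by positivity
  set b : ℝ := max ξ ξ₀ + 1 with hb_def
  have haξ : a < ξ := by rw [ha_def]; cases' min_cases ξ ξ₀ with h h <;> [linarith [h.1]; linarith [h.1]]
  have haξ₀ : a < ξ₀ := by rw [ha_def]; cases' min_cases ξ ξ₀ with h h <;> linarith [h.1]
  have hξb : ξ < b := lt_of_le_of_lt (le_max_left ξ ξ₀) (by rw [hb_def]; linarith)
  have hξ₀b : ξ₀ < b := lt_of_le_of_lt (le_max_right ξ ξ₀) (by rw [hb_def]; linarith)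
  -- bound on f over Icc a b
  have hcontf : ContinuousOn f (Icc a b) := by
    intro x hx
    exact ((hderiv x (lt_of_lt_of_le ha hx.1)).continuousAt).continuousWithinAt
  obtain ⟨C, hC⟩ := (isCompact_Icc (a := a) (b := b)).exists_bound_of_continuousOn hcontf
  set R : ℝ := max C |r| with hR_def
  have hfR : ∀ x ∈ Icc a b, f x ∈ Icc (-R) R := by
    intro x hx
    have := hC x hx
    rw [Real.norm_eq_abs] at this
    have h1 : |f x| ≤ R := le_trans this (le_max_left _ _)
    rw [mem_Icc]
    constructor <;> [linarith [neg_abs_le (f x)]; linarith [le_abs_self (f x)]]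
  have hrR : r ∈ Icc (-R) R := by
    have h1 : |r| ≤ R := le_max_right _ _
    rw [mem_Icc]
    constructor <;> [linarith [neg_abs_le r]; linarith [le_abs_self r]]
  set K : NNReal := ((1 + |c| * (2 * R)) / (d * a)).toNNReal with hK_def
  set v : ℝ → ℝ → ℝ := fun t x => x * (1 - c * x) / (d * max t a) with hv_def
  have hRnonneg : 0 ≤ R := le_trans (abs_nonneg r) (le_max_right _ _)
  have hv : ∀ t : ℝ, LipschitzOnWith K (v t) (Icc (-R) R) := by
    intro t
    apply LipschitzOnWith.of_dist_le_mul
    intro x hx y hy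
    rw [Real.dist_eq, Real.dist_eq, hv_def]
    simp only
    have hma : a ≤ max t a := le_max_right _ _
    have hmapos : 0 < max t a := lt_of_lt_of_le ha hma
    have hden : 0 < d * max t a := by positivity
    rw [div_sub_div_same, abs_div, abs_of_pos hden]
    have key : x * (1 - c * x) - y * (1 - c * y) = (x - y) * (1 - c * (x + y)) := by ring
    rw [key, abs_mul]
    have hKc : (K : ℝ) = (1 + |c| * (2 * R)) / (d * a) := by
      rw [hK_def, Real.coe_toNNReal]
      positivity
    rw [hKc]
    rw [div_le_iff₀ hden]
    have h1 : |1 - c * (x + y)| ≤ 1 + |c| * (2 * R) := by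
      calc |1 - c * (x + y)| ≤ |1| + |c * (x + y)| := abs_sub _ _
        _ = 1 + |c| * |x + y| := by rw [abs_one, abs_mul]
        _ ≤ 1 + |c| * (2 * R) := by
            have : |x + y| ≤ 2 * R := by
              calc |x + y| ≤ |x| + |y| := abs_add_le _ _
                _ ≤ 2 * R := by
                    have hx' := abs_le.mpr ⟨hx.1, hx.2⟩
                    have hy' := abs_le.mpr ⟨hy.1, hy.2⟩
                    linarith
            nlinarith [abs_nonneg c]
    calc |x - y| * |1 - c * (x + y)| ≤ |x - y| * (1 + |c| * (2 * R)) := by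
          exact mul_le_mul_of_nonneg_left h1 (abs_nonneg _)
      _ = (1 + |c| * (2 * R)) * |x - y| := by ring
      _ ≤ (1 + |c| * (2 * R)) / (d * a) * |x - y| * (d * max t a) := by
          rw [div_mul_eq_mul_div, div_mul_eq_mul_div, le_div_iff₀ (by positivity)]
          have h2 : 0 ≤ (1 + |c| * (2 * R)) * |x - y| := by positivity
          have h3 : d * a ≤ d * max t a := by nlinarith [le_max_right t a]
          nlinarith
  have heq : EqOn f (fun _ => r) (Ioo a b) := by
    apply ODE_solution_unique_of_mem_Ioo (v := v) (s := fun _ => Icc (-R) R) (fun t _ => hv t)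
      (t₀ := ξ₀) ⟨haξ₀, hξ₀b⟩
    · intro t ht
      have htpos : 0 < t := lt_trans ha ht.1
      have hmax : max t a = t := max_eq_left (le_of_lt ht.1)
      constructor
      · have := hderiv t htpos
        refine this.congr_deriv ?_
        rw [hv_def]; simp only [hmax]
      · exact hfR t ⟨le_of_lt ht.1, le_of_lt ht.2⟩
    · intro t ht
      constructor
      · have : v t r = 0 := by
          rw [hv_def]; simp only [hr, zero_div]
        rw [this]
        exact hasDerivAt_const t r
      · exact hrR
    · simpa using hfr
  exact heq ⟨haξ, hξb⟩


/-- **Solution of the logistic-type first-order ODE.**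
If `f : [0,∞) → ℝ` is nonnegative, continuous on `[0,∞)`, `C¹` on `(0,∞)`, not identically
zero, `f(0) = 0`, and `(N−1) ξ f′ = f (1 − ((N−1)/N²) f)` on `(0,∞)`, then for some `λ > 0`,
`f(ξ) = (N²/(N−1)) (λ^N ξ)^{1/(N−1)} / (1 + (λ^N ξ)^{1/(N−1)})`; in particular
`0 < f(ξ) < N²/(N−1)` for `ξ > 0`. -/
theorem logistic_ode_solution
    (N : ℕ) (hN : 2 ≤ N)
    (f : ℝ → ℝ)
    (hnonneg : ∀ ξ : ℝ, 0 ≤ ξ → 0 ≤ f ξ)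
    (hcont : ContinuousOn f (Ici 0))
    (hC1 : ContDiffOn ℝ 1 f (Ioi 0))
    (hne : ∃ ξ : ℝ, 0 ≤ ξ ∧ f ξ ≠ 0)
    (hf0 : f 0 = 0)
    (hODE : ∀ ξ : ℝ, 0 < ξ →
      ((N : ℝ) - 1) * ξ * deriv f ξ = f ξ * (1 - (((N : ℝ) - 1) / (N : ℝ) ^ 2) * f ξ)) :
    ∃ lam : ℝ, 0 < lam ∧
      (∀ ξ : ℝ, 0 ≤ ξ →
        f ξ = ((N : ℝ) ^ 2 / ((N : ℝ) - 1)) * (lam ^ N * ξ) ^ ((1 : ℝ) / ((N : ℝ) - 1))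
          / (1 + (lam ^ N * ξ) ^ ((1 : ℝ) / ((N : ℝ) - 1)))) ∧
      (∀ ξ : ℝ, 0 < ξ → 0 < f ξ ∧ f ξ < (N : ℝ) ^ 2 / ((N : ℝ) - 1)) := by
  have hN2 : (2 : ℝ) ≤ (N : ℝ) := by exact_mod_cast hN
  set n : ℝ := (N : ℝ) with hn_def
  have hn1 : (1 : ℝ) ≤ n - 1 := by linarith
  have hd : 0 < n - 1 := by linarith
  have hnpos : 0 < n := by linarith
  set c : ℝ := (n - 1) / n ^ 2 with hc_def
  set M : ℝ := n ^ 2 / (n - 1) with hM_def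
  have hMpos : 0 < M := by positivity
  have hcM : c * M = 1 := by
    rw [hc_def, hM_def]; field_simp
  have hcpos : 0 < c := by positivity
  -- derivative as HasDerivAt
  have hdiff : ∀ ξ : ℝ, 0 < ξ → HasDerivAt f (deriv f ξ) ξ := by
    intro ξ hξ
    have h1 : DifferentiableOn ℝ f (Ioi 0) := hC1.differentiableOn one_ne_zero
    have h2 : DifferentiableAt ℝ f ξ :=
      (h1 ξ hξ).differentiableAt (isOpen_Ioi.mem_nhds hξ)
    exact h2.hasDerivAt
  have hderiv_eq : ∀ ξ : ℝ, 0 < ξ → deriv f ξ = f ξ * (1 - c * f ξ) / ((n - 1) * ξ) := by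
    intro ξ hξ
    have h := hODE ξ hξ
    have hne0 : (n - 1) * ξ ≠ 0 := by positivity
    field_simp
    linarith [h]
  have hderiv : ∀ ξ : ℝ, 0 < ξ → HasDerivAt f (f ξ * (1 - c * f ξ) / ((n - 1) * ξ)) ξ := by
    intro ξ hξ
    have := hdiff ξ hξ
    rwa [hderiv_eq ξ hξ] at this
  -- f is positive on (0,∞)
  have hpos : ∀ ξ : ℝ, 0 < ξ → 0 < f ξ := by
    intro ξ hξ
    rcases lt_or_eq_of_le (hnonneg ξ (le_of_lt hξ)) with h | h
    · exact h
    · exfalso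
      have hzero : ∀ t : ℝ, 0 < t → f t = 0 :=
        equilibrium_propagation c (n - 1) hd f hderiv 0 (by ring) ξ hξ h.symm
      obtain ⟨t, ht0, htne⟩ := hne
      rcases lt_or_eq_of_le ht0 with h' | h'
      · exact htne (hzero t h')
      · exact htne (h' ▸ hf0)
  -- f < M on (0,∞)
  have hlt : ∀ ξ : ℝ, 0 < ξ → f ξ < M := by
    by_contra hcon
    push_neg at hcon
    obtain ⟨ξ₀, hξ₀, hMle⟩ := hcon
    -- IVT : there is ξ₁ ∈ (0, ξ₀] with f ξ₁ = M
    have hIVT : ∃ ξ₁ ∈ Icc (0:ℝ) ξ₀, f ξ₁ = M := by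
      have hcont' : ContinuousOn f (Icc 0 ξ₀) :=
        hcont.mono (fun x hx => hx.1)
      have : M ∈ Icc (f 0) (f ξ₀) := by
        rw [hf0]; exact ⟨le_of_lt hMpos, hMle⟩
      obtain ⟨ξ₁, h₁, h₂⟩ := intermediate_value_Icc (le_of_lt hξ₀) hcont' this
      exact ⟨ξ₁, h₁, h₂⟩
    obtain ⟨ξ₁, hξ₁mem, hfξ₁⟩ := hIVT
    have hξ₁pos : 0 < ξ₁ := by
      rcases lt_or_eq_of_le hξ₁mem.1 with h | h
      · exact h
      · exfalso; rw [← h, hf0] at hfξ₁; linarith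
    have hMeq : ∀ t : ℝ, 0 < t → f t = M := by
      apply equilibrium_propagation c (n - 1) hd f hderiv M _ ξ₁ hξ₁pos hfξ₁
      rw [hcM]; ring
    -- contradiction with continuity at 0
    have hlim : Filter.Tendsto f (nhdsWithin 0 (Ioi 0)) (nhds 0) := by
      have := (hcont 0 (mem_Ici.mpr le_rfl)).tendsto
      rw [hf0] at this
      exact this.mono_left (nhdsWithin_mono 0 Ioi_subset_Ici_self)
    have hlim2 : Filter.Tendsto f (nhdsWithin 0 (Ioi 0)) (nhds M) := by
      have : ∀ᶠ t in nhdsWithin 0 (Ioi 0), f t = M :=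
        eventually_nhdsWithin_of_forall (fun t ht => hMeq t ht)
      exact Filter.Tendsto.congr' (Filter.EventuallyEq.symm this) tendsto_const_nhds
    have : (0 : ℝ) = M := tendsto_nhds_unique hlim hlim2
    linarith
  -- the constancy argument
  set a : ℝ := 1 / (n - 1) with ha_def
  have hapos : 0 < a := by positivity
  set g : ℝ → ℝ := fun ξ => Real.log (f ξ) - Real.log (M - f ξ) - a * Real.log ξ with hg_def
  have hgderiv : ∀ ξ : ℝ, 0 < ξ → HasDerivAt g 0 ξ := by
    intro ξ hξ
    have hfp := hpos ξ hξ
    have hMfp : 0 < M - f ξ := by linarith [hlt ξ hξ]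
    set f' : ℝ := f ξ * (1 - c * f ξ) / ((n - 1) * ξ) with hf'_def
    have h1 : HasDerivAt (fun t => Real.log (f t)) (f' / f ξ) ξ :=
      (hderiv ξ hξ).log (ne_of_gt hfp)
    have h2 : HasDerivAt (fun t => M - f t) (-f') ξ := by
      have h := (hasDerivAt_const ξ M).sub (hderiv ξ hξ); rw [zero_sub] at h; exact h
    have h3 : HasDerivAt (fun t => Real.log (M - f t)) (-f' / (M - f ξ)) ξ :=
      h2.log (ne_of_gt hMfp)
    have h4 : HasDerivAt (fun t => a * Real.log t) (a * ξ⁻¹) ξ :=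
      (Real.hasDerivAt_log (ne_of_gt hξ)).const_mul a
    have h5 : HasDerivAt g (f' / f ξ - (-f' / (M - f ξ)) - a * ξ⁻¹) ξ :=
      (h1.sub h3).sub h4
    convert h5 using 1
    have hfM : 1 - c * f ξ = c * (M - f ξ) := by
      have h := hcM
      nlinarith
    have hc_eq : c = 1 / M := by
      rw [eq_div_iff (ne_of_gt hMpos)]
      exact hcM
    have e1 : f' = f ξ * (M - f ξ) / (M * ((n - 1) * ξ)) := by
      rw [hf'_def, hfM, hc_eq]
      field_simp
    rw [e1, ha_def]
    have h6 : f ξ ≠ 0 := ne_of_gt hfp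
    have h7 : M - f ξ ≠ 0 := ne_of_gt hMfp
    have h8 : M ≠ 0 := ne_of_gt hMpos
    have h9 : (n : ℝ) - 1 ≠ 0 := ne_of_gt hd
    have h10 : ξ ≠ 0 := ne_of_gt hξ
    field_simp
    ring
  -- g is constant on Ioi 0
  have hgconst : ∀ ξ : ℝ, 0 < ξ → g ξ = g 1 := by
    intro ξ hξ
    apply Convex.is_const_of_fderivWithin_eq_zero (𝕜 := ℝ) (convex_Ioi (0:ℝ))
    · intro x hx
      exact ((hgderiv x hx).differentiableAt).differentiableWithinAt
    · intro x hx
      rw [fderivWithin_of_isOpen isOpen_Ioi hx]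
      have := (hgderiv x hx).hasFDerivAt.fderiv
      rw [this]
      ext y
      simp
    · exact hξ
    · exact mem_Ioi.mpr one_pos
  set c₀ : ℝ := g 1 with hc₀_def
  set E : ℝ := Real.exp c₀ with hE_def
  have hEpos : 0 < E := Real.exp_pos _
  -- key identity : f ξ / (M - f ξ) = E * ξ ^ a for ξ > 0
  have hkey : ∀ ξ : ℝ, 0 < ξ → f ξ / (M - f ξ) = E * ξ ^ a := by
    intro ξ hξ
    have hfp := hpos ξ hξ
    have hMfp : 0 < M - f ξ := by linarith [hlt ξ hξ]
    have h := hgconst ξ hξ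
    rw [hg_def] at h
    simp only at h
    have h2 : Real.log (f ξ) - Real.log (M - f ξ) = c₀ + a * Real.log ξ := by
      rw [hc₀_def]; linarith
    have h3 : Real.exp (Real.log (f ξ) - Real.log (M - f ξ)) = f ξ / (M - f ξ) := by
      rw [Real.exp_sub, Real.exp_log hfp, Real.exp_log hMfp]
    have h4 : Real.exp (c₀ + a * Real.log ξ) = E * ξ ^ a := by
      rw [Real.exp_add, hE_def]
      congr 1
      rw [Real.rpow_def_of_pos hξ]
      ring_nf
    rw [← h3, h2, h4]
  -- choose lam
  set lam : ℝ := Real.exp (c₀ * (n - 1) / n) with hlam_def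
  have hlampos : 0 < lam := Real.exp_pos _
  have hlamN : (lam : ℝ) ^ N = Real.exp (c₀ * (n - 1)) := by
    rw [hlam_def, ← Real.exp_nat_mul]
    congr 1
    rw [hn_def]
    field_simp
  have hlampow : ∀ ξ : ℝ, 0 < ξ → (lam ^ N * ξ) ^ a = E * ξ ^ a := by
    intro ξ hξ
    rw [Real.mul_rpow (by positivity) (le_of_lt hξ), hlamN, ← Real.exp_mul, hE_def]
    congr 2
    rw [ha_def]
    field_simp
  refine ⟨lam, hlampos, ?_, fun ξ hξ => ⟨hpos ξ hξ, hlt ξ hξ⟩⟩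
  intro ξ hξ
  rcases lt_or_eq_of_le hξ with hξp | hξz
  · have hu := hkey ξ hξp
    have hfp := hpos ξ hξp
    have hMfp : 0 < M - f ξ := by linarith [hlt ξ hξp]
    set u : ℝ := (lam ^ N * ξ) ^ ((1:ℝ) / (n - 1)) with hu_def
    have hu_eq : u = E * ξ ^ a := by rw [hu_def, ha_def]; exact hlampow ξ hξp
    have hupos : 0 < u := by rw [hu_eq]; positivity
    have hfu : f ξ / (M - f ξ) = u := by rw [hu_eq]; exact hu
    have h1u : 0 < 1 + u := by linarith
    have : f ξ = u * (M - f ξ) := by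
      field_simp at hfu
      linarith [hfu]
    have hsolve : f ξ = M * u / (1 + u) := by
      rw [eq_div_iff (ne_of_gt h1u)]
      nlinarith [this]
    rw [hM_def] at hsolve
    rw [hsolve, hu_def]
  · rw [← hξz]
    rw [mul_zero, Real.zero_rpow (by positivity : (1:ℝ)/(n-1) ≠ 0)]
    simp [hf0]
end

section
/- Let N ≥ 2 be an integer, A := (N²/(N−1))^{N−1}, and ℓ > 0. Suppose φ : [0,1] → ℝ is nonnegative, continuous on [0,1], twice continuously differentiable on (0,1], satisfies N ξ φ″(ξ) + φ(ξ)^{1/(N−1)} φ′(ξ) = 0 for all ξ ∈ (0,1), φ(0) = 0 and φ(1) = ℓ. Then ℓ < A, and there exists a unique λ > 0 with W_λ(1) = ℓ, and φ(ξ) = W_λ(ξ) for all ξ ∈ [0,1]. -/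
open Set

/-- The stationary profile `W_λ(ξ) = A λ^N ξ (1+(λ^N ξ)^{1/(N−1)})^{1−N}`,
where `A = (N²/(N−1))^(N−1)`. -/
noncomputable def Wprof (N : ℕ) (lam ξ : ℝ) : ℝ :=
  ((N : ℝ) ^ 2 / ((N : ℝ) - 1)) ^ (N - 1) * lam ^ N * ξ *
    (1 + (lam ^ N * ξ) ^ ((1 : ℝ) / ((N : ℝ) - 1))) ^ ((1 : ℝ) - N)

/-- Two points in an open interval where a function has zero derivative have equal values. -/
lemma aux_const_Ioo {f : ℝ → ℝ} {a b x y : ℝ} (hf : ∀ z ∈ Ioo a b, HasDerivAt f 0 z)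
    (hx : x ∈ Ioo a b) (hy : y ∈ Ioo a b) (hxy : x ≤ y) : f y = f x := by
  have hsub : Icc x y ⊆ Ioo a b := fun z hz =>
    ⟨lt_of_lt_of_le hx.1 hz.1, lt_of_le_of_lt hz.2 hy.2⟩
  have hcont : ContinuousOn f (Icc x y) := fun z hz =>
    ((hf z (hsub hz)).continuousAt).continuousWithinAt
  exact constant_of_has_deriv_right_zero hcont
    (fun z hz => (hf z (hsub ⟨hz.1, hz.2.le⟩)).hasDerivWithinAt) y ⟨hxy, le_rfl⟩

/-- The constant of the first integral must vanish (log blow-up at 0 otherwise). -/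
lemma aux_k_zero (N : ℕ) (hN : 2 ≤ N) (φ : ℝ → ℝ) (k : ℝ)
    (hnonneg : ∀ ξ ∈ Icc (0:ℝ) 1, 0 ≤ φ ξ)
    (hcont : ContinuousOn φ (Icc 0 1))
    (hd1 : ∀ ξ ∈ Ioo (0:ℝ) 1, HasDerivAt φ (deriv φ ξ) ξ)
    (hφ0 : φ 0 = 0)
    (hE : ∀ ξ ∈ Ioo (0:ℝ) 1, (N:ℝ) * ξ * deriv φ ξ - ((N:ℝ) * φ ξ
      - (((N:ℝ)-1)/(N:ℝ)) * (φ ξ) ^ ((N:ℝ)/((N:ℝ)-1))) = k) :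
    k = 0 := by
  have hn2 : (2:ℝ) ≤ (N:ℝ) := by exact_mod_cast hN
  obtain ⟨n, hn⟩ : ∃ n : ℝ, n = (N:ℝ) := ⟨_, rfl⟩
  rw [← hn] at hn2 hE
  have hn1 : (0:ℝ) < n - 1 := by linarith
  have hnpos : (0:ℝ) < n := by linarith
  have hn0 : n ≠ 0 := ne_of_gt hnpos
  obtain ⟨p, hp⟩ : ∃ p : ℝ, p = n/(n-1) := ⟨_, rfl⟩
  rw [← hp] at hE
  have hppos : 0 < p := hp ▸ div_pos hnpos hn1
  obtain ⟨g, hgeq⟩ : ∃ g : ℝ → ℝ, ∀ x, g x = n * φ x - ((n-1)/n) * (φ x) ^ p :=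
    ⟨_, fun _ => rfl⟩
  have hgc : ContinuousOn g (Icc 0 1) := by
    have : ContinuousOn (fun x => n * φ x - ((n-1)/n) * (φ x) ^ p) (Icc 0 1) :=
      ContinuousOn.sub (continuousOn_const.mul hcont)
        (continuousOn_const.mul (hcont.rpow_const fun x _ => Or.inr hppos.le))
    exact this.congr (fun x _ => hgeq x)
  have hg0 : g 0 = 0 := by
    rw [hgeq, hφ0, Real.zero_rpow (ne_of_gt hppos)]; ring
  by_contra hk
  have hck : ContinuousWithinAt g (Icc 0 1) 0 :=
    hgc.continuousWithinAt (by constructor <;> norm_num)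
  rw [Metric.continuousWithinAt_iff] at hck
  obtain ⟨δ₀, hδ₀, hδball⟩ := hck (|k|/2) (by positivity)
  obtain ⟨δ, hδdef⟩ : ∃ δ : ℝ, δ = min (δ₀/2) (1/2) := ⟨_, rfl⟩
  have hδpos : 0 < δ := by rw [hδdef]; positivity
  have hδhalf : δ ≤ 1/2 := hδdef ▸ min_le_right _ _
  have hsmall : ∀ x ∈ Ioc (0:ℝ) δ, |g x| < |k|/2 := by
    intro x hx
    have hx1 : x ∈ Icc (0:ℝ) 1 := ⟨hx.1.le, hx.2.trans (by linarith)⟩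
    have := hδball hx1 (by
      rw [Real.dist_eq, sub_zero, abs_of_pos hx.1]
      calc x ≤ δ := hx.2
        _ ≤ δ₀/2 := hδdef ▸ min_le_left _ _
        _ < δ₀ := by linarith)
    rwa [hg0, Real.dist_eq, sub_zero] at this
  have hIoo : Ioo (0:ℝ) δ ⊆ Ioo (0:ℝ) 1 := Ioo_subset_Ioo le_rfl (by linarith)
  have hlogcont : ContinuousOn (fun x : ℝ => (k/(2*n)) * Real.log x) (Ioc 0 δ) :=
    continuousOn_const.mul (Real.continuousOn_log.mono (fun x hx => ne_of_gt hx.1))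
  have hφcont : ContinuousOn φ (Ioc 0 δ) :=
    hcont.mono (fun x hx => ⟨hx.1.le, hx.2.trans (by linarith)⟩)
  obtain ⟨G, hGeq⟩ : ∃ G : ℝ → ℝ, ∀ x, G x = φ x - (k/(2*n)) * Real.log x :=
    ⟨_, fun _ => rfl⟩
  have hGcont : ContinuousOn G (Ioc 0 δ) :=
    (hφcont.sub hlogcont).congr (fun x _ => hGeq x)
  have hGd : ∀ x ∈ Ioo (0:ℝ) δ, HasDerivAt G (deriv φ x - (k/(2*n)) * x⁻¹) x := by
    intro x hx
    have : HasDerivAt (fun y => φ y - (k/(2*n)) * Real.log y)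
        (deriv φ x - (k/(2*n)) * x⁻¹) x :=
      (hd1 x (hIoo hx)).sub ((Real.hasDerivAt_log (ne_of_gt hx.1)).const_mul (k/(2*n)))
    exact this.congr_of_eventuallyEq (Filter.Eventually.of_forall (fun y => hGeq y))
  have key : ∀ x ∈ Ioo (0:ℝ) δ, n * x * deriv φ x - g x = k := by
    intro x hx
    have := hE x (hIoo hx)
    rw [hgeq]; linarith
  rcases lt_or_gt_of_ne hk with hkneg | hkpos
  · -- k < 0 : φ blows up near 0
    obtain ⟨z, hz, hzmax⟩ := isCompact_Icc.exists_isMaxOn (Set.nonempty_Icc.2 zero_le_one)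
      hcont
    obtain ⟨M, hM⟩ : ∃ M : ℝ, M = φ z := ⟨_, rfl⟩
    have hMle : ∀ x ∈ Icc (0:ℝ) 1, φ x ≤ M := fun x hx => hM ▸ hzmax hx
    have hkn : k / (2*n) < 0 := div_neg_of_neg_of_pos hkneg (by positivity)
    have hGanti : AntitoneOn G (Ioc 0 δ) := by
      apply antitoneOn_of_deriv_nonpos (convex_Ioc 0 δ) hGcont
      · intro x hx
        rw [interior_Ioc] at hx
        exact (hGd x hx).differentiableAt.differentiableWithinAt
      · intro x hx
        rw [interior_Ioc] at hx
        rw [(hGd x hx).deriv]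
        have hEx := key x hx
        have hgx : |g x| < |k|/2 := hsmall x ⟨hx.1, hx.2.le⟩
        have h1 : g x ≤ |g x| := le_abs_self _
        have hkabs : |k| = -k := abs_of_neg hkneg
        have hlt : n * x * deriv φ x < k/2 := by linarith
        have hnx : 0 < n * x := mul_pos hnpos hx.1
        have hx0 : x ≠ 0 := ne_of_gt hx.1
        have hder : deriv φ x < k/2 / (n*x) := by
          rw [lt_div_iff₀ hnx]; linarith [hlt]
        have heq : k/2/(n*x) = k/(2*n) * x⁻¹ := by
          field_simp
        linarith [heq ▸ hder]
    obtain ⟨X, hX⟩ : ∃ X : ℝ, X = (2*n/k) * (M + 1 - G δ) := ⟨_, rfl⟩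
    obtain ⟨a, ha⟩ : ∃ a : ℝ, a = min (δ/2) (Real.exp X) := ⟨_, rfl⟩
    have hapos : 0 < a := ha ▸ lt_min (by positivity) (Real.exp_pos _)
    have haδ : a ∈ Ioc (0:ℝ) δ := ⟨hapos, (ha ▸ min_le_left _ _).trans (by linarith)⟩
    have hloga : Real.log a ≤ X := by
      rw [ha]
      exact (Real.log_le_log (ha ▸ hapos) (min_le_right _ _)).trans_eq (Real.log_exp X)
    have hGa : G δ ≤ G a := hGanti haδ ⟨hδpos, le_rfl⟩ haδ.2
    have h2 : (k/(2*n)) * X = M + 1 - G δ := by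
      rw [hX]; have hk0 : k ≠ 0 := ne_of_lt hkneg; field_simp
    have h1 : (k/(2*n)) * X ≤ (k/(2*n)) * Real.log a := by nlinarith [hloga, hkn]
    have hGaeq : G a = φ a - (k/(2*n)) * Real.log a := hGeq a
    have hφa : M + 1 ≤ φ a := by linarith
    have : φ a ≤ M := hMle a ⟨hapos.le, haδ.2.trans (by linarith)⟩
    linarith
  · -- k > 0 : φ goes below 0 near 0
    have hkn : 0 < k / (2*n) := by positivity
    have hGmono : MonotoneOn G (Ioc 0 δ) := by
      apply monotoneOn_of_deriv_nonneg (convex_Ioc 0 δ) hGcont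
      · intro x hx
        rw [interior_Ioc] at hx
        exact (hGd x hx).differentiableAt.differentiableWithinAt
      · intro x hx
        rw [interior_Ioc] at hx
        rw [(hGd x hx).deriv]
        have hEx := key x hx
        have hgx : |g x| < |k|/2 := hsmall x ⟨hx.1, hx.2.le⟩
        have h1 : -|g x| ≤ g x := neg_abs_le _
        have hkabs : |k| = k := abs_of_pos hkpos
        have hlt : k/2 < n * x * deriv φ x := by linarith
        have hnx : 0 < n * x := mul_pos hnpos hx.1
        have hx0 : x ≠ 0 := ne_of_gt hx.1
        have hder : k/2 / (n*x) < deriv φ x := by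
          rw [div_lt_iff₀ hnx]; linarith [hlt]
        have heq : k/2/(n*x) = k/(2*n) * x⁻¹ := by
          field_simp
        linarith [heq ▸ hder]
    obtain ⟨X, hX⟩ : ∃ X : ℝ, X = (2*n/k) * (-1 - G δ) := ⟨_, rfl⟩
    obtain ⟨a, ha⟩ : ∃ a : ℝ, a = min (δ/2) (Real.exp X) := ⟨_, rfl⟩
    have hapos : 0 < a := ha ▸ lt_min (by positivity) (Real.exp_pos _)
    have haδ : a ∈ Ioc (0:ℝ) δ := ⟨hapos, (ha ▸ min_le_left _ _).trans (by linarith)⟩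
    have hloga : Real.log a ≤ X := by
      rw [ha]
      exact (Real.log_le_log (ha ▸ hapos) (min_le_right _ _)).trans_eq (Real.log_exp X)
    have hGa : G a ≤ G δ := hGmono haδ ⟨hδpos, le_rfl⟩ haδ.2
    have h2 : (k/(2*n)) * X = -1 - G δ := by
      rw [hX]; have hk0 : k ≠ 0 := ne_of_gt hkpos; field_simp
    have h1 : (k/(2*n)) * Real.log a ≤ (k/(2*n)) * X :=
      mul_le_mul_of_nonneg_left hloga hkn.le
    have hGaeq : G a = φ a - (k/(2*n)) * Real.log a := hGeq a
    have hφa : φ a ≤ -1 := by linarith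
    have : 0 ≤ φ a := hnonneg a ⟨hapos.le, haδ.2.trans (by linarith)⟩
    linarith

/-- The conserved quantity `B φ^{-r} x^r - x^r` of the first-order ODE has zero derivative. -/
lemma aux_cderiv (n r p q B : ℝ) (hn2 : (2:ℝ) ≤ n) (hr : r = 1/(n-1)) (hpdef : p = n/(n-1))
    (hq : q = (n-1)/n^2) (hB : B = n^2/(n-1))
    (φ : ℝ → ℝ) (ξ : ℝ) (hξ : 0 < ξ) (hφpos : 0 < φ ξ)
    (hd : HasDerivAt φ (deriv φ ξ) ξ)
    (hFO : ξ * deriv φ ξ = φ ξ - q * (φ ξ) ^ p) :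
    HasDerivAt (fun x => B * (φ x) ^ (-r) * x ^ r - x ^ r) 0 ξ := by
  have hn1 : (0:ℝ) < n - 1 := by linarith
  have hn0 : n ≠ 0 := by positivity
  have h₁ : HasDerivAt (fun x => (φ x) ^ (-r))
      ((-r) * (φ ξ) ^ (-r - 1) * deriv φ ξ) ξ :=
    (Real.hasDerivAt_rpow_const (Or.inl (ne_of_gt hφpos))).comp ξ hd
  have h₂ : HasDerivAt (fun x : ℝ => x ^ r) (r * ξ ^ (r - 1)) ξ :=
    Real.hasDerivAt_rpow_const (Or.inl (ne_of_gt hξ))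
  have hprod := ((h₁.const_mul B).mul h₂).sub h₂
  refine hprod.congr_deriv (Eq.symm ?_)
  have e1 : (φ ξ) ^ (-r - 1) * φ ξ = (φ ξ) ^ (-r) := by
    nth_rewrite 2 [← Real.rpow_one (φ ξ)]
    rw [← Real.rpow_add hφpos]; ring_nf
  have e2 : (φ ξ) ^ (-r - 1) * (φ ξ) ^ p = 1 := by
    rw [← Real.rpow_add hφpos]
    have : -r - 1 + p = 0 := by rw [hr, hpdef]; field_simp; ring
    rw [this, Real.rpow_zero]
  have e3 : ξ ^ r = ξ ^ (r - 1) * ξ := by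
    calc ξ ^ r = ξ ^ (r - 1 + 1) := by congr 1; ring
      _ = ξ ^ (r - 1) * ξ ^ (1:ℝ) := Real.rpow_add hξ _ _
      _ = ξ ^ (r - 1) * ξ := by rw [Real.rpow_one]
  have e5 : B * q = 1 := by rw [hB, hq]; field_simp
  linear_combination (r * B * (φ ξ)^(-r-1) * deriv φ ξ) * e3
    + (r * B * (φ ξ)^(-r-1) * ξ^(r-1)) * hFO
    + (r * B * ξ^(r-1)) * e1 + (-(r * B * q * ξ^(r-1))) * e2 + (-(r * ξ^(r-1))) * e5

/-- Closed form of the profile as a power of a Möbius expression. -/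
lemma wprof_eq (N : ℕ) (hN : 2 ≤ N) (lam : ℝ) (hlam : 0 < lam) (x : ℝ) (hx : 0 < x) :
    Wprof N lam x = (((N:ℝ)^2/((N:ℝ)-1)) * (lam^N*x) ^ ((1:ℝ)/((N:ℝ)-1)) /
      (1 + (lam^N*x) ^ ((1:ℝ)/((N:ℝ)-1)))) ^ ((N:ℝ)-1) := by
  have hn2 : (2:ℝ) ≤ (N:ℝ) := by exact_mod_cast hN
  have hn1 : (0:ℝ) < (N:ℝ) - 1 := by linarith
  have hsx : 0 < lam ^ N * x := by positivity
  set r : ℝ := (1:ℝ)/((N:ℝ)-1) with hr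
  set w : ℝ := (lam^N*x) ^ r with hw
  have hwpos : 0 < w := Real.rpow_pos_of_pos hsx _
  have hBpos : (0:ℝ) < (N:ℝ)^2/((N:ℝ)-1) := by positivity
  have hwp : w ^ ((N:ℝ)-1) = lam^N * x := by
    rw [hw, ← Real.rpow_mul hsx.le]
    rw [show r * ((N:ℝ)-1) = 1 by rw [hr]; field_simp]
    exact Real.rpow_one _
  have hA' : (((N:ℝ)^2/((N:ℝ)-1)) ^ (N-1 : ℕ) : ℝ)
      = ((N:ℝ)^2/((N:ℝ)-1)) ^ ((N:ℝ)-1) := by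
    rw [← Real.rpow_natCast _ (N-1)]
    congr 1
    rw [Nat.cast_sub (by omega), Nat.cast_one]
  have hexp : ((1:ℝ) - (N:ℝ)) = -((N:ℝ)-1) := by ring
  rw [Wprof, hexp, Real.rpow_neg (by positivity)]
  rw [Real.div_rpow (by positivity) (by positivity), Real.mul_rpow hBpos.le hwpos.le, hwp, hA']
  have h1w : (0:ℝ) < (1 + w) ^ ((N:ℝ)-1) := Real.rpow_pos_of_pos (by linarith) _
  field_simp
  ring

set_option maxHeartbeats 1000000 in
/-- **Classification of solutions of the Dirichlet problem.**
If `φ` is nonnegative, continuous on `[0,1]`, `C²` on `(0,1]`, solves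
`N ξ φ″ + φ^{1/(N−1)} φ′ = 0` on `(0,1)` with `φ(0) = 0`, `φ(1) = ℓ > 0`, then
`ℓ < A := (N²/(N−1))^(N−1)`, there is a unique `λ > 0` with `W_λ(1) = ℓ`, and `φ = W_λ`
on `[0,1]`. -/
theorem dirichlet_problem_classification
    (N : ℕ) (hN : 2 ≤ N)
    (A : ℝ) (hA : A = ((N : ℝ) ^ 2 / ((N : ℝ) - 1)) ^ (N - 1))
    (ℓ : ℝ) (hℓ : 0 < ℓ)
    (φ : ℝ → ℝ)
    (hnonneg : ∀ ξ ∈ Icc (0:ℝ) 1, 0 ≤ φ ξ)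
    (hcont : ContinuousOn φ (Icc 0 1))
    (hC2 : ContDiffOn ℝ 2 φ (Ioc 0 1))
    (hODE : ∀ ξ ∈ Ioo (0:ℝ) 1,
      (N : ℝ) * ξ * deriv (deriv φ) ξ + (φ ξ) ^ ((1 : ℝ) / ((N : ℝ) - 1)) * deriv φ ξ = 0)
    (hφ0 : φ 0 = 0) (hφ1 : φ 1 = ℓ) :
    ℓ < A ∧
    ∃ lam : ℝ, 0 < lam ∧ Wprof N lam 1 = ℓ ∧
      (∀ lam' : ℝ, 0 < lam' → Wprof N lam' 1 = ℓ → lam' = lam) ∧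
      ∀ ξ ∈ Icc (0:ℝ) 1, φ ξ = Wprof N lam ξ := by
  have hn2 : (2:ℝ) ≤ (N:ℝ) := by exact_mod_cast hN
  have hn1 : (0:ℝ) < (N:ℝ) - 1 := by linarith
  have hnpos : (0:ℝ) < (N:ℝ) := by linarith
  have hn0 : (N:ℝ) ≠ 0 := ne_of_gt hnpos
  obtain ⟨r, hr⟩ : ∃ r : ℝ, r = (1:ℝ)/((N:ℝ)-1) := ⟨_, rfl⟩
  have hrpos : 0 < r := by rw [hr]; positivity
  obtain ⟨p, hp⟩ : ∃ p : ℝ, p = (N:ℝ)/((N:ℝ)-1) := ⟨_, rfl⟩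
  obtain ⟨q, hq⟩ : ∃ q : ℝ, q = ((N:ℝ)-1)/(N:ℝ)^2 := ⟨_, rfl⟩
  obtain ⟨B, hB⟩ : ∃ B : ℝ, B = (N:ℝ)^2/((N:ℝ)-1) := ⟨_, rfl⟩
  have hBpos : 0 < B := by rw [hB]; positivity
  -- derivative facts
  have h2' : ContDiffOn ℝ 2 φ (Ioo 0 1) := hC2.mono Ioo_subset_Ioc_self
  have hd1 : ∀ ξ ∈ Ioo (0:ℝ) 1, HasDerivAt φ (deriv φ ξ) ξ := by
    intro ξ hξ
    exact ((h2'.differentiableOn (by norm_num)).differentiableAt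
      (isOpen_Ioo.mem_nhds hξ)).hasDerivAt
  have hd2 : ∀ ξ ∈ Ioo (0:ℝ) 1, HasDerivAt (deriv φ) (deriv (deriv φ) ξ) ξ := by
    intro ξ hξ
    have : ContDiffOn ℝ 1 (deriv φ) (Ioo 0 1) :=
      h2'.deriv_of_isOpen isOpen_Ioo (by norm_num)
    exact ((this.differentiableOn (by norm_num)).differentiableAt
      (isOpen_Ioo.mem_nhds hξ)).hasDerivAt
  -- the first integral E and its vanishing derivative
  obtain ⟨E, hEdef⟩ : ∃ E : ℝ → ℝ, ∀ x, E x = (N:ℝ) * x * deriv φ x - (N:ℝ) * φ x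
      + (((N:ℝ)-1)/(N:ℝ)) * (φ x) ^ p := ⟨_, fun _ => rfl⟩
  have hE0 : ∀ ξ ∈ Ioo (0:ℝ) 1, HasDerivAt E 0 ξ := by
    intro ξ hξ
    have h1 := hd1 ξ hξ
    have h2 := hd2 ξ hξ
    have hp1 : (1:ℝ) ≤ p := by rw [hp, le_div_iff₀ hn1]; linarith
    have ha : HasDerivAt (fun x => (N:ℝ) * x * deriv φ x)
        (((N:ℝ) * 1) * deriv φ ξ + ((N:ℝ) * ξ) * deriv (deriv φ) ξ) ξ :=
      ((hasDerivAt_id ξ).const_mul (N:ℝ)).mul h2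
    have hb : HasDerivAt (fun x => (N:ℝ) * φ x) ((N:ℝ) * deriv φ ξ) ξ := h1.const_mul _
    have hc : HasDerivAt (fun x => (φ x) ^ p) (p * (φ ξ) ^ (p - 1) * deriv φ ξ) ξ :=
      (Real.hasDerivAt_rpow_const (Or.inr hp1)).comp ξ h1
    have hd := (ha.sub hb).add (hc.const_mul (((N:ℝ)-1)/(N:ℝ)))
    have : HasDerivAt (fun x => (N:ℝ) * x * deriv φ x - (N:ℝ) * φ x
        + (((N:ℝ)-1)/(N:ℝ)) * (φ x) ^ p) 0 ξ := by
      refine hd.congr_deriv (Eq.symm ?_)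
      have he : p - 1 = (1:ℝ)/((N:ℝ)-1) := by rw [hp]; field_simp; ring
      rw [he, hp]
      field_simp
      linear_combination (-1:ℝ) * hODE ξ hξ
    exact this.congr_of_eventuallyEq (Filter.Eventually.of_forall (fun y => hEdef y))
  -- E is constant, and the constant is 0
  have hEconst : ∀ ξ ∈ Ioo (0:ℝ) 1, E ξ = E (1/2) := by
    intro ξ hξ
    have hhalf : (1/2 : ℝ) ∈ Ioo (0:ℝ) 1 := by norm_num
    rcases le_total ξ (1/2) with h | h
    · exact (aux_const_Ioo hE0 hξ hhalf h).symm
    · exact aux_const_Ioo hE0 hhalf hξ h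
  have hk0 : E (1/2) = 0 := by
    apply aux_k_zero N hN φ (E (1/2)) hnonneg hcont hd1 hφ0
    intro ξ hξ
    have h1 := hEdef ξ
    have h2 := hEconst ξ hξ
    rw [← hp]
    linarith
  -- the first-order ODE
  have hFO : ∀ ξ ∈ Ioo (0:ℝ) 1, ξ * deriv φ ξ = φ ξ - q * (φ ξ) ^ p := by
    intro ξ hξ
    have h1 := hEdef ξ
    have h2 := hEconst ξ hξ
    rw [hk0] at h2
    have h3 : (N:ℝ) * ξ * deriv φ ξ - (N:ℝ) * φ ξ + (((N:ℝ)-1)/(N:ℝ)) * (φ ξ) ^ p = 0 := by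
      linarith
    have hqn : ((N:ℝ)-1)/(N:ℝ) = q * (N:ℝ) := by rw [hq]; field_simp
    rw [hqn] at h3
    have h4 : (N:ℝ) * (ξ * deriv φ ξ) = (N:ℝ) * (φ ξ - q * (φ ξ) ^ p) := by
      linear_combination h3
    exact mul_left_cancel₀ hn0 h4
  -- the zero set and its supremum
  obtain ⟨Z, hZdef⟩ : ∃ Z : Set ℝ, Z = Icc (0:ℝ) 1 ∩ φ ⁻¹' {0} := ⟨_, rfl⟩
  have hZc : IsClosed Z := hZdef ▸ hcont.preimage_isClosed_of_isClosed isClosed_Icc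
    isClosed_singleton
  have hZne : Z.Nonempty := ⟨0, hZdef ▸ ⟨⟨le_refl 0, zero_le_one⟩, hφ0⟩⟩
  have hZbdd : BddAbove Z := ⟨1, fun z hz => (hZdef ▸ hz :
    z ∈ Icc (0:ℝ) 1 ∩ φ ⁻¹' {0}).1.2⟩
  obtain ⟨x₁, hx₁def⟩ : ∃ x₁ : ℝ, x₁ = sSup Z := ⟨_, rfl⟩
  have hx₁Z : x₁ ∈ Z := hx₁def ▸ hZc.csSup_mem hZne hZbdd
  have hx₁mem : x₁ ∈ Icc (0:ℝ) 1 := (hZdef ▸ hx₁Z).1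
  have hφx₁ : φ x₁ = 0 := (hZdef ▸ hx₁Z).2
  have hx₁lt1 : x₁ < 1 := by
    rcases lt_or_eq_of_le hx₁mem.2 with h | h
    · exact h
    · exfalso; rw [h] at hφx₁; rw [hφx₁] at hφ1; linarith
  have hpos : ∀ x ∈ Ioc x₁ 1, 0 < φ x := by
    intro x hx
    have hxI : x ∈ Icc (0:ℝ) 1 := ⟨le_of_lt (lt_of_le_of_lt hx₁mem.1 hx.1), hx.2⟩
    rcases lt_or_eq_of_le (hnonneg x hxI) with h | h
    · exact h
    · exfalso
      have : x ∈ Z := hZdef ▸ ⟨hxI, h.symm⟩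
      have : x ≤ x₁ := hx₁def ▸ le_csSup hZbdd this
      linarith [hx.1]
  -- a continuity helper: points just above a zero of φ have small φ
  have reach : ∀ y, y ∈ Ico (0:ℝ) 1 → φ y = 0 → ∀ ε, 0 < ε → ∃ x, x ∈ Ioo y 1 ∧ φ x < ε := by
    intro y hy hφy ε hε
    have hcy : ContinuousWithinAt φ (Icc 0 1) y := hcont.continuousWithinAt ⟨hy.1, hy.2.le⟩
    rw [Metric.continuousWithinAt_iff] at hcy
    obtain ⟨δ, hδ, hball⟩ := hcy ε hε
    obtain ⟨x, hxdef⟩ : ∃ x : ℝ, x = min (y + δ/2) ((y+1)/2) := ⟨_, rfl⟩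
    have hxy : y < x := hxdef ▸ lt_min (by linarith) (by linarith [hy.2])
    have hx1 : x < 1 := lt_of_le_of_lt (hxdef ▸ min_le_right _ _) (by linarith [hy.2])
    have hxI : x ∈ Icc (0:ℝ) 1 := ⟨le_of_lt (lt_of_le_of_lt hy.1 hxy), hx1.le⟩
    have hdist : dist x y < δ := by
      rw [Real.dist_eq, abs_of_pos (by linarith : 0 < x - y)]
      have : x ≤ y + δ/2 := hxdef ▸ min_le_left _ _
      linarith
    have := hball hxI hdist
    rw [hφy, Real.dist_eq, sub_zero] at this
    exact ⟨x, ⟨hxy, hx1⟩, lt_of_le_of_lt (le_abs_self _) this⟩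
  -- the conserved quantity c
  obtain ⟨c, hcdef⟩ : ∃ c : ℝ → ℝ, ∀ x, c x = B * (φ x) ^ (-r) * x ^ r - x ^ r :=
    ⟨_, fun _ => rfl⟩
  have hc0 : ∀ x ∈ Ioo x₁ 1, HasDerivAt c 0 x := by
    intro x hx
    have hxpos : 0 < x := lt_of_le_of_lt hx₁mem.1 hx.1
    have hx01 : x ∈ Ioo (0:ℝ) 1 := ⟨hxpos, hx.2⟩
    have := aux_cderiv (N:ℝ) r p q B hn2 hr hp hq hB φ x hxpos
      (hpos x ⟨hx.1, hx.2.le⟩) (hd1 x hx01) (hFO x hx01)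
    exact this.congr_of_eventuallyEq (Filter.Eventually.of_forall (fun y => hcdef y))
  have hccont : ∀ x ∈ Ioc x₁ 1, ContinuousOn c (Icc x 1) := by
    intro x hx
    have hsub : Icc x 1 ⊆ Ioc x₁ 1 := fun z hz => ⟨lt_of_lt_of_le hx.1 hz.1, hz.2⟩
    have hsub' : Icc x 1 ⊆ Icc (0:ℝ) 1 := fun z hz =>
      ⟨le_trans (le_of_lt (lt_of_le_of_lt hx₁mem.1 hx.1)) hz.1, hz.2⟩
    have h1 : ContinuousOn (fun z => B * (φ z) ^ (-r) * z ^ r - z ^ r) (Icc x 1) := by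
      apply ContinuousOn.sub
      · exact (continuousOn_const.mul ((hcont.mono hsub').rpow_const
          (fun z hz => Or.inl (ne_of_gt (hpos z (hsub hz)))))).mul
          (continuousOn_id.rpow_const (fun z hz =>
            Or.inl (ne_of_gt (lt_of_lt_of_le (lt_of_le_of_lt hx₁mem.1 hx.1) hz.1))))
      · exact continuousOn_id.rpow_const (fun z hz =>
          Or.inl (ne_of_gt (lt_of_lt_of_le (lt_of_le_of_lt hx₁mem.1 hx.1) hz.1)))
    exact h1.congr (fun z _ => hcdef z)
  have hconst : ∀ x ∈ Ioc x₁ 1, c x = c 1 := by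
    intro x hx
    rcases eq_or_lt_of_le hx.2 with h | h
    · rw [h]
    · have := constant_of_has_deriv_right_zero (hccont x hx)
        (fun z hz => (hc0 z ⟨lt_of_lt_of_le hx.1 hz.1, hz.2⟩).hasDerivWithinAt)
        1 ⟨hx.2, le_rfl⟩
      exact this.symm
  obtain ⟨c₀, hc₀def⟩ : ∃ c₀ : ℝ, c₀ = c 1 := ⟨_, rfl⟩
  have hc₀eq : c₀ = B * ℓ ^ (-r) - 1 := by
    rw [hc₀def, hcdef, hφ1, Real.one_rpow, mul_one]
  have hc₀1 : 0 < c₀ + 1 := by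
    rw [hc₀eq]
    have : 0 < B * ℓ ^ (-r) := mul_pos hBpos (Real.rpow_pos_of_pos hℓ _)
    linarith
  -- basic formula: for x ∈ (x₁, 1], φ x = (B x^r / (c₀ + x^r))^(N-1)
  have hform : ∀ x ∈ Ioc x₁ 1, 0 < c₀ + x ^ r ∧
      φ x = (B * x ^ r / (c₀ + x ^ r)) ^ ((N:ℝ)-1) := by
    intro x hx
    have hxpos : 0 < x := lt_of_le_of_lt hx₁mem.1 hx.1
    have hφx : 0 < φ x := hpos x hx
    have hxr : 0 < x ^ r := Real.rpow_pos_of_pos hxpos _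
    have hcx := hconst x hx
    rw [hcdef, ← hc₀def] at hcx
    have heq : B * (φ x) ^ (-r) * x ^ r = c₀ + x ^ r := by linarith
    have hφr : 0 < (φ x) ^ (-r) := Real.rpow_pos_of_pos hφx _
    have hden : 0 < c₀ + x ^ r := by
      rw [← heq]; positivity
    refine ⟨hden, ?_⟩
    have hneg : (φ x) ^ (-r) = ((φ x) ^ r)⁻¹ := Real.rpow_neg hφx.le r
    have hφxr : 0 < (φ x) ^ r := Real.rpow_pos_of_pos hφx _
    have hval : (φ x) ^ r = B * x ^ r / (c₀ + x ^ r) := by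
      rw [hneg] at heq
      field_simp at heq ⊢
      nlinarith [heq, hφxr]
    have : ((φ x) ^ r) ^ ((N:ℝ)-1) = φ x := by
      rw [← Real.rpow_mul hφx.le]
      rw [show r * ((N:ℝ)-1) = 1 by rw [hr]; field_simp]
      exact Real.rpow_one _
    rw [← this, hval]
  -- x₁ = 0
  have hx₁0 : x₁ = 0 := by
    by_contra hne
    have hx₁pos : 0 < x₁ := lt_of_le_of_ne hx₁mem.1 (Ne.symm hne)
    have hx₁r : 0 < x₁ ^ r := Real.rpow_pos_of_pos hx₁pos _
    obtain ⟨ε, hεdef⟩ : ∃ ε : ℝ, ε = (B * x₁ ^ r / (c₀ + 1)) ^ ((N:ℝ)-1) := ⟨_, rfl⟩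
    have hεpos : 0 < ε := hεdef ▸ Real.rpow_pos_of_pos (by positivity) _
    obtain ⟨x, hx, hφx⟩ := reach x₁ ⟨hx₁mem.1, hx₁lt1⟩ hφx₁ ε hεpos
    obtain ⟨hden, hfx⟩ := hform x ⟨hx.1, hx.2.le⟩
    have hxpos : 0 < x := lt_trans hx₁pos hx.1
    have hxr1 : x ^ r ≤ 1 := Real.rpow_le_one hxpos.le hx.2.le hrpos.le
    have hxrx₁ : x₁ ^ r ≤ x ^ r := Real.rpow_le_rpow hx₁pos.le hx.1.le hrpos.le
    have hbase : B * x₁ ^ r / (c₀ + 1) ≤ B * x ^ r / (c₀ + x ^ r) := by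
      apply div_le_div₀ (by positivity) (mul_le_mul_of_nonneg_left hxrx₁ hBpos.le) hden (by linarith)
    have : ε ≤ φ x := by
      rw [hεdef, hfx]
      exact Real.rpow_le_rpow (by positivity) hbase (by linarith)
    linarith
  -- c₀ > 0
  have hc₀pos : 0 < c₀ := by
    by_contra hle
    push_neg at hle
    obtain ⟨ε, hεdef⟩ : ∃ ε : ℝ, ε = B ^ ((N:ℝ)-1) := ⟨_, rfl⟩
    have hεpos : 0 < ε := hεdef ▸ Real.rpow_pos_of_pos hBpos _
    obtain ⟨x, hx, hφx⟩ := reach 0 ⟨le_rfl, zero_lt_one⟩ hφ0 ε hεpos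
    obtain ⟨hden, hfx⟩ := hform x (hx₁0 ▸ ⟨hx.1, hx.2.le⟩)
    have hxr : 0 < x ^ r := Real.rpow_pos_of_pos hx.1 _
    have hbase : B ≤ B * x ^ r / (c₀ + x ^ r) := by
      rw [le_div_iff₀ hden]
      nlinarith [hBpos, hxr]
    have : ε ≤ φ x := by
      rw [hεdef, hfx]
      exact Real.rpow_le_rpow hBpos.le hbase (by linarith)
    linarith
  -- the ℓ-formula
  have hℓform : ℓ = (B / (c₀ + 1)) ^ ((N:ℝ)-1) := by
    have := (hform 1 ⟨hx₁lt1, le_rfl⟩).2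
    rw [hφ1, Real.one_rpow, mul_one] at this
    exact this
  -- A as an rpow
  have hArpow : A = B ^ ((N:ℝ)-1) := by
    rw [hA, hB, ← Real.rpow_natCast _ (N-1)]
    congr 1
    rw [Nat.cast_sub (by omega), Nat.cast_one]
  -- ℓ < A
  have hℓA : ℓ < A := by
    rw [hℓform, hArpow]
    apply Real.rpow_lt_rpow (by positivity) _ hn1
    exact div_lt_self hBpos (by linarith)
  -- definition of lam
  obtain ⟨lam, hlamdef⟩ : ∃ lam : ℝ, lam = c₀ ^ (-(((N:ℝ)-1))/(N:ℝ)) := ⟨_, rfl⟩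
  have hlampos : 0 < lam := hlamdef ▸ Real.rpow_pos_of_pos hc₀pos _
  have hlamN : lam ^ N = c₀ ^ (-(((N:ℝ)-1))) := by
    rw [hlamdef, ← Real.rpow_natCast (c₀ ^ (-(((N:ℝ)-1))/(N:ℝ))) N,
      ← Real.rpow_mul hc₀pos.le]
    congr 1
    field_simp
  have hlamNpos : 0 < lam ^ N := pow_pos hlampos N
  -- Wprof N lam x agrees with the formula
  have hWform : ∀ x, 0 < x → Wprof N lam x
      = (B * x ^ r / (c₀ + x ^ r)) ^ ((N:ℝ)-1) := by
    intro x hx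
    rw [wprof_eq N hN lam hlampos x hx, ← hB, ← hr]
    congr 1
    have hxr : 0 < x ^ r := Real.rpow_pos_of_pos hx _
    have h1 : (lam ^ N * x) ^ r = c₀⁻¹ * x ^ r := by
      rw [Real.mul_rpow hlamNpos.le hx.le, hlamN, ← Real.rpow_mul hc₀pos.le]
      rw [show -(((N:ℝ)-1)) * r = -1 by rw [hr]; field_simp]
      rw [Real.rpow_neg_one]
    rw [h1]
    have hc₀ne : c₀ ≠ 0 := ne_of_gt hc₀pos
    have hd1' : 0 < 1 + c₀⁻¹ * x ^ r := by positivity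
    have hd2' : 0 < c₀ + x ^ r := by positivity
    rw [div_eq_div_iff (ne_of_gt hd1') (ne_of_gt hd2')]
    field_simp
  -- value at 1
  have hW1 : Wprof N lam 1 = ℓ := by
    rw [hWform 1 zero_lt_one, Real.one_rpow, mul_one, ← hℓform]
  -- uniqueness
  have huniq : ∀ lam' : ℝ, 0 < lam' → Wprof N lam' 1 = ℓ → lam' = lam := by
    intro lam' hlam' hW'
    have hW'' := wprof_eq N hN lam' hlam' 1 zero_lt_one
    have hWc := wprof_eq N hN lam hlampos 1 zero_lt_one
    rw [hW'] at hW''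
    rw [hW1] at hWc
    rw [← hB, ← hr] at hW'' hWc
    obtain ⟨u', hu'⟩ : ∃ u' : ℝ, u' = (lam'^N * 1) ^ r := ⟨_, rfl⟩
    obtain ⟨u, hu⟩ : ∃ u : ℝ, u = (lam^N * 1) ^ r := ⟨_, rfl⟩
    have hu'pos : 0 < u' := hu' ▸ Real.rpow_pos_of_pos (by positivity) _
    have hupos : 0 < u := hu ▸ Real.rpow_pos_of_pos (by positivity) _
    rw [← hu'] at hW''
    rw [← hu] at hWc
    have hbases : B * u' / (1 + u') = B * u / (1 + u) := by
      by_contra hne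
      rcases lt_or_gt_of_ne hne with h | h
      · have := Real.rpow_lt_rpow (by positivity) h hn1
        rw [← hW'', ← hWc] at this
        exact lt_irrefl _ this
      · have := Real.rpow_lt_rpow (by positivity) h hn1
        rw [← hW'', ← hWc] at this
        exact lt_irrefl _ this
    have huu : u' = u := by
      rw [div_eq_div_iff (by positivity) (by positivity)] at hbases
      nlinarith [hbases, hBpos]
    have hNN : lam' ^ N = lam ^ N := by
      have e1 : (u') ^ ((N:ℝ)-1) = lam' ^ N := by
        rw [hu', mul_one, ← Real.rpow_mul (by positivity)]
        rw [show r * ((N:ℝ)-1) = 1 by rw [hr]; field_simp]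
        exact Real.rpow_one _
      have e2 : (u) ^ ((N:ℝ)-1) = lam ^ N := by
        rw [hu, mul_one, ← Real.rpow_mul (by positivity)]
        rw [show r * ((N:ℝ)-1) = 1 by rw [hr]; field_simp]
        exact Real.rpow_one _
      rw [← e1, ← e2, huu]
    exact (pow_left_strictMonoOn₀ (by omega : N ≠ 0)).injOn
      (by exact hlam'.le) (by exact hlampos.le) hNN
  -- the identification on [0,1]
  refine ⟨hℓA, lam, hlampos, hW1, huniq, ?_⟩
  intro ξ hξ
  rcases eq_or_lt_of_le hξ.1 with h | h
  · rw [← h, hφ0, Wprof]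
    simp
  · rw [hWform ξ h, ← (hform ξ (hx₁0 ▸ ⟨h, hξ.2⟩)).2]
end
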